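/- arXiv:1404.3514 — 7 statements merged into one kernel-verified Lean document; each statement's English description precedes it below -/
import Mathlib

section
/- Let h be a positive continuous function on (0,∞) with ∫₀^∞ h(σ)dσ = 1 and let w_h(n) = ∫₀^∞ n^{-2σ} h(σ) dσ for each integer n ≥ 1. Let c₀ be a nonnegative integer and let φ(s) = ∑_{n≥1} c_n n^{-s} be a Dirichlet series converging uniformly on ℂ_ε for every ε > 0, and set Φ(s) = c₀ s + φ(s); assume Φ(ℂ_{1/2}) ⊆ ℂ_{1/2}. Suppose the composition operator is a contraction on Dirichlet polynomials in the A_μ² norm: for every finitely supported sequence (a_n)_{n≥1} of complex numbers there is a sequence (b_m)_{m≥1} such that ∑_{m≥1} b_m m^{-s} converges on ℂ_{1/2}, equals ∑_{n≥1} a_n n^{-Φ(s)} for all s ∈ ℂ_{1/2}, and ∑_{m≥1} |b_m|² w_h(m) ≤ ∑_{n≥1} |a_n|² w_h(n). Then c₀ ≥ 1. -/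
open MeasureTheory Filter

set_option maxHeartbeats 2000000 in
/-- If the composition operator `C_Φ` is a contraction on the weighted Bergman space
`A_μ²` of Dirichlet series (`dμ = h dσ`), then `c₀ ≥ 1`. -/
theorem contraction_implies_c0_ge_one
    (h : ℝ → ℝ)
    (hh_pos : ∀ σ ∈ Set.Ioi (0:ℝ), 0 < h σ)
    (hh_cont : ContinuousOn h (Set.Ioi 0))
    (hh_int : ∫ σ in Set.Ioi (0:ℝ), h σ = 1)
    (w : ℕ → ℝ)
    (hw : ∀ n : ℕ, w n = ∫ σ in Set.Ioi (0:ℝ), ((n:ℝ)+1) ^ (-(2:ℝ)*σ) * h σ)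
    (c₀ : ℕ) (c : ℕ → ℂ) (φ Φ : ℂ → ℂ)
    (hφ : ∀ ε > (0:ℝ), TendstoUniformlyOn
      (fun N s => ∑ n ∈ Finset.range N, c n * ((n:ℂ)+1) ^ (-s)) φ atTop
      {s : ℂ | ε < s.re})
    (hΦ : ∀ s : ℂ, Φ s = (c₀ : ℂ) * s + φ s)
    (hmap : ∀ s : ℂ, 1/2 < s.re → 1/2 < (Φ s).re)
    (hcontr : ∀ a : ℕ →₀ ℂ, ∃ b : ℕ → ℂ,
      (∀ s : ℂ, 1/2 < s.re →
        Tendsto (fun N => ∑ m ∈ Finset.range N, b m * ((m:ℂ)+1) ^ (-s)) atTop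
          (nhds (∑ n ∈ a.support, a n * ((n:ℂ)+1) ^ (-(Φ s))))) ∧
      Summable (fun m : ℕ => ‖b m‖^2 * w m) ∧
      ∑' m : ℕ, ‖b m‖^2 * w m ≤ ∑ n ∈ a.support, ‖a n‖^2 * w n) :
    1 ≤ c₀ := by
  by_contra hc
  have hc0 : c₀ = 0 := by omega
  -- Step A : h is integrable on (0,∞)
  have hInt : IntegrableOn h (Set.Ioi 0) := by
    by_contra H
    rw [integral_undef H] at hh_int
    norm_num at hh_int
  -- Step B : integrability of the weighted integrands
  have hcontn : ∀ n : ℕ, Continuous fun σ:ℝ => ((n:ℝ)+1) ^ (-(2:ℝ)*σ) := by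
    intro n
    have h1 : Continuous fun σ:ℝ => Real.exp (Real.log ((n:ℝ)+1) * (-(2:ℝ)*σ)) := by
      continuity
    refine h1.congr fun σ => ?_
    rw [← Real.rpow_def_of_pos (by positivity)]
  have hbase : ∀ n : ℕ, (1:ℝ) ≤ (n:ℝ)+1 := fun n => by
    have := Nat.cast_nonneg (α := ℝ) n; linarith
  have hIntn : ∀ n : ℕ, IntegrableOn (fun σ => ((n:ℝ)+1) ^ (-(2:ℝ)*σ) * h σ) (Set.Ioi 0) := by
    intro n
    refine Integrable.mono hInt ((hcontn n).aestronglyMeasurable.mul hInt.aestronglyMeasurable) ?_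
    filter_upwards [ae_restrict_mem measurableSet_Ioi] with σ hσ
    have hσ' : (0:ℝ) < σ := hσ
    have h1 : ((n:ℝ)+1) ^ (-(2:ℝ)*σ) ≤ 1 :=
      Real.rpow_le_one_of_one_le_of_nonpos (hbase n) (by nlinarith)
    have h2 : (0:ℝ) ≤ ((n:ℝ)+1) ^ (-(2:ℝ)*σ) := (Real.rpow_pos_of_pos (by positivity) _).le
    have h3 := (hh_pos σ hσ).le
    rw [Real.norm_eq_abs, Real.norm_eq_abs, abs_of_nonneg (mul_nonneg h2 h3), abs_of_nonneg h3]
    nlinarith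
  -- Step C : w 0 = 1
  have hw0 : w 0 = 1 := by
    rw [hw 0]
    have : (∫ σ in Set.Ioi (0:ℝ), (((0:ℕ):ℝ)+1) ^ (-(2:ℝ)*σ) * h σ)
        = ∫ σ in Set.Ioi (0:ℝ), h σ := by
      refine setIntegral_congr_fun measurableSet_Ioi fun σ _ => ?_
      norm_num
    rw [this, hh_int]
  -- Step D : w n ≤ 1
  have hwle : ∀ n : ℕ, w n ≤ 1 := by
    intro n
    rw [hw n]
    refine le_trans (integral_mono_ae (hIntn n) hInt ?_) (le_of_eq hh_int)
    filter_upwards [ae_restrict_mem measurableSet_Ioi] with σ hσ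
    have hσ' : (0:ℝ) < σ := hσ
    have h1 : ((n:ℝ)+1) ^ (-(2:ℝ)*σ) ≤ 1 :=
      Real.rpow_le_one_of_one_le_of_nonpos (hbase n) (by nlinarith)
    have h2 : (0:ℝ) ≤ ((n:ℝ)+1) ^ (-(2:ℝ)*σ) := (Real.rpow_pos_of_pos (by positivity) _).le
    have h3 := (hh_pos σ hσ).le
    nlinarith
  -- Step E : positive mass near zero
  set A : ℝ := ∫ σ in Set.Ioc (0:ℝ) (1/4), h σ with hA
  have hApos : 0 < A := by
    have hsub : Set.Ioc (1/8 : ℝ) (1/4) ⊆ Set.Ioc (0:ℝ) (1/4) :=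
      Set.Ioc_subset_Ioc_left (by norm_num)
    have hIntIoc : IntegrableOn h (Set.Ioc 0 (1/4)) :=
      hInt.mono_set Set.Ioc_subset_Ioi_self
    have h1 : (∫ σ in Set.Ioc (1/8:ℝ) (1/4), h σ) ≤ A := by
      refine setIntegral_mono_set hIntIoc ?_ (HasSubset.Subset.eventuallyLE hsub)
      filter_upwards [ae_restrict_mem measurableSet_Ioc] with σ hσ
      exact (hh_pos σ hσ.1).le
    have h2 : (0:ℝ) < ∫ σ in Set.Ioc (1/8:ℝ) (1/4), h σ := by
      rw [← intervalIntegral.integral_of_le (by norm_num : (1/8:ℝ) ≤ 1/4)]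
      refine intervalIntegral.intervalIntegral_pos_of_pos_on ?_ ?_ (by norm_num)
      · rw [intervalIntegrable_iff]
        refine hInt.mono_set ?_
        rw [Set.uIoc_of_le (by norm_num : (1/8:ℝ) ≤ 1/4)]
        intro x hx
        exact lt_trans (by norm_num) hx.1
      · intro x hx
        exact hh_pos x (lt_trans (by norm_num) hx.1)
    linarith
  -- Step F : lower bound for w n
  have hwlb : ∀ n : ℕ, ((n:ℝ)+1) ^ (-(1/2):ℝ) * A ≤ w n := by
    intro n
    rw [hw n]
    have hIntIocn : IntegrableOn (fun σ => ((n:ℝ)+1) ^ (-(2:ℝ)*σ) * h σ) (Set.Ioc 0 (1/4)) :=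
      (hIntn n).mono_set Set.Ioc_subset_Ioi_self
    have hIntIoc : IntegrableOn h (Set.Ioc 0 (1/4)) :=
      hInt.mono_set Set.Ioc_subset_Ioi_self
    have step1 : (∫ σ in Set.Ioc (0:ℝ) (1/4), ((n:ℝ)+1) ^ (-(2:ℝ)*σ) * h σ)
        ≤ ∫ σ in Set.Ioi (0:ℝ), ((n:ℝ)+1) ^ (-(2:ℝ)*σ) * h σ := by
      refine setIntegral_mono_set (hIntn n) ?_
        (HasSubset.Subset.eventuallyLE Set.Ioc_subset_Ioi_self)
      filter_upwards [ae_restrict_mem measurableSet_Ioi] with σ hσ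
      have h2 : (0:ℝ) ≤ ((n:ℝ)+1) ^ (-(2:ℝ)*σ) := (Real.rpow_pos_of_pos (by positivity) _).le
      exact mul_nonneg h2 (hh_pos σ hσ).le
    have step2 : ((n:ℝ)+1) ^ (-(1/2):ℝ) * A
        ≤ ∫ σ in Set.Ioc (0:ℝ) (1/4), ((n:ℝ)+1) ^ (-(2:ℝ)*σ) * h σ := by
      rw [hA, ← integral_const_mul]
      refine setIntegral_mono_on (hIntIoc.const_mul _) hIntIocn measurableSet_Ioc ?_
      intro σ hσ
      have h1 : ((n:ℝ)+1) ^ (-(1/2):ℝ) ≤ ((n:ℝ)+1) ^ (-(2:ℝ)*σ) := by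
        refine Real.rpow_le_rpow_of_exponent_le (hbase n) ?_
        nlinarith [hσ.2]
      exact mul_le_mul_of_nonneg_right h1 (hh_pos σ hσ.1).le
    linarith
  have hwpos : ∀ n : ℕ, 0 < w n := fun n =>
    lt_of_lt_of_le (mul_pos (Real.rpow_pos_of_pos (by positivity) _) hApos) (hwlb n)
  -- helper : squaring an rpow
  have sq_rpow : ∀ (u y : ℝ), 0 ≤ u → (u^y)^2 = u^(2*y) := fun u y hu => by
    rw [← Real.rpow_natCast (u^y) 2, ← Real.rpow_mul hu]
    norm_num [mul_comm]
  -- Step G : bound for φ on real x ≥ 2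
  obtain ⟨N₀, hN₀⟩ : ∃ N, ∀ s ∈ {s:ℂ | (1:ℝ) < s.re},
      dist (φ s) (∑ n ∈ Finset.range N, c n * ((n:ℂ)+1)^(-s)) < 1 :=
    ((Metric.tendstoUniformlyOn_iff.1 (hφ 1 one_pos)) 1 one_pos).exists
  set M : ℝ := (∑ n ∈ Finset.range N₀, ‖c n‖) + 1 with hMdef
  have hM1 : (1:ℝ) ≤ M := by
    have : (0:ℝ) ≤ ∑ n ∈ Finset.range N₀, ‖c n‖ :=
      Finset.sum_nonneg fun n _ => norm_nonneg _
    rw [hMdef]; linarith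
  have hφbound : ∀ x : ℝ, 1 < x → ‖φ (x:ℂ)‖ ≤ M := by
    intro x hx
    have hmem : (x:ℂ) ∈ {s:ℂ | (1:ℝ) < s.re} := by simpa using hx
    have hd := hN₀ _ hmem
    have hub : ‖∑ n ∈ Finset.range N₀, c n * ((n:ℂ)+1)^(-(x:ℂ))‖
        ≤ ∑ n ∈ Finset.range N₀, ‖c n‖ := by
      refine le_trans (norm_sum_le _ _) (Finset.sum_le_sum fun n _ => ?_)
      rw [norm_mul]
      have hle1 : ‖((n:ℂ)+1)^(-(x:ℂ))‖ ≤ 1 := by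
        have hcast : ((n:ℂ)+1) = ((((n:ℝ)+1):ℝ):ℂ) := by push_cast; ring
        rw [hcast, Complex.norm_cpow_eq_rpow_re_of_pos (by positivity)]
        refine Real.rpow_le_one_of_one_le_of_nonpos (hbase n) ?_
        simp [Complex.neg_re, Complex.ofReal_re]; linarith
      calc ‖c n‖ * ‖((n:ℂ)+1)^(-(x:ℂ))‖ ≤ ‖c n‖ * 1 :=
            mul_le_mul_of_nonneg_left hle1 (norm_nonneg _)
        _ = ‖c n‖ := mul_one _
    rw [dist_eq_norm] at hd
    have htri := norm_sub_norm_le (φ (x:ℂ)) (∑ n ∈ Finset.range N₀, c n * ((n:ℂ)+1)^(-(x:ℂ)))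
    rw [hMdef]; linarith
  -- summable auxiliary series
  have hS2 : Summable (fun m:ℕ => ((m:ℝ)+2)^(-(2:ℝ))) := by
    have h1 : Summable (fun n:ℕ => (n:ℝ)^(-(2:ℝ))) := Real.summable_nat_rpow.2 (by norm_num)
    refine ((summable_nat_add_iff 2).2 h1).congr fun m => ?_
    push_cast; ring_nf
  have hS1 : Summable (fun m:ℕ => ((m:ℝ)+1)^(-(2:ℝ))) := by
    have h1 : Summable (fun n:ℕ => (n:ℝ)^(-(2:ℝ))) := Real.summable_nat_rpow.2 (by norm_num)
    refine ((summable_nat_add_iff 1).2 h1).congr fun m => ?_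
    push_cast; ring_nf
  set Sv : ℝ := ∑' m:ℕ, ((m:ℝ)+2)^(-(2:ℝ)) with hSvdef
  have hSv0 : 0 ≤ Sv := tsum_nonneg fun m => (Real.rpow_pos_of_pos (by positivity) _).le
  set C : ℝ := (2:ℝ)^((5:ℝ)/2) * Sv / A with hCdef
  have hC0 : 0 ≤ C := by
    have := (Real.rpow_pos_of_pos (by norm_num : (0:ℝ) < 2) ((5:ℝ)/2)).le
    positivity
  set δ : ℝ := (2:ℝ)^(-(2:ℝ)*M) / w 1 with hδdef
  have hδ0 : 0 < δ :=
    div_pos (Real.rpow_pos_of_pos (by norm_num) _) (hwpos 1)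
  -- choose x₀
  have h24 : (2:ℝ)^(-(2:ℝ)) = 1/4 := by
    rw [Real.rpow_neg (by norm_num)]
    norm_num
  have htend0 : Tendsto (fun x:ℝ => C * (2:ℝ)^(-(2:ℝ)*x)) atTop (nhds 0) := by
    have hq : Tendsto (fun x:ℝ => ((1:ℝ)/4)^x) atTop (nhds 0) :=
      tendsto_rpow_atTop_of_base_lt_one _ (by norm_num) (by norm_num)
    have heq : ∀ x:ℝ, (2:ℝ)^(-(2:ℝ)*x) = ((1:ℝ)/4)^x := fun x => by
      rw [Real.rpow_mul (by norm_num : (0:ℝ) ≤ 2) (-2) x, h24]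
    have := hq.const_mul C
    rw [mul_zero] at this
    exact this.congr fun x => by rw [heq]
  obtain ⟨x₀, hx₀δ, hx₀2⟩ :=
    ((htend0.eventually_lt_const hδ0).and (eventually_ge_atTop (2:ℝ))).exists
  have hx₀1 : (2:ℝ) ≤ x₀ := hx₀2
  -- the point and the kernel quantities
  set z : ℂ := (2:ℂ)^(-(Φ ((x₀:ℝ):ℂ))) with hzdef
  set r : ℝ := Complex.normSq z with hrdef
  have hr0 : 0 ≤ r := Complex.normSq_nonneg z
  set T : ℝ := 1 + r / w 1 with hTdef
  have hΦx : Φ (x₀:ℂ) = φ (x₀:ℂ) := by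
    rw [hΦ, hc0]; push_cast; ring
  have hReΦ : (Φ ((x₀:ℝ):ℂ)).re ≤ M := by
    refine le_trans (Complex.re_le_norm _) ?_
    rw [hΦx]
    exact hφbound x₀ (by linarith)
  have hznorm : ‖z‖ = (2:ℝ)^(-(Φ ((x₀:ℝ):ℂ)).re) := by
    rw [hzdef, show ((2:ℂ)) = (((2:ℝ)):ℂ) from by norm_num,
      Complex.norm_cpow_eq_rpow_re_of_pos (by norm_num)]
    simp
  have hrval : r = ((2:ℝ)^(-(Φ ((x₀:ℝ):ℂ)).re))^2 := by
    rw [hrdef, Complex.normSq_eq_norm_sq, hznorm]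
  have hrlb : (2:ℝ)^(-(2:ℝ)*M) ≤ r := by
    rw [hrval]
    have h1 : (2:ℝ)^(-M) ≤ (2:ℝ)^(-(Φ ((x₀:ℝ):ℂ)).re) :=
      Real.rpow_le_rpow_of_exponent_le one_le_two (by linarith)
    have h2 : (2:ℝ)^(-(2:ℝ)*M) = ((2:ℝ)^(-M))^2 := by
      rw [sq_rpow 2 (-M) (by norm_num)]; ring_nf
    rw [h2]
    exact pow_le_pow_left₀ (Real.rpow_pos_of_pos (by norm_num) _).le h1 2
  have hδler : δ ≤ r / w 1 := by
    rw [hδdef]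
    exact (div_le_div_iff_of_pos_right (hwpos 1)).2 hrlb
  have hT1 : 1 + δ ≤ T := by rw [hTdef]; linarith
  have hTpos : (0:ℝ) < T := by
    have : 0 ≤ r / w 1 := div_nonneg hr0 (hwpos 1).le
    rw [hTdef]; linarith
  -- the finitely supported sequence
  set v1 : ℂ := (starRingEnd ℂ) z / ((w 1 : ℝ) : ℂ) with hv1def
  set a : ℕ →₀ ℂ := Finsupp.single 0 1 + Finsupp.single 1 v1 with hadef
  have ha0 : a 0 = 1 := by simp [hadef, Finsupp.single_apply]
  have ha1 : a 1 = v1 := by simp [hadef, Finsupp.single_apply]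
  have hasupp : a.support ⊆ {0, 1} := by
    refine subset_trans Finsupp.support_add (Finset.union_subset ?_ ?_) <;>
      refine subset_trans Finsupp.support_single_subset ?_ <;> simp
  have hsum01 : ∀ g : ℕ → ℂ, ∑ n ∈ a.support, a n * g n = g 0 + v1 * g 1 := by
    intro g
    rw [Finset.sum_subset hasupp
      (fun n _ hn => by rw [Finsupp.notMem_support_iff.1 hn, zero_mul])]
    rw [show ({0,1} : Finset ℕ) = insert 0 {1} from rfl,
      Finset.sum_insert (by norm_num), Finset.sum_singleton, ha0, ha1, one_mul]
  have hv1norm : ‖v1‖^2 = r / (w 1)^2 := by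
    rw [hv1def, norm_div, RCLike.norm_conj]
    rw [Complex.norm_real, Real.norm_eq_abs, abs_of_pos (hwpos 1)]
    rw [div_pow]
    congr 1
    rw [hrdef, Complex.normSq_eq_norm_sq]
  have hsumnorm : ∑ n ∈ a.support, ‖a n‖^2 * w n = T := by
    rw [Finset.sum_subset hasupp
      (fun n _ hn => by rw [Finsupp.notMem_support_iff.1 hn]; simp)]
    rw [show ({0,1} : Finset ℕ) = insert 0 {1} from rfl,
      Finset.sum_insert (by norm_num), Finset.sum_singleton, ha0, ha1]
    rw [hv1norm, hw0, hTdef]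
    have hw1 := (hwpos 1).ne'
    field_simp
    simp
  obtain ⟨b, htendb, hbsum, hbbound⟩ := hcontr a
  -- value of the composed series at x₀
  have hSval : ∑ n ∈ a.support, a n * ((n:ℂ)+1) ^ (-(Φ ((x₀:ℝ):ℂ))) = ((T:ℝ):ℂ) := by
    rw [hsum01]
    have h0 : (((0:ℕ):ℂ)+1) ^ (-(Φ ((x₀:ℝ):ℂ))) = 1 := by
      norm_num
    have h1 : (((1:ℕ):ℂ)+1) ^ (-(Φ ((x₀:ℝ):ℂ))) = z := by
      rw [hzdef]; norm_num
    rw [h0, h1, hv1def]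
    have hz1 : (starRingEnd ℂ) z / ((w 1 : ℝ) : ℂ) * z = ((r:ℝ):ℂ) / ((w 1 : ℝ) : ℂ) := by
      rw [div_mul_eq_mul_div, mul_comm, Complex.mul_conj, hrdef]
    rw [hz1, hTdef]
    push_cast
    ring
  -- the comparison series
  set g2 : ℕ → ℝ := fun m => ((m:ℝ)+1)^(-(2:ℝ)*x₀) / w m with hg2def
  have hg2pos : ∀ m, 0 ≤ g2 m := fun m =>
    div_nonneg (Real.rpow_pos_of_pos (by positivity) _).le (hwpos m).le
  have hg2bound : ∀ m : ℕ, g2 m ≤ (1/A) * ((m:ℝ)+1)^(-(2:ℝ)) := by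
    intro m
    have ht0 : (0:ℝ) < (m:ℝ)+1 := by positivity
    have hwlow : ((m:ℝ)+1)^(-(1/2):ℝ) * A ≤ w m := hwlb m
    have hlowpos : (0:ℝ) < ((m:ℝ)+1)^(-(1/2):ℝ) * A :=
      mul_pos (Real.rpow_pos_of_pos ht0 _) hApos
    have h1 : g2 m ≤ ((m:ℝ)+1)^(-(2:ℝ)*x₀) / (((m:ℝ)+1)^(-(1/2):ℝ) * A) := by
      rw [hg2def]
      exact div_le_div_of_nonneg_left (Real.rpow_pos_of_pos ht0 _).le hlowpos hwlow
    refine h1.trans ?_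
    rw [div_mul_eq_div_div, ← Real.rpow_sub ht0]
    have h2 : ((m:ℝ)+1)^(-(2:ℝ)*x₀ - (-(1/2):ℝ)) ≤ ((m:ℝ)+1)^(-(2:ℝ)) := by
      refine Real.rpow_le_rpow_of_exponent_le (hbase m) ?_
      linarith
    calc ((m:ℝ)+1)^(-(2:ℝ)*x₀ - (-(1/2):ℝ)) / A
        ≤ ((m:ℝ)+1)^(-(2:ℝ)) / A := (div_le_div_iff_of_pos_right hApos).2 h2
      _ = (1/A) * ((m:ℝ)+1)^(-(2:ℝ)) := by ring
  have hg2sum : Summable g2 :=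
    Summable.of_nonneg_of_le hg2pos hg2bound (hS1.mul_left _)
  -- the tail bound
  have hg2tail : ∀ m : ℕ,
      g2 (m+1) ≤ ((2:ℝ)^((5:ℝ)/2) * (2:ℝ)^(-(2:ℝ)*x₀) / A) * ((m:ℝ)+2)^(-(2:ℝ)) := by
    intro m
    set t : ℝ := (m:ℝ)+2 with htdef
    have ht0 : (0:ℝ) < t := by rw [htdef]; positivity
    have ht2 : (2:ℝ) ≤ t := by rw [htdef]; have := Nat.cast_nonneg (α := ℝ) m; linarith
    have hcast : (((m+1:ℕ)):ℝ) + 1 = t := by rw [htdef]; push_cast; ring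
    have hwlow : t^(-(1/2):ℝ) * A ≤ w (m+1) := by
      have := hwlb (m+1); rwa [hcast] at this
    have hlowpos : (0:ℝ) < t^(-(1/2):ℝ) * A :=
      mul_pos (Real.rpow_pos_of_pos ht0 _) hApos
    have h1 : g2 (m+1) ≤ t^(-(2:ℝ)*x₀) / (t^(-(1/2):ℝ) * A) := by
      rw [hg2def]
      simp only []
      rw [hcast]
      exact div_le_div_of_nonneg_left (Real.rpow_pos_of_pos ht0 _).le hlowpos hwlow
    refine h1.trans ?_
    rw [div_mul_eq_div_div, ← Real.rpow_sub ht0]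
    have hsplit : t^(-(2:ℝ)*x₀ - (-(1/2):ℝ)) = t^(-(2:ℝ)) * t^((5:ℝ)/2 + -(2:ℝ)*x₀) := by
      rw [← Real.rpow_add ht0]; ring_nf
    have hbb : t^((5:ℝ)/2 + -(2:ℝ)*x₀) ≤ (2:ℝ)^((5:ℝ)/2 + -(2:ℝ)*x₀) :=
      Real.rpow_le_rpow_of_nonpos (by norm_num) ht2 (by linarith)
    have h2exp : (2:ℝ)^((5:ℝ)/2 + -(2:ℝ)*x₀) = (2:ℝ)^((5:ℝ)/2) * (2:ℝ)^(-(2:ℝ)*x₀) :=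
      Real.rpow_add (by norm_num) _ _
    have htneg : (0:ℝ) ≤ t^(-(2:ℝ)) := (Real.rpow_pos_of_pos ht0 _).le
    calc t^(-(2:ℝ)*x₀ - (-(1/2):ℝ)) / A
        = t^(-(2:ℝ)) * t^((5:ℝ)/2 + -(2:ℝ)*x₀) / A := by rw [hsplit]
      _ ≤ t^(-(2:ℝ)) * ((2:ℝ)^((5:ℝ)/2) * (2:ℝ)^(-(2:ℝ)*x₀)) / A := by
          rw [← h2exp]
          exact (div_le_div_iff_of_pos_right hApos).2 (mul_le_mul_of_nonneg_left hbb htneg)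
      _ = ((2:ℝ)^((5:ℝ)/2) * (2:ℝ)^(-(2:ℝ)*x₀) / A) * t^(-(2:ℝ)) := by ring
  have hKbound : ∑' m, g2 m ≤ 1 + C * (2:ℝ)^(-(2:ℝ)*x₀) := by
    rw [Summable.tsum_eq_zero_add hg2sum]
    have hg20 : g2 0 = 1 := by
      simp only [hg2def]
      norm_num [hw0]
    have htail : ∑' m, g2 (m+1)
        ≤ ((2:ℝ)^((5:ℝ)/2) * (2:ℝ)^(-(2:ℝ)*x₀) / A) * Sv := by
      rw [hSvdef, ← tsum_mul_left]
      exact Summable.tsum_le_tsum hg2tail ((summable_nat_add_iff 1).2 hg2sum) (hS2.mul_left _)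
    have heq : ((2:ℝ)^((5:ℝ)/2) * (2:ℝ)^(-(2:ℝ)*x₀) / A) * Sv = C * (2:ℝ)^(-(2:ℝ)*x₀) := by
      rw [hCdef]; ring
    rw [hg20]
    exact add_le_add_right (htail.trans_eq heq) 1
  -- norms of the Dirichlet monomials at x₀
  have hterm : ∀ m : ℕ, ‖b m * ((m:ℂ)+1) ^ (-((x₀:ℝ):ℂ))‖
      = ‖b m‖ * ((m:ℝ)+1)^(-x₀) := by
    intro m
    rw [norm_mul]
    congr 1
    have hcast : ((m:ℂ)+1) = ((((m:ℝ)+1):ℝ):ℂ) := by push_cast; ring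
    rw [hcast, Complex.norm_cpow_eq_rpow_re_of_pos (by positivity)]
    congr 1
  have hKnonneg : (0:ℝ) ≤ ∑' m, g2 m := tsum_nonneg hg2pos
  have hCS : ∀ N : ℕ, ‖∑ m ∈ Finset.range N, b m * ((m:ℂ)+1) ^ (-((x₀:ℝ):ℂ))‖
      ≤ Real.sqrt (T * ∑' m, g2 m) := by
    intro N
    have h1 : ‖∑ m ∈ Finset.range N, b m * ((m:ℂ)+1) ^ (-((x₀:ℝ):ℂ))‖
        ≤ ∑ m ∈ Finset.range N, ‖b m‖ * ((m:ℝ)+1)^(-x₀) := by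
      refine le_trans (norm_sum_le _ _) (le_of_eq ?_)
      exact Finset.sum_congr rfl fun m _ => hterm m
    refine h1.trans ?_
    have hPnn : (0:ℝ) ≤ ∑ m ∈ Finset.range N, ‖b m‖ * ((m:ℝ)+1)^(-x₀) :=
      Finset.sum_nonneg fun m _ =>
        mul_nonneg (norm_nonneg _) (Real.rpow_pos_of_pos (by positivity) _).le
    rw [Real.le_sqrt hPnn (mul_nonneg hTpos.le hKnonneg)]
    have hcs := Finset.sum_mul_sq_le_sq_mul_sq (Finset.range N)
      (fun m => ‖b m‖ * Real.sqrt (w m))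
      (fun m => ((m:ℝ)+1)^(-x₀) / Real.sqrt (w m))
    have he1 : ∑ m ∈ Finset.range N,
        (‖b m‖ * Real.sqrt (w m)) * (((m:ℝ)+1)^(-x₀) / Real.sqrt (w m))
        = ∑ m ∈ Finset.range N, ‖b m‖ * ((m:ℝ)+1)^(-x₀) := by
      refine Finset.sum_congr rfl fun m _ => ?_
      have hsne : Real.sqrt (w m) ≠ 0 := (Real.sqrt_pos.2 (hwpos m)).ne'
      field_simp
    have he2 : ∑ m ∈ Finset.range N, (‖b m‖ * Real.sqrt (w m))^2
        = ∑ m ∈ Finset.range N, ‖b m‖^2 * w m := by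
      refine Finset.sum_congr rfl fun m _ => ?_
      rw [mul_pow, Real.sq_sqrt (hwpos m).le]
    have he3 : ∑ m ∈ Finset.range N, (((m:ℝ)+1)^(-x₀) / Real.sqrt (w m))^2
        = ∑ m ∈ Finset.range N, g2 m := by
      refine Finset.sum_congr rfl fun m _ => ?_
      rw [div_pow, Real.sq_sqrt (hwpos m).le, sq_rpow _ _ (by positivity)]
      rw [hg2def]
      simp only []
      congr 1
      ring
    rw [he1, he2, he3] at hcs
    refine hcs.trans ?_
    have h3 : ∑ m ∈ Finset.range N, ‖b m‖^2 * w m ≤ T := by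
      refine le_trans (Summable.sum_le_tsum _ (fun m _ => ?_) hbsum) (hbbound.trans (le_of_eq hsumnorm))
      exact mul_nonneg (by positivity) (hwpos m).le
    have h4 : ∑ m ∈ Finset.range N, g2 m ≤ ∑' m, g2 m :=
      Summable.sum_le_tsum _ (fun m _ => hg2pos m) hg2sum
    have h5 : (0:ℝ) ≤ ∑ m ∈ Finset.range N, ‖b m‖^2 * w m :=
      Finset.sum_nonneg fun m _ => mul_nonneg (by positivity) (hwpos m).le
    have h6 : (0:ℝ) ≤ ∑ m ∈ Finset.range N, g2 m :=
      Finset.sum_nonneg fun m _ => hg2pos m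
    exact mul_le_mul h3 h4 h6 hTpos.le
  -- pass to the limit
  have hre : 1/2 < ((x₀:ℝ):ℂ).re := by
    rw [Complex.ofReal_re]; linarith
  have hlim := (htendb ((x₀:ℝ):ℂ) hre).norm
  rw [hSval] at hlim
  have hTnorm : ‖((T:ℝ):ℂ)‖ = T := by
    rw [Complex.norm_real, Real.norm_eq_abs, abs_of_pos hTpos]
  have hTsqrt : T ≤ Real.sqrt (T * ∑' m, g2 m) := by
    have h0 : ‖((T:ℝ):ℂ)‖ ≤ Real.sqrt (T * ∑' m, g2 m) :=
      le_of_tendsto hlim (Filter.Eventually.of_forall hCS)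
    rwa [hTnorm] at h0
  have hTK : T ≤ ∑' m, g2 m := by
    have h1 := (Real.le_sqrt hTpos.le (mul_nonneg hTpos.le hKnonneg)).1 hTsqrt
    have h2 : T * T ≤ T * ∑' m, g2 m := by nlinarith
    exact le_of_mul_le_mul_left h2 hTpos
  -- contradiction
  have hfinal : T ≤ 1 + C * (2:ℝ)^(-(2:ℝ)*x₀) := hTK.trans hKbound
  linarith
end

section
/- Let h be a positive continuous function on (0,∞) with ∫₀^∞ h(σ)dσ = 1 and let w_h(n) = ∫₀^∞ n^{-2σ} h(σ) dσ for each integer n ≥ 1. Then the function x ↦ ∑_{n=1}^∞ n^{-x}/w_h(n) tends to 1 as x → +∞. (In particular w_h(1) = 1 and the terms with n ≥ 2 contribute a quantity tending to 0.) -/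
open MeasureTheory Filter

/-- The function `x ↦ ∑_{n≥1} n^{-x}/w_h(n)` tends to `1` as `x → +∞`. -/
theorem tendsto_sum_inv_weight
    (h : ℝ → ℝ)
    (hh_pos : ∀ σ ∈ Set.Ioi (0:ℝ), 0 < h σ)
    (hh_cont : ContinuousOn h (Set.Ioi 0))
    (hh_int : ∫ σ in Set.Ioi (0:ℝ), h σ = 1)
    (w : ℕ → ℝ)
    (hw : ∀ n : ℕ, w n = ∫ σ in Set.Ioi (0:ℝ), ((n:ℝ)+1) ^ (-(2:ℝ)*σ) * h σ) :
    Tendsto (fun x : ℝ => ∑' n : ℕ, ((n:ℝ)+1) ^ (-x) / w n) atTop (nhds 1) := by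
  -- h is integrable on (0,∞)
  have hInt : IntegrableOn h (Set.Ioi 0) := by
    by_contra hc
    rw [MeasureTheory.integral_undef hc] at hh_int
    norm_num at hh_int
  -- continuity of σ ↦ a ^ (-2σ)
  have contA : ∀ a : ℝ, 0 < a → Continuous fun σ : ℝ => a ^ (-(2:ℝ)*σ) := by
    intro a ha
    have : (fun σ : ℝ => a ^ (-(2:ℝ)*σ)) = fun σ => Real.exp (Real.log a * (-(2:ℝ)*σ)) := by
      funext σ; rw [Real.rpow_def_of_pos ha]
    rw [this]
    exact Real.continuous_exp.comp (continuous_const.mul (continuous_const.mul continuous_id))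
  -- integrability of the weight integrand
  have hg_int : ∀ n : ℕ, IntegrableOn (fun σ => ((n:ℝ)+1) ^ (-(2:ℝ)*σ) * h σ) (Set.Ioi 0) := by
    intro n
    have hb : (1:ℝ) ≤ (n:ℝ)+1 := le_add_of_nonneg_left (Nat.cast_nonneg n)
    apply Integrable.mono' hInt
    · exact ((contA _ (by positivity)).aestronglyMeasurable.restrict.mul
        (hh_cont.aestronglyMeasurable measurableSet_Ioi))
    · filter_upwards [self_mem_ae_restrict (measurableSet_Ioi : MeasurableSet (Set.Ioi (0:ℝ)))]
        with σ hσ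
      have h1 : (0:ℝ) ≤ ((n:ℝ)+1) ^ (-(2:ℝ)*σ) := Real.rpow_nonneg (by positivity) _
      have h2 : ((n:ℝ)+1) ^ (-(2:ℝ)*σ) ≤ 1 :=
        Real.rpow_le_one_of_one_le_of_nonpos hb (by nlinarith [hσ.out])
      rw [Real.norm_eq_abs, abs_mul, abs_of_nonneg h1, abs_of_nonneg (hh_pos σ hσ).le]
      nlinarith [(hh_pos σ hσ).le]
  set c : ℝ := ∫ σ in Set.Ioc (1:ℝ) 2, h σ with hc_def
  have hsub : Set.Ioc (1:ℝ) 2 ⊆ Set.Ioi 0 := fun x hx => lt_trans one_pos hx.1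
  have hc_pos : 0 < c := by
    rw [hc_def, ← intervalIntegral.integral_of_le (by norm_num : (1:ℝ) ≤ 2)]
    apply intervalIntegral.intervalIntegral_pos_of_pos_on
    · exact (intervalIntegrable_iff_integrableOn_Ioc_of_le (by norm_num)).2 (hInt.mono_set hsub)
    · exact fun x hx => hh_pos x (lt_trans one_pos hx.1)
    · norm_num
  -- lower bound on weights
  have hwlb : ∀ n : ℕ, ((n:ℝ)+1) ^ (-(4:ℝ)) * c ≤ w n := by
    intro n
    have hb : (1:ℝ) ≤ (n:ℝ)+1 := le_add_of_nonneg_left (Nat.cast_nonneg n)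
    rw [hw n, hc_def, ← MeasureTheory.integral_const_mul]
    calc ∫ σ in Set.Ioc (1:ℝ) 2, ((n:ℝ)+1) ^ (-(4:ℝ)) * h σ
        ≤ ∫ σ in Set.Ioc (1:ℝ) 2, ((n:ℝ)+1) ^ (-(2:ℝ)*σ) * h σ := by
          apply setIntegral_mono_on ((hInt.mono_set hsub).const_mul _)
            ((hg_int n).mono_set hsub) measurableSet_Ioc
          intro σ hσ
          exact mul_le_mul_of_nonneg_right
            (Real.rpow_le_rpow_of_exponent_le hb (by nlinarith [hσ.1, hσ.2]))
            (hh_pos σ (hsub hσ)).le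
      _ ≤ ∫ σ in Set.Ioi (0:ℝ), ((n:ℝ)+1) ^ (-(2:ℝ)*σ) * h σ := by
          apply setIntegral_mono_set (hg_int n)
          · filter_upwards [self_mem_ae_restrict
              (measurableSet_Ioi : MeasurableSet (Set.Ioi (0:ℝ)))] with σ hσ
            exact mul_nonneg (Real.rpow_nonneg (by positivity) _) (hh_pos σ hσ).le
          · exact HasSubset.Subset.eventuallyLE hsub
  have hwpos : ∀ n : ℕ, 0 < w n := fun n =>
    lt_of_lt_of_le (by positivity) (hwlb n)
  have hw0 : w 0 = 1 := by
    rw [hw 0]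
    simpa [Real.one_rpow] using hh_int
  -- the summable comparison series
  have hKsum : Summable (fun n : ℕ => ((n:ℝ)+2) ^ (-(2:ℝ))) := by
    have h1 : Summable (fun n : ℕ => ((n:ℝ)) ^ (-(2:ℝ))) :=
      Real.summable_nat_rpow.2 (by norm_num)
    have h2 := (summable_nat_add_iff 2).2 h1
    apply h2.congr
    intro n; push_cast; ring_nf
  set K : ℝ := ∑' n : ℕ, ((n:ℝ)+2) ^ (-(2:ℝ)) with hK_def
  have hK_nonneg : 0 ≤ K := tsum_nonneg fun n => Real.rpow_nonneg (by positivity) _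
  -- key termwise bound for the tail, for x ≥ 6
  have key : ∀ x : ℝ, 6 ≤ x → ∀ n : ℕ,
      ((n:ℝ)+1+1) ^ (-x) / w (n+1) ≤ ((n:ℝ)+2) ^ (-(2:ℝ)) / c * 2 ^ ((6:ℝ)-x) := by
    intro x hx n
    have hb0 : (0:ℝ) < (n:ℝ)+2 := by positivity
    have hb2 : (2:ℝ) ≤ (n:ℝ)+2 := le_add_of_nonneg_left (Nat.cast_nonneg n)
    have hcast : ((n+1 : ℕ):ℝ)+1 = (n:ℝ)+2 := by push_cast; ring
    have step1 : ((n:ℝ)+1+1) ^ (-x) / w (n+1) ≤ ((n:ℝ)+2) ^ ((4:ℝ)-x) / c := by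
      have hlb := hwlb (n+1)
      rw [hcast] at hlb
      have heq : ((n:ℝ)+2) ^ ((4:ℝ)-x) / c = ((n:ℝ)+2) ^ (-x) / (((n:ℝ)+2) ^ (-(4:ℝ)) * c) := by
        rw [show (4:ℝ)-x = -x - -4 by ring, Real.rpow_sub hb0, div_div]
      rw [heq, show ((n:ℝ)+1+1) = (n:ℝ)+2 by ring]
      apply div_le_div_of_nonneg_left (Real.rpow_nonneg hb0.le _) (by positivity) hlb
    have step2 : ((n:ℝ)+2) ^ ((4:ℝ)-x) ≤ ((n:ℝ)+2) ^ (-(2:ℝ)) * 2 ^ ((6:ℝ)-x) := by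
      have : ((n:ℝ)+2) ^ ((4:ℝ)-x) = ((n:ℝ)+2) ^ (-(2:ℝ)) * ((n:ℝ)+2) ^ ((6:ℝ)-x) := by
        rw [← Real.rpow_add hb0]; ring_nf
      rw [this]
      exact mul_le_mul_of_nonneg_left
        (Real.rpow_le_rpow_of_nonpos two_pos hb2 (by linarith))
        (Real.rpow_nonneg hb0.le _)
    calc ((n:ℝ)+1+1) ^ (-x) / w (n+1) ≤ ((n:ℝ)+2) ^ ((4:ℝ)-x) / c := step1
      _ ≤ ((n:ℝ)+2) ^ (-(2:ℝ)) * 2 ^ ((6:ℝ)-x) / c :=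
          div_le_div_of_nonneg_right step2 hc_pos.le
      _ = ((n:ℝ)+2) ^ (-(2:ℝ)) / c * 2 ^ ((6:ℝ)-x) := by ring
  -- bounds on the full sum, eventually in x
  have hbound : ∀ x : ℝ, 6 ≤ x →
      1 ≤ (∑' n : ℕ, ((n:ℝ)+1) ^ (-x) / w n) ∧
      (∑' n : ℕ, ((n:ℝ)+1) ^ (-x) / w n) ≤ 1 + K / c * 2 ^ ((6:ℝ)-x) := by
    intro x hx
    have hRHSsum : Summable (fun n : ℕ => ((n:ℝ)+2) ^ (-(2:ℝ)) / c * 2 ^ ((6:ℝ)-x)) :=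
      (hKsum.div_const c).mul_right _
    have htermpos : ∀ n : ℕ, 0 ≤ ((n:ℝ)+1) ^ (-x) / w n := fun n =>
      div_nonneg (Real.rpow_nonneg (by positivity) _) (hwpos n).le
    have htail_sum : Summable (fun n : ℕ => ((n:ℝ)+1+1) ^ (-x) / w (n+1)) := by
      apply Summable.of_nonneg_of_le (fun n => htermpos (n+1) |>.trans_eq (by push_cast; ring_nf))
        (key x hx) hRHSsum
    have htail_sum' : Summable (fun n : ℕ => (((n+1:ℕ):ℝ)+1) ^ (-x) / w (n+1)) := by
      apply htail_sum.congr; intro n; push_cast; ring_nf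
    have hsum : Summable (fun n : ℕ => ((n:ℝ)+1) ^ (-x) / w n) :=
      (summable_nat_add_iff 1).1 htail_sum'
    have hzero : ((0:ℕ):ℝ)+1 = (1:ℝ) := by norm_num
    have hsplit : (∑' n : ℕ, ((n:ℝ)+1) ^ (-x) / w n)
        = 1 + ∑' n : ℕ, (((n+1:ℕ):ℝ)+1) ^ (-x) / w (n+1) := by
      rw [Summable.tsum_eq_zero_add hsum]
      congr 1
      rw [hzero, Real.one_rpow, hw0]; norm_num
    constructor
    · rw [hsplit]
      have : 0 ≤ ∑' n : ℕ, (((n+1:ℕ):ℝ)+1) ^ (-x) / w (n+1) :=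
        tsum_nonneg fun n => htermpos (n+1)
      linarith
    · rw [hsplit]
      have hT : (∑' n : ℕ, (((n+1:ℕ):ℝ)+1) ^ (-x) / w (n+1))
          ≤ ∑' n : ℕ, ((n:ℝ)+2) ^ (-(2:ℝ)) / c * 2 ^ ((6:ℝ)-x) := by
        apply Summable.tsum_le_tsum _ htail_sum' hRHSsum
        intro n
        have := key x hx n
        calc (((n+1:ℕ):ℝ)+1) ^ (-x) / w (n+1) = ((n:ℝ)+1+1) ^ (-x) / w (n+1) := by push_cast; ring_nf
          _ ≤ _ := key x hx n
      have hTval : (∑' n : ℕ, ((n:ℝ)+2) ^ (-(2:ℝ)) / c * 2 ^ ((6:ℝ)-x))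
          = K / c * 2 ^ ((6:ℝ)-x) := by
        rw [tsum_mul_right, tsum_div_const]
      linarith [hT.trans_eq hTval]
  -- the upper bound tends to 1
  have hup_tendsto : Tendsto (fun x : ℝ => 1 + K / c * 2 ^ ((6:ℝ)-x)) atTop (nhds 1) := by
    have h2 : Tendsto (fun x : ℝ => (2:ℝ) ^ ((6:ℝ)-x)) atTop (nhds 0) := by
      have heq : (fun x : ℝ => (2:ℝ) ^ ((6:ℝ)-x)) = fun x => Real.exp (Real.log 2 * (6-x)) := by
        funext x; rw [Real.rpow_def_of_pos two_pos]
      rw [heq]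
      apply Real.tendsto_exp_atBot.comp
      apply Tendsto.const_mul_atBot (Real.log_pos (by norm_num))
      apply tendsto_atBot_add_const_left
      exact tendsto_neg_atTop_atBot
    have := ((h2.const_mul (K/c)).const_add 1)
    simpa using this
  apply tendsto_of_tendsto_of_tendsto_of_le_of_le' tendsto_const_nhds hup_tendsto
  · filter_upwards [eventually_ge_atTop (6:ℝ)] with x hx
    exact (hbound x hx).1
  · filter_upwards [eventually_ge_atTop (6:ℝ)] with x hx
    exact (hbound x hx).2
end

section
/- Let h be a positive continuous function on (0,∞) with ∫₀^∞ h(σ)dσ = 1 and let w_h(n) = ∫₀^∞ n^{-2σ} h(σ) dσ for each integer n ≥ 1. Let P(s) = ∑_{n=1}^N a_n n^{-s} be a Dirichlet polynomial. Then for every s ∈ ℂ with Re s > 1, |P(s)| ≤ ( ∫₀^∞ [limsup_{T→∞} (1/(2T)) ∫_{−T}^{T} |P(σ+it)| dt ] h(σ) dσ ) · ∑_{n=1}^∞ n^{−Re s}/w_h(n). -/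
set_option maxHeartbeats 1000000

open MeasureTheory Filter

namespace DirichletAux

noncomputable def LL (n : ℕ) : ℝ := Real.log ((n:ℝ)+1)

lemma cpow_exp (n : ℕ) (z : ℂ) : ((n:ℂ)+1) ^ z = Complex.exp ((LL n : ℂ) * z) := by
  have h1 : ((n:ℂ)+1) = (((n:ℝ)+1 : ℝ) : ℂ) := by push_cast; ring
  have h2 : (0:ℝ) < (n:ℝ)+1 := by positivity
  rw [h1, Complex.cpow_def_of_ne_zero (by exact_mod_cast h2.ne'), ← Complex.ofReal_log h2.le]
  rfl

lemma abs_cpow (n : ℕ) (z : ℂ) : ‖((n:ℂ)+1) ^ z‖ = ((n:ℝ)+1) ^ z.re := by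
  have : ((n:ℂ)+1) = (((n:ℝ)+1 : ℝ) : ℂ) := by push_cast; ring
  rw [this, Complex.norm_cpow_eq_rpow_re_of_pos (by positivity)]

lemma LL_inj {n m : ℕ} (h : n ≠ m) : LL n ≠ LL m := by
  intro hc
  have h1 : (0:ℝ) < (n:ℝ)+1 := by positivity
  have h2 : (0:ℝ) < (m:ℝ)+1 := by positivity
  have := Real.log_injOn_pos (Set.mem_Ioi.2 h1) (Set.mem_Ioi.2 h2) hc
  exact h (by exact_mod_cast (by linarith [this] : ((n:ℝ)) = m))

noncomputable def QQ (N : ℕ) (a : ℕ → ℂ) (σ t : ℝ) : ℂ :=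
  ∑ n ∈ Finset.range N, a n * ((n:ℂ)+1) ^ (-((σ:ℂ) + (t:ℂ)*Complex.I))

noncomputable def GG (N : ℕ) (a : ℕ → ℂ) (σ T : ℝ) : ℝ :=
  ∫ t in (-T)..T, ‖QQ N a σ t‖

noncomputable def CC (N : ℕ) (a : ℕ → ℂ) : ℝ := ∑ n ∈ Finset.range N, ‖a n‖

noncomputable def Mnat (N : ℕ) (a : ℕ → ℂ) (σ : ℝ) : ℝ :=
  limsup (fun k : ℕ => (1/(2*(k:ℝ))) * GG N a σ k) atTop

variable (N : ℕ) (a : ℕ → ℂ)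

lemma CC_nonneg : 0 ≤ CC N a := Finset.sum_nonneg fun n _ => norm_nonneg _

lemma qcont : Continuous fun p : ℝ × ℝ => ‖QQ N a p.1 p.2‖ := by
  apply continuous_norm.comp
  unfold QQ
  apply continuous_finset_sum
  intro n _
  apply Continuous.mul continuous_const
  apply Continuous.const_cpow
  · fun_prop
  · left
    intro hc
    have := congrArg Complex.re hc
    simp at this
    linarith [this]

lemma qcont1 (σ : ℝ) : Continuous fun t : ℝ => ‖QQ N a σ t‖ := by
  have heq : (fun t : ℝ => ‖QQ N a σ t‖) =
      (fun p : ℝ × ℝ => ‖QQ N a p.1 p.2‖) ∘ (fun t : ℝ => ((σ, t) : ℝ × ℝ)) := rfl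
  rw [heq]
  exact (qcont N a).comp (continuous_const.prodMk continuous_id)

lemma qint (σ x y : ℝ) :
    IntervalIntegrable (fun t => ‖QQ N a σ t‖) volume x y :=
  (qcont1 N a σ).intervalIntegrable x y

lemma qbd (σ t : ℝ) (hσ : 0 ≤ σ) : ‖QQ N a σ t‖ ≤ CC N a := by
  unfold QQ CC
  calc ‖∑ n ∈ Finset.range N, a n * ((n:ℂ)+1) ^ (-((σ:ℂ) + (t:ℂ)*Complex.I))‖
      ≤ ∑ n ∈ Finset.range N, ‖a n * ((n:ℂ)+1) ^ (-((σ:ℂ) + (t:ℂ)*Complex.I))‖ :=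
        norm_sum_le _ _
    _ ≤ ∑ n ∈ Finset.range N, ‖a n‖ := by
        apply Finset.sum_le_sum
        intro n _
        rw [norm_mul, abs_cpow]
        have hre : (-((σ:ℂ) + (t:ℂ)*Complex.I)).re = -σ := by simp
        rw [hre]
        have h1 : ((n:ℝ)+1) ^ (-σ) ≤ 1 :=
          Real.rpow_le_one_of_one_le_of_nonpos
            (by linarith [Nat.cast_nonneg (α := ℝ) n]) (by linarith)
        calc ‖a n‖ * ((n:ℝ)+1) ^ (-σ) ≤ ‖a n‖ * 1 :=
            mul_le_mul_of_nonneg_left h1 (norm_nonneg _)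
          _ = ‖a n‖ := mul_one _

lemma gmono (σ : ℝ) ⦃x y : ℝ⦄ (hx : 0 ≤ x) (hxy : x ≤ y) : GG N a σ x ≤ GG N a σ y := by
  apply intervalIntegral.integral_mono_interval (by linarith) (by linarith) (by linarith)
  · filter_upwards with t using norm_nonneg _
  · exact qint N a σ _ _

lemma gnonneg (σ T : ℝ) (hT : 0 ≤ T) : 0 ≤ GG N a σ T := by
  apply intervalIntegral.integral_nonneg (by linarith)
  intro t _
  exact norm_nonneg _

lemma gbd (σ : ℝ) (hσ : 0 < σ) (T : ℝ) (hT : 0 < T) : GG N a σ T ≤ 2*T*(CC N a) := by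
  have h1 : GG N a σ T ≤ ∫ _t in (-T)..T, CC N a := by
    apply intervalIntegral.integral_mono_on (by linarith) (qint N a σ _ _)
      intervalIntegrable_const
    intro t _
    exact qbd N a σ t hσ.le
  calc GG N a σ T ≤ ∫ _t in (-T)..T, CC N a := h1
    _ = 2*T*(CC N a) := by rw [intervalIntegral.integral_const, smul_eq_mul]; ring

lemma mnat_measurable : Measurable (Mnat N a) := by
  apply Measurable.limsup
  intro k
  apply Measurable.const_mul
  apply Continuous.measurable
  have huc : Continuous (Function.uncurry (fun σ t => ‖QQ N a σ t‖)) := qcont N a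
  exact intervalIntegral.continuous_parametric_intervalIntegral_of_continuous'
    (f := fun σ t => ‖QQ N a σ t‖) huc _ _

lemma mnat_bdd (σ : ℝ) (hσ : 0 < σ) :
    IsBoundedUnder (· ≤ ·) atTop (fun k : ℕ => (1/(2*(k:ℝ))) * GG N a σ k) := by
  refine ⟨CC N a, ?_⟩
  rw [eventually_map]
  filter_upwards [eventually_ge_atTop 1] with k hk
  have hk' : (0:ℝ) < k := by exact_mod_cast hk
  calc (1/(2*(k:ℝ))) * GG N a σ k ≤ (1/(2*(k:ℝ))) * (2*k*(CC N a)) :=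
      mul_le_mul_of_nonneg_left (gbd N a σ hσ k hk') (by positivity)
    _ = CC N a := by field_simp

lemma mnat_nonneg (σ : ℝ) (hσ : 0 < σ) : 0 ≤ Mnat N a σ := by
  apply le_limsup_of_frequently_le ?_ (mnat_bdd N a σ hσ)
  apply Eventually.frequently
  filter_upwards [eventually_ge_atTop 1] with k hk
  have hk' : (0:ℝ) < k := by exact_mod_cast hk
  have := gnonneg N a σ k hk'.le
  positivity

lemma mnat_le (σ : ℝ) (hσ : 0 < σ) : Mnat N a σ ≤ CC N a := by
  apply limsup_le_of_le ?_ ?_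
  · apply IsBoundedUnder.isCoboundedUnder_le (⟨0, ?_⟩ : IsBoundedUnder (· ≥ ·) atTop _)
    rw [eventually_map]
    filter_upwards [eventually_ge_atTop 1] with k hk
    have hk' : (0:ℝ) < k := by exact_mod_cast hk
    have := gnonneg N a σ k hk'.le
    positivity
  · filter_upwards [eventually_ge_atTop 1] with k hk
    have hk' : (0:ℝ) < k := by exact_mod_cast hk
    calc (1/(2*(k:ℝ))) * GG N a σ k ≤ (1/(2*(k:ℝ))) * (2*k*(CC N a)) :=
        mul_le_mul_of_nonneg_left (gbd N a σ hσ k hk') (by positivity)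
      _ = CC N a := by field_simp

lemma limsup_real_eq_nat (F : ℝ → ℝ)
    (hmono : ∀ ⦃x y : ℝ⦄, 0 ≤ x → x ≤ y → F x ≤ F y)
    (hpos : ∀ T : ℝ, 0 ≤ T → 0 ≤ F T) (C : ℝ) (hC : 0 ≤ C)
    (hbd : ∀ T : ℝ, 0 < T → F T ≤ 2*T*C) :
    limsup (fun T : ℝ => (1/(2*T)) * F T) atTop
      = limsup (fun k : ℕ => (1/(2*(k:ℝ))) * F k) atTop := by
  set g : ℝ → ℝ := fun T => (1/(2*T)) * F T with hg
  have hg0 : ∀ T : ℝ, 0 < T → 0 ≤ g T := by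
    intro T hT
    have := hpos T hT.le
    positivity
  have hgC : ∀ T : ℝ, 0 < T → g T ≤ C := by
    intro T hT
    have h1 : F T ≤ 2*T*C := hbd T hT
    calc g T ≤ (1/(2*T)) * (2*T*C) := by
          apply mul_le_mul_of_nonneg_left h1 (by positivity)
      _ = C := by field_simp
  have hbddR : IsBoundedUnder (· ≤ ·) atTop g := by
    refine ⟨C, ?_⟩
    rw [eventually_map]
    filter_upwards [eventually_gt_atTop (0:ℝ)] with T hT using hgC T hT
  have hbddN : IsBoundedUnder (· ≤ ·) atTop (fun k : ℕ => g k) := by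
    refine ⟨C, ?_⟩
    rw [eventually_map]
    filter_upwards [eventually_ge_atTop 1] with k hk
    exact hgC k (by exact_mod_cast hk)
  have hcobR : IsCoboundedUnder (· ≤ ·) atTop g := by
    apply IsBoundedUnder.isCoboundedUnder_le (⟨0, ?_⟩ : IsBoundedUnder (· ≥ ·) atTop g)
    rw [eventually_map]
    filter_upwards [eventually_gt_atTop (0:ℝ)] with T hT using hg0 T hT
  have hcobN : IsCoboundedUnder (· ≤ ·) atTop (fun k : ℕ => g k) := by
    apply IsBoundedUnder.isCoboundedUnder_le (⟨0, ?_⟩ : IsBoundedUnder (· ≥ ·) atTop _)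
    rw [eventually_map]
    filter_upwards [eventually_ge_atTop 1] with k hk
    exact hg0 k (by exact_mod_cast hk)
  set L : ℝ := limsup (fun k : ℕ => g k) atTop with hL
  have hL0 : 0 ≤ L := by
    apply le_limsup_of_frequently_le ?_ hbddN
    apply Eventually.frequently
    filter_upwards [eventually_ge_atTop 1] with k hk
    exact hg0 k (by exact_mod_cast hk)
  apply le_antisymm
  · -- hard direction
    apply le_of_forall_pos_le_add
    intro ε hε
    have hLε : limsup (fun k : ℕ => g k) atTop < L + ε/2 := by
      rw [← hL]; linarith
    obtain ⟨k₀, hk₀⟩ := (eventually_atTop).1 (eventually_lt_of_limsup_lt hLε hbddN)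
    set K : ℕ := max k₀ (max 1 (⌈(L + ε/2)*(2/ε)⌉₊)) with hK
    apply limsup_le_of_le hcobR
    filter_upwards [eventually_ge_atTop ((K:ℝ)+1)] with T hT
    have hK1 : (1:ℕ) ≤ K := le_max_of_le_right (le_max_left _ _)
    have hT0 : (0:ℝ) < T := by
      have : (1:ℝ) ≤ K := by exact_mod_cast hK1
      linarith
    set k : ℕ := ⌊T⌋₊ with hk
    have hkK : K ≤ k := Nat.le_floor (by linarith)
    have hk1 : 1 ≤ k := le_trans hK1 hkK
    have hkpos : (0:ℝ) < k := by exact_mod_cast hk1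
    have hkT : (k:ℝ) ≤ T := Nat.floor_le hT0.le
    have hTk1 : T ≤ (k:ℝ)+1 := (Nat.lt_floor_add_one T).le
    -- g T ≤ ((k+1)/k) * g (k+1)
    have step1 : g T ≤ (1/(2*(k:ℝ))) * F ((k:ℝ)+1) := by
      apply mul_le_mul
      · apply one_div_le_one_div_of_le (by positivity)
        linarith
      · exact hmono hT0.le hTk1
      · exact hpos T hT0.le
      · positivity
    have step2 : (1/(2*(k:ℝ))) * F ((k:ℝ)+1) = (((k:ℝ)+1)/k) * g ((k:ℝ)+1) := by
      rw [hg]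
      field_simp
    have hgk1 : g ((k:ℝ)+1) ≤ L + ε/2 := by
      have := hk₀ (k+1) (le_trans (le_max_left _ _) (by omega : K ≤ k+1))
      push_cast at this ⊢
      exact this.le
    have hceil : (L + ε/2) ≤ (K:ℝ) * (ε/2) := by
      have h1 : ((⌈(L + ε/2)*(2/ε)⌉₊ : ℝ)) ≤ K := by
        exact_mod_cast le_max_of_le_right (le_max_right _ _)
      have h2 : (L + ε/2)*(2/ε) ≤ (⌈(L + ε/2)*(2/ε)⌉₊ : ℝ) := Nat.le_ceil _
      have h3 : (L + ε/2)*(2/ε) ≤ (K:ℝ) := le_trans h2 h1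
      calc L + ε/2 = ((L + ε/2)*(2/ε)) * (ε/2) := by field_simp
        _ ≤ (K:ℝ) * (ε/2) := by
            apply mul_le_mul_of_nonneg_right h3 (by positivity)
    have hfrac : (1/(k:ℝ)) * (L + ε/2) ≤ ε/2 := by
      have hKk : (K:ℝ) ≤ k := by exact_mod_cast hkK
      calc (1/(k:ℝ)) * (L + ε/2) ≤ (1/(k:ℝ)) * ((k:ℝ) * (ε/2)) := by
            apply mul_le_mul_of_nonneg_left _ (by positivity)
            calc L + ε/2 ≤ (K:ℝ)*(ε/2) := hceil
              _ ≤ (k:ℝ)*(ε/2) := by apply mul_le_mul_of_nonneg_right hKk (by positivity)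
        _ = ε/2 := by field_simp
    calc g T ≤ (((k:ℝ)+1)/k) * g ((k:ℝ)+1) := step2 ▸ step1
      _ ≤ (((k:ℝ)+1)/k) * (L + ε/2) := by
          apply mul_le_mul_of_nonneg_left hgk1 (by positivity)
      _ = (L + ε/2) + (1/(k:ℝ)) * (L + ε/2) := by field_simp
      _ ≤ L + ε := by linarith
  · -- easy direction
    have hmap : map (fun k : ℕ => g k) atTop = map g (map (Nat.cast : ℕ → ℝ) atTop) := by
      rw [Filter.map_map]; rfl
    have hle : map (Nat.cast : ℕ → ℝ) atTop ≤ atTop := tendsto_natCast_atTop_atTop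
    have : limsup (fun k : ℕ => g k) atTop = limsSup (map g (map (Nat.cast : ℕ → ℝ) atTop)) := by
      rw [limsup, hmap]
    calc L = limsSup (map g (map (Nat.cast : ℕ → ℝ) atTop)) := this
      _ ≤ limsSup (map g atTop) := limsSup_le_limsSup_of_le (map_mono hle) hcobN hbddR
      _ = limsup g atTop := rfl

variable (N : ℕ) (a : ℕ → ℂ)

lemma key_lim (σ : ℝ) (m : ℕ) (hm : m < N) :
    Tendsto (fun k : ℕ => ((1/(2*(k:ℝ)):ℝ):ℂ) *
      ∫ t in (-(k:ℝ))..(k:ℝ), QQ N a σ t * ((m:ℂ)+1) ^ ((t:ℂ)*Complex.I))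
      atTop (nhds (a m * ((m:ℂ)+1) ^ (-(σ:ℂ)))) := by
  unfold QQ
  set c : ℕ → ℂ := fun n => Complex.I * ((LL m : ℂ) - (LL n : ℂ)) with hc
  have hint : ∀ (t : ℝ),
      (∑ n ∈ Finset.range N, a n * ((n:ℂ)+1) ^ (-((σ:ℂ) + (t:ℂ)*Complex.I)))
        * ((m:ℂ)+1) ^ ((t:ℂ)*Complex.I)
      = ∑ n ∈ Finset.range N,
          (a n * Complex.exp ((LL n : ℂ) * (-σ))) * Complex.exp (c n * t) := by
    intro t
    rw [Finset.sum_mul]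
    refine Finset.sum_congr rfl fun n _ => ?_
    rw [cpow_exp, cpow_exp, mul_assoc, ← Complex.exp_add, mul_assoc, ← Complex.exp_add]
    congr 1
    congr 1
    simp only [hc]
    ring
  have hieq : ∀ k : ℕ,
      (∫ t in (-(k:ℝ))..(k:ℝ),
        (∑ n ∈ Finset.range N, a n * ((n:ℂ)+1) ^ (-((σ:ℂ) + (t:ℂ)*Complex.I)))
          * ((m:ℂ)+1) ^ ((t:ℂ)*Complex.I))
      = ∑ n ∈ Finset.range N,
          (a n * Complex.exp ((LL n : ℂ) * (-σ))) * ∫ t in (-(k:ℝ))..(k:ℝ), Complex.exp (c n * t) := by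
    intro k
    rw [intervalIntegral.integral_congr (g := fun t => ∑ n ∈ Finset.range N,
          (a n * Complex.exp ((LL n : ℂ) * (-σ))) * Complex.exp (c n * t))
        (fun t _ => hint t)]
    rw [intervalIntegral.integral_finset_sum]
    · exact Finset.sum_congr rfl fun n _ => intervalIntegral.integral_const_mul _ _
    · intro n _
      exact (Continuous.intervalIntegrable (by fun_prop) _ _)
  simp only [hieq, Finset.mul_sum]
  have hlim : ∀ n ∈ Finset.range N,
      Tendsto (fun k : ℕ => ((1/(2*(k:ℝ)):ℝ):ℂ) *
          ((a n * Complex.exp ((LL n : ℂ) * (-σ))) * ∫ t in (-(k:ℝ))..(k:ℝ), Complex.exp (c n * t)))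
        atTop (nhds (if n = m then a m * ((m:ℂ)+1) ^ (-(σ:ℂ)) else 0)) := by
    intro n _
    by_cases hnm : n = m
    · subst hnm
      simp only [if_pos rfl]
      have hc0 : c n = 0 := by simp [hc]
      have heq : ∀ k : ℕ, 1 ≤ k → ((1/(2*(k:ℝ)):ℝ):ℂ) *
          ((a n * Complex.exp ((LL n : ℂ) * (-σ))) * ∫ t in (-(k:ℝ))..(k:ℝ), Complex.exp (c n * t))
          = a n * ((n:ℂ)+1) ^ (-(σ:ℂ)) := by
        intro k hk
        have hk' : (0:ℝ) < k := by exact_mod_cast hk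
        simp only [hc0, zero_mul, Complex.exp_zero, intervalIntegral.integral_const, smul_eq_mul,
          mul_one]
        rw [cpow_exp, Complex.real_smul]
        push_cast
        have h2k : ((k:ℂ)) ≠ 0 := by exact_mod_cast hk'.ne'
        field_simp
        ring
      refine Tendsto.congr' ?_ tendsto_const_nhds
      filter_upwards [eventually_ge_atTop 1] with k hk
      exact (heq k hk).symm
    · simp only [if_neg hnm]
      have hcne : c n ≠ 0 := by
        simp only [hc, ne_eq, mul_eq_zero, Complex.I_ne_zero, false_or, sub_eq_zero]
        intro hcon
        exact LL_inj hnm (by exact_mod_cast hcon.symm)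
      have habs1 : ∀ x : ℝ, ‖Complex.exp (c n * x)‖ = 1 := by
        intro x
        rw [Complex.norm_exp]
        have : (c n * x).re = 0 := by simp [hc]
        rw [this, Real.exp_zero]
      have hB : ∀ k : ℕ, ‖∫ t in (-(k:ℝ))..(k:ℝ), Complex.exp (c n * t)‖ ≤
          2 / ‖c n‖ := by
        intro k
        rw [integral_exp_mul_complex hcne, norm_div]
        apply div_le_div_of_nonneg_right ?_ (by positivity)
        calc ‖Complex.exp (c n * (k:ℝ)) - Complex.exp (c n * ((-k:ℝ):ℝ))‖
            ≤ ‖Complex.exp (c n * (k:ℝ))‖ +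
              ‖Complex.exp (c n * ((-k:ℝ):ℝ))‖ := by
              exact norm_sub_le
                (Complex.exp (c n * (k:ℝ))) (Complex.exp (c n * ((-k:ℝ):ℝ)))
          _ ≤ 2 := by rw [habs1, habs1]; norm_num
      have hsq : Tendsto (fun k : ℕ => (1/(2*(k:ℝ))) *
          (‖a n * Complex.exp ((LL n : ℂ) * (-σ))‖ * (2 / ‖c n‖)))
          atTop (nhds 0) := by
        rw [show (0:ℝ) = 0 * (‖a n * Complex.exp ((LL n : ℂ) * (-σ))‖ *
            (2 / ‖c n‖)) by ring]
        apply Tendsto.mul_const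
        have : (fun k : ℕ => 1/(2*(k:ℝ))) = fun k : ℕ => (1/2) * (1/(k:ℝ)) := by
          funext k; rw [one_div, mul_inv, one_div]; ring
        rw [this, show (0:ℝ) = (1/2)*0 by ring]
        exact tendsto_one_div_atTop_nhds_zero_nat.const_mul _
      apply squeeze_zero_norm' ?_ hsq
      filter_upwards [eventually_ge_atTop 1] with k hk
      have hk' : (0:ℝ) < k := by exact_mod_cast hk
      rw [norm_mul, norm_mul, Complex.norm_real, Real.norm_eq_abs,
        abs_of_nonneg (by positivity)]
      gcongr
      exact hB k
  have := tendsto_finset_sum (Finset.range N) hlim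
  rwa [Finset.sum_ite_eq' (Finset.range N) m, if_pos (Finset.mem_range.2 hm)] at this


lemma mnat_lower (σ : ℝ) (hσ : 0 < σ) (m : ℕ) (hm : m < N) :
    ‖a m‖ * ((m:ℝ)+1) ^ (-σ) ≤ Mnat N a σ := by
  have h1 : Tendsto (fun k : ℕ => ‖((1/(2*(k:ℝ)):ℝ):ℂ) *
      ∫ t in (-(k:ℝ))..(k:ℝ), QQ N a σ t * ((m:ℂ)+1) ^ ((t:ℂ)*Complex.I)‖)
      atTop (nhds ‖a m * ((m:ℂ)+1) ^ (-(σ:ℂ))‖) :=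
    (key_lim N a σ m hm).norm
  have habs : ‖a m * ((m:ℂ)+1) ^ (-(σ:ℂ))‖
      = ‖a m‖ * ((m:ℝ)+1) ^ (-σ) := by
    rw [norm_mul, abs_cpow]
    simp
  rw [habs] at h1
  have h2 : ∀ k : ℕ, 1 ≤ k → ‖((1/(2*(k:ℝ)):ℝ):ℂ) *
      ∫ t in (-(k:ℝ))..(k:ℝ), QQ N a σ t * ((m:ℂ)+1) ^ ((t:ℂ)*Complex.I)‖
      ≤ (1/(2*(k:ℝ))) * GG N a σ k := by
    intro k hk
    have hk' : (0:ℝ) < k := by exact_mod_cast hk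
    rw [norm_mul, Complex.norm_real, Real.norm_eq_abs, abs_of_nonneg (by positivity)]
    apply mul_le_mul_of_nonneg_left ?_ (by positivity)
    have hnorm : ‖∫ t in (-(k:ℝ))..(k:ℝ),
        QQ N a σ t * ((m:ℂ)+1) ^ ((t:ℂ)*Complex.I)‖
        ≤ ∫ t in (-(k:ℝ))..(k:ℝ), ‖QQ N a σ t * ((m:ℂ)+1) ^ ((t:ℂ)*Complex.I)‖ := by
      exact intervalIntegral.norm_integral_le_integral_norm (by linarith)
    apply hnorm.trans
    apply le_of_eq
    apply intervalIntegral.integral_congr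
    intro t _
    show ‖QQ N a σ t * ((m:ℂ)+1) ^ ((t:ℂ)*Complex.I)‖ = ‖QQ N a σ t‖
    rw [norm_mul, abs_cpow]
    have hre : (((t:ℂ))*Complex.I).re = 0 := by simp
    rw [hre, Real.rpow_zero, mul_one]
  have hlimu : limsup (fun k : ℕ => ‖((1/(2*(k:ℝ)):ℝ):ℂ) *
      ∫ t in (-(k:ℝ))..(k:ℝ), QQ N a σ t * ((m:ℂ)+1) ^ ((t:ℂ)*Complex.I)‖) atTop
      = ‖a m‖ * ((m:ℝ)+1) ^ (-σ) := h1.limsup_eq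
  rw [← hlimu]
  apply limsup_le_limsup ?_ ?_ (mnat_bdd N a σ hσ)
  · filter_upwards [eventually_ge_atTop 1] with k hk
    exact h2 k hk
  · apply IsBoundedUnder.isCoboundedUnder_le (⟨0, ?_⟩ : IsBoundedUnder (· ≥ ·) atTop _)
    rw [eventually_map]
    filter_upwards with k using norm_nonneg _

lemma mnat_eq (σ : ℝ) (hσ : 0 < σ) :
    limsup (fun T : ℝ => (1/(2*T)) * GG N a σ T) atTop = Mnat N a σ :=
  limsup_real_eq_nat (GG N a σ) (gmono N a σ) (gnonneg N a σ) (CC N a) (CC_nonneg N a)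
    (gbd N a σ hσ)

end DirichletAux
/-- Pointwise bound for Dirichlet polynomials: `|P(s)| ≤ ‖P‖_{A_μ¹} · ∑_{n≥1} n^{-Re s}/w_h(n)`
for `Re s > 1`. -/
theorem dirichlet_polynomial_pointwise_bound
    (h : ℝ → ℝ)
    (hh_pos : ∀ σ ∈ Set.Ioi (0:ℝ), 0 < h σ)
    (hh_cont : ContinuousOn h (Set.Ioi 0))
    (hh_int : ∫ σ in Set.Ioi (0:ℝ), h σ = 1)
    (w : ℕ → ℝ)
    (hw : ∀ n : ℕ, w n = ∫ σ in Set.Ioi (0:ℝ), ((n:ℝ)+1) ^ (-(2:ℝ)*σ) * h σ)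
    (N : ℕ) (a : ℕ → ℂ) (P : ℂ → ℂ)
    (hP : ∀ s : ℂ, P s = ∑ n ∈ Finset.range N, a n * ((n:ℂ)+1) ^ (-s))
    (s : ℂ) (hs : 1 < s.re) :
    ‖P s‖ ≤
      (∫ σ in Set.Ioi (0:ℝ),
        (limsup (fun T : ℝ =>
          (1/(2*T)) * ∫ t in (-T)..T, ‖P ((σ:ℂ) + t * Complex.I)‖) atTop) * h σ)
      * ∑' n : ℕ, ((n:ℝ)+1) ^ (-s.re) / w n := by
  classical
  have hPQ : ∀ (σ t : ℝ), P ((σ:ℂ) + (t:ℂ) * Complex.I) = DirichletAux.QQ N a σ t :=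
    fun σ t => hP _
  -- h is integrable
  have hh_integrable : IntegrableOn h (Set.Ioi 0) := by
    by_contra hcon
    rw [integral_undef hcon] at hh_int
    norm_num at hh_int
  have hh_meas : AEStronglyMeasurable h (volume.restrict (Set.Ioi (0:ℝ))) :=
    hh_cont.aestronglyMeasurable measurableSet_Ioi
  -- weight integrand integrable
  have hw_integrable : ∀ m : ℕ,
      IntegrableOn (fun σ => ((m:ℝ)+1) ^ (-(2:ℝ)*σ) * h σ) (Set.Ioi 0) := by
    intro m
    apply Integrable.mono' hh_integrable
    · apply AEStronglyMeasurable.mul ?_ hh_meas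
      apply Continuous.aestronglyMeasurable
      exact Continuous.rpow continuous_const (continuous_const.mul continuous_id)
        (fun x => Or.inl (by positivity))
    · filter_upwards [ae_restrict_mem measurableSet_Ioi] with σ hσ
      have h1 : ((m:ℝ)+1) ^ (-(2:ℝ)*σ) ≤ 1 := by
        apply Real.rpow_le_one_of_one_le_of_nonpos
        · linarith [Nat.cast_nonneg (α := ℝ) m]
        · simp only [Set.mem_Ioi] at hσ; nlinarith
      have h2 : (0:ℝ) < ((m:ℝ)+1) ^ (-(2:ℝ)*σ) := by positivity
      rw [Real.norm_eq_abs, abs_of_nonneg (mul_nonneg h2.le (hh_pos σ hσ).le)]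
      calc ((m:ℝ)+1) ^ (-(2:ℝ)*σ) * h σ ≤ 1 * h σ :=
          mul_le_mul_of_nonneg_right h1 (hh_pos σ hσ).le
        _ = h σ := one_mul _
  -- positivity of the weights
  have hw_pos : ∀ m : ℕ, 0 < w m := by
    intro m
    have hnn : 0 ≤ᵐ[volume.restrict (Set.Ioi (0:ℝ))] fun σ => ((m:ℝ)+1) ^ (-(2:ℝ)*σ) * h σ := by
      filter_upwards [ae_restrict_mem measurableSet_Ioi] with σ hσ
      have : (0:ℝ) < ((m:ℝ)+1) ^ (-(2:ℝ)*σ) := by positivity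
      exact mul_nonneg this.le (hh_pos σ hσ).le
    rw [hw m, setIntegral_pos_iff_support_of_nonneg_ae hnn (hw_integrable m)]
    have hsub : Set.Ioi (0:ℝ) ⊆
        (Function.support fun σ => ((m:ℝ)+1) ^ (-(2:ℝ)*σ) * h σ) ∩ Set.Ioi 0 := by
      intro σ hσ
      refine ⟨?_, hσ⟩
      have h1 : (0:ℝ) < ((m:ℝ)+1) ^ (-(2:ℝ)*σ) := by positivity
      exact (mul_pos h1 (hh_pos σ hσ)).ne'
    have hmm := measure_mono (μ := volume) hsub
    rw [Real.volume_Ioi] at hmm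
    exact lt_of_lt_of_le (by simp) hmm
  -- integrability of Mnat * h
  have hMh_integrable : IntegrableOn (fun σ => DirichletAux.Mnat N a σ * h σ) (Set.Ioi 0) := by
    apply Integrable.mono' (hh_integrable.const_mul (DirichletAux.CC N a))
    · exact ((DirichletAux.mnat_measurable N a).aemeasurable.aestronglyMeasurable).mul hh_meas
    · filter_upwards [ae_restrict_mem measurableSet_Ioi] with σ hσ
      simp only [Set.mem_Ioi] at hσ
      rw [Real.norm_eq_abs, abs_of_nonneg (mul_nonneg (DirichletAux.mnat_nonneg N a σ hσ)
        (hh_pos σ (Set.mem_Ioi.2 hσ)).le)]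
      exact mul_le_mul_of_nonneg_right (DirichletAux.mnat_le N a σ hσ)
        (hh_pos σ (Set.mem_Ioi.2 hσ)).le
  have hI_nonneg : 0 ≤ ∫ σ in Set.Ioi (0:ℝ), DirichletAux.Mnat N a σ * h σ := by
    apply setIntegral_nonneg measurableSet_Ioi
    intro σ hσ
    exact mul_nonneg (DirichletAux.mnat_nonneg N a σ hσ) (hh_pos σ hσ).le
  -- coefficient bound
  have hcoef : ∀ m : ℕ, m < N →
      ‖a m‖ * w m ≤ ∫ σ in Set.Ioi (0:ℝ), DirichletAux.Mnat N a σ * h σ := by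
    intro m hm
    have key : ∀ σ ∈ Set.Ioi (0:ℝ),
        ‖a m‖ * (((m:ℝ)+1) ^ (-(2:ℝ)*σ) * h σ) ≤ DirichletAux.Mnat N a σ * h σ := by
      intro σ hσ
      simp only [Set.mem_Ioi] at hσ
      have h1 : ((m:ℝ)+1) ^ (-(2:ℝ)*σ) ≤ ((m:ℝ)+1) ^ (-σ) := by
        apply Real.rpow_le_rpow_of_exponent_le
        · linarith [Nat.cast_nonneg (α := ℝ) m]
        · nlinarith
      have h2 : ‖a m‖ * ((m:ℝ)+1) ^ (-(2:ℝ)*σ) ≤ DirichletAux.Mnat N a σ := by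
        calc ‖a m‖ * ((m:ℝ)+1) ^ (-(2:ℝ)*σ)
            ≤ ‖a m‖ * ((m:ℝ)+1) ^ (-σ) :=
              mul_le_mul_of_nonneg_left h1 (norm_nonneg _)
          _ ≤ DirichletAux.Mnat N a σ := DirichletAux.mnat_lower N a σ hσ m hm
      calc ‖a m‖ * (((m:ℝ)+1) ^ (-(2:ℝ)*σ) * h σ)
          = (‖a m‖ * ((m:ℝ)+1) ^ (-(2:ℝ)*σ)) * h σ := by ring
        _ ≤ DirichletAux.Mnat N a σ * h σ :=
            mul_le_mul_of_nonneg_right h2 (hh_pos σ (Set.mem_Ioi.2 hσ)).le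
    calc ‖a m‖ * w m
        = ∫ σ in Set.Ioi (0:ℝ), ‖a m‖ * (((m:ℝ)+1) ^ (-(2:ℝ)*σ) * h σ) := by
          rw [hw m, integral_const_mul]
      _ ≤ _ := setIntegral_mono_on ((hw_integrable m).const_mul _) hMh_integrable
            measurableSet_Ioi key
  -- summability
  set ε : ℝ := (s.re - 1)/4 with hε_def
  have hε : 0 < ε := by rw [hε_def]; linarith
  have hIoc_sub : Set.Ioc (0:ℝ) ε ⊆ Set.Ioi 0 := Set.Ioc_subset_Ioi_self
  have hc_int : IntegrableOn h (Set.Ioc 0 ε) := hh_integrable.mono_set hIoc_sub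
  have hc_pos : 0 < ∫ σ in Set.Ioc (0:ℝ) ε, h σ := by
    have hnn : 0 ≤ᵐ[volume.restrict (Set.Ioc (0:ℝ) ε)] h := by
      filter_upwards [ae_restrict_mem measurableSet_Ioc] with σ hσ
      exact (hh_pos σ (hIoc_sub hσ)).le
    rw [setIntegral_pos_iff_support_of_nonneg_ae hnn hc_int]
    have hsub : Set.Ioc (0:ℝ) ε ⊆ Function.support h ∩ Set.Ioc 0 ε := by
      intro σ hσ
      exact ⟨(hh_pos σ (hIoc_sub hσ)).ne', hσ⟩
    have hmm2 := measure_mono (μ := volume) hsub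
    rw [Real.volume_Ioc] at hmm2
    exact lt_of_lt_of_le (by rw [ENNReal.ofReal_pos]; linarith) hmm2
  set c : ℝ := ∫ σ in Set.Ioc (0:ℝ) ε, h σ with hc_def
  have hwlow : ∀ n : ℕ, c * ((n:ℝ)+1) ^ (-(2:ℝ)*ε) ≤ w n := by
    intro n
    have hstep1 : (∫ σ in Set.Ioc (0:ℝ) ε, ((n:ℝ)+1) ^ (-(2:ℝ)*ε) * h σ)
        = ((n:ℝ)+1) ^ (-(2:ℝ)*ε) * c := by
      rw [hc_def, integral_const_mul]
    have hstep2 : (∫ σ in Set.Ioc (0:ℝ) ε, ((n:ℝ)+1) ^ (-(2:ℝ)*ε) * h σ)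
        ≤ ∫ σ in Set.Ioc (0:ℝ) ε, ((n:ℝ)+1) ^ (-(2:ℝ)*σ) * h σ := by
      apply setIntegral_mono_on (hc_int.const_mul _)
        ((hw_integrable n).mono_set hIoc_sub) measurableSet_Ioc
      intro σ hσ
      have h1 : ((n:ℝ)+1) ^ (-(2:ℝ)*ε) ≤ ((n:ℝ)+1) ^ (-(2:ℝ)*σ) := by
        apply Real.rpow_le_rpow_of_exponent_le
        · linarith [Nat.cast_nonneg (α := ℝ) n]
        · nlinarith [hσ.2]
      exact mul_le_mul_of_nonneg_right h1 (hh_pos σ (hIoc_sub hσ)).le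
    have hstep3 : (∫ σ in Set.Ioc (0:ℝ) ε, ((n:ℝ)+1) ^ (-(2:ℝ)*σ) * h σ)
        ≤ ∫ σ in Set.Ioi (0:ℝ), ((n:ℝ)+1) ^ (-(2:ℝ)*σ) * h σ := by
      apply setIntegral_mono_set (hw_integrable n)
      · filter_upwards [ae_restrict_mem measurableSet_Ioi] with σ hσ
        have : (0:ℝ) < ((n:ℝ)+1) ^ (-(2:ℝ)*σ) := by positivity
        exact mul_nonneg this.le (hh_pos σ hσ).le
      · exact HasSubset.Subset.eventuallyLE hIoc_sub
    rw [hw n, mul_comm]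
    rw [← hstep1]
    exact hstep2.trans hstep3
  set q : ℝ := s.re - 2*ε with hq_def
  have hq : 1 < q := by rw [hq_def, hε_def]; linarith
  have hterm_le : ∀ n : ℕ, ((n:ℝ)+1) ^ (-s.re) / w n ≤ (1/c) * ((n:ℝ)+1) ^ (-q) := by
    intro n
    have hb_pos : 0 < c * ((n:ℝ)+1) ^ (-(2:ℝ)*ε) := by positivity
    have h1 : ((n:ℝ)+1) ^ (-s.re) / w n ≤ ((n:ℝ)+1) ^ (-s.re) / (c * ((n:ℝ)+1) ^ (-(2:ℝ)*ε)) :=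
      div_le_div_of_nonneg_left (by positivity) hb_pos (hwlow n)
    have h2 : ((n:ℝ)+1) ^ (-s.re) / (c * ((n:ℝ)+1) ^ (-(2:ℝ)*ε))
        = (1/c) * ((n:ℝ)+1) ^ (-q) := by
      have hx : (0:ℝ) < (n:ℝ)+1 := by positivity
      have : ((n:ℝ)+1) ^ (-q) = ((n:ℝ)+1) ^ (-s.re) / ((n:ℝ)+1) ^ (-(2:ℝ)*ε) := by
        rw [← Real.rpow_sub hx]
        congr 1
        rw [hq_def]; ring
      rw [this]
      field_simp
    rw [h2] at h1
    exact h1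
  have hsummable : Summable (fun n : ℕ => ((n:ℝ)+1) ^ (-s.re) / w n) := by
    have h0 : Summable (fun n : ℕ => ((n:ℝ)) ^ (-q)) := by
      rw [Real.summable_nat_rpow]
      linarith
    have h1 : Summable (fun n : ℕ => ((n:ℝ)+1) ^ (-q)) := by
      have := (summable_nat_add_iff 1).2 h0
      apply this.congr
      intro n
      push_cast
      ring_nf
    have h2 : Summable (fun n : ℕ => (1/c) * ((n:ℝ)+1) ^ (-q)) := h1.mul_left _
    apply Summable.of_nonneg_of_le ?_ hterm_le h2
    intro n
    exact div_nonneg (by positivity) (hw_pos n).le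
  have hterm_nonneg : ∀ n : ℕ, 0 ≤ ((n:ℝ)+1) ^ (-s.re) / w n := fun n =>
    div_nonneg (by positivity) (hw_pos n).le
  -- final computation
  have hPs : ‖P s‖ ≤
      ∑ m ∈ Finset.range N, ‖a m‖ * ((m:ℝ)+1) ^ (-s.re) := by
    rw [hP s]
    calc ‖∑ n ∈ Finset.range N, a n * ((n:ℂ)+1) ^ (-s)‖
        ≤ ∑ n ∈ Finset.range N, ‖a n * ((n:ℂ)+1) ^ (-s)‖ :=
          norm_sum_le _ _
      _ = ∑ m ∈ Finset.range N, ‖a m‖ * ((m:ℝ)+1) ^ (-s.re) := by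
          refine Finset.sum_congr rfl fun n _ => ?_
          rw [norm_mul, DirichletAux.abs_cpow, Complex.neg_re]
  have hmain : ‖P s‖ ≤ (∫ σ in Set.Ioi (0:ℝ), DirichletAux.Mnat N a σ * h σ)
      * ∑' n : ℕ, ((n:ℝ)+1) ^ (-s.re) / w n := by
    set I : ℝ := ∫ σ in Set.Ioi (0:ℝ), DirichletAux.Mnat N a σ * h σ
    calc ‖P s‖ ≤ ∑ m ∈ Finset.range N, ‖a m‖ * ((m:ℝ)+1) ^ (-s.re) := hPs
      _ ≤ ∑ m ∈ Finset.range N, I * (((m:ℝ)+1) ^ (-s.re) / w m) := by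
          apply Finset.sum_le_sum
          intro m hm
          have h1 : ‖a m‖ ≤ I / w m := by
            rw [le_div_iff₀ (hw_pos m)]
            exact hcoef m (Finset.mem_range.1 hm)
          calc ‖a m‖ * ((m:ℝ)+1) ^ (-s.re)
              ≤ (I / w m) * ((m:ℝ)+1) ^ (-s.re) :=
                mul_le_mul_of_nonneg_right h1 (by positivity)
            _ = I * (((m:ℝ)+1) ^ (-s.re) / w m) := by ring
      _ = I * ∑ m ∈ Finset.range N, ((m:ℝ)+1) ^ (-s.re) / w m := by rw [Finset.mul_sum]
      _ ≤ I * ∑' n : ℕ, ((n:ℝ)+1) ^ (-s.re) / w n := by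
          apply mul_le_mul_of_nonneg_left ?_ hI_nonneg
          exact Summable.sum_le_tsum (Finset.range N) (fun n _ => hterm_nonneg n) hsummable
  -- identify the integral in the statement
  have hIeq : (∫ σ in Set.Ioi (0:ℝ),
      (limsup (fun T : ℝ =>
        (1/(2*T)) * ∫ t in (-T)..T, ‖P ((σ:ℂ) + t * Complex.I)‖) atTop) * h σ)
      = ∫ σ in Set.Ioi (0:ℝ), DirichletAux.Mnat N a σ * h σ := by
    apply setIntegral_congr_fun measurableSet_Ioi
    intro σ hσ
    simp only [Set.mem_Ioi] at hσ
    dsimp only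
    have hfun : (fun T : ℝ => (1/(2*T)) * ∫ t in (-T)..T,
        ‖P ((σ:ℂ) + t * Complex.I)‖)
        = fun T : ℝ => (1/(2*T)) * DirichletAux.GG N a σ T := by
      funext T
      congr 1
      apply intervalIntegral.integral_congr
      intro t _
      simp only [hPQ σ t]
    rw [hfun, DirichletAux.mnat_eq N a σ hσ]
  rw [hIeq]
  exact hmain
end

section
/- Let c₀ ≥ 1 be an integer and let φ(s) = ∑_{n≥1} c_n n^{-s} be a Dirichlet series converging uniformly on ℂ_ε for every ε > 0, such that Re φ(s) ≥ 0 for all s ∈ ℂ₊. Set Φ(s) = c₀ s + φ(s). If Φ is not a vertical translation (i.e., there is no τ ∈ ℝ with Φ(s) = s + iτ for all s ∈ ℂ₊), then for every ε > 0 there exists η > 0 such that Φ(ℂ_ε) ⊆ ℂ_{ε+η}. -/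
open Filter Topology Metric

/-- Harnack-type inequality via the Schwarz lemma: if `f` is holomorphic on a ball with
`Re f ≥ 0`, then `|Re f z - Re f z₀| ≤ (dist z z₀ / R) * (Re f z + Re f z₀)`. -/
lemma harnack_abs {f : ℂ → ℂ} {z₀ z : ℂ} {R : ℝ}
    (hd : DifferentiableOn ℂ f (ball z₀ R))
    (hpos : ∀ w ∈ ball z₀ R, 0 ≤ (f w).re)
    (hz : z ∈ ball z₀ R) :
    |(f z).re - (f z₀).re| ≤ (dist z z₀ / R) * ((f z).re + (f z₀).re) := by
  have hdist : dist z z₀ < R := mem_ball.mp hz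
  have hR : 0 < R := lt_of_le_of_lt dist_nonneg hdist
  set ρ : ℝ := dist z z₀ / R with hρdef
  have hρ0 : 0 ≤ ρ := div_nonneg dist_nonneg hR.le
  have hρ1 : ρ < 1 := (div_lt_one hR).mpr hdist
  have hz₀ : z₀ ∈ ball z₀ R := mem_ball_self hR
  -- main step, with a positive shift μ
  have key : ∀ μ : ℝ, 0 < μ →
      |(f z).re - (f z₀).re| ≤ ρ * ((f z).re + (f z₀).re) + 2 * ρ * μ := by
    intro μ hμ
    set g : ℂ → ℂ := fun w => f w + μ with hgdef
    have hgre : ∀ w ∈ ball z₀ R, 0 < (g w).re := by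
      intro w hw
      have := hpos w hw
      simp only [hgdef, Complex.add_re, Complex.ofReal_re]
      linarith
    have hgd : DifferentiableOn ℂ g (ball z₀ R) := hd.add_const _
    set a : ℂ := g z₀ with hadef
    have hpa : 0 < a.re := hgre z₀ hz₀
    have hden : ∀ w ∈ ball z₀ R, g w + (starRingEnd ℂ) a ≠ 0 := by
      intro w hw h0
      have : (g w + (starRingEnd ℂ) a).re = (g w).re + a.re := by
        simp [Complex.add_re, Complex.conj_re]
      rw [h0] at this
      simp only [Complex.zero_re] at this
      have := hgre w hw
      linarith
    set h : ℂ → ℂ := fun w => (g w - a) / (g w + (starRingEnd ℂ) a) with hhdef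
    have hh0 : h z₀ = 0 := by simp [hhdef, hadef]
    have hhd : DifferentiableOn ℂ h (ball z₀ R) :=
      (hgd.sub_const a).div (hgd.add_const _) hden
    have hlt : ∀ w ∈ ball z₀ R,
        ‖g w - a‖ < ‖g w + (starRingEnd ℂ) a‖ := by
      intro w hw
      have h1 : Complex.normSq (g w - a) < Complex.normSq (g w + (starRingEnd ℂ) a) := by
        have hx := hgre w hw
        simp only [Complex.normSq_apply, Complex.sub_re, Complex.sub_im, Complex.add_re,
          Complex.add_im, Complex.conj_re, Complex.conj_im]
        nlinarith [hgre w hw, hpa]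
      have := Real.sqrt_lt_sqrt (Complex.normSq_nonneg _) h1
      simpa [Complex.norm_def] using this
    have hmaps : Set.MapsTo h (ball z₀ R) (ball (h z₀) 1) := by
      intro w hw
      rw [hh0, mem_ball, dist_zero_right]
      have hdpos : 0 < ‖g w + (starRingEnd ℂ) a‖ :=
        lt_of_le_of_lt (norm_nonneg _) (hlt w hw)
      rw [hhdef]
      simp only [norm_div]
      exact (div_lt_one hdpos).mpr (hlt w hw)
    have hschwarz := Complex.dist_le_div_mul_dist_of_mapsTo_ball hhd (hmaps.mono_right ball_subset_closedBall) hz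
    rw [hh0, dist_zero_right] at hschwarz
    -- |g z - a| ≤ ρ * |g z + conj a|
    have habs : ‖g z - a‖ ≤ ρ * ‖g z + (starRingEnd ℂ) a‖ := by
      have hdpos : 0 < ‖g z + (starRingEnd ℂ) a‖ :=
        lt_of_le_of_lt (norm_nonneg _) (hlt z hz)
      have : ‖g z - a‖ / ‖g z + (starRingEnd ℂ) a‖ ≤ ρ := by
        have : ‖h z‖ ≤ 1 / R * dist z z₀ := hschwarz
        simpa [hhdef, norm_div, hρdef, one_div,
          div_eq_inv_mul, mul_comm] using this
      calc ‖g z - a‖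
          = ‖g z - a‖ / ‖g z + (starRingEnd ℂ) a‖ *
            ‖g z + (starRingEnd ℂ) a‖ := by field_simp
        _ ≤ ρ * ‖g z + (starRingEnd ℂ) a‖ :=
            mul_le_mul_of_nonneg_right this hdpos.le
    -- square and compare real parts
    have hsq : Complex.normSq (g z - a) ≤ ρ ^ 2 * Complex.normSq (g z + (starRingEnd ℂ) a) := by
      have h1 : ‖g z - a‖ ^ 2 ≤ (ρ * ‖g z + (starRingEnd ℂ) a‖) ^ 2 := by
        apply sq_le_sq' _ habs
        have : 0 ≤ ρ * ‖g z + (starRingEnd ℂ) a‖ :=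
          mul_nonneg hρ0 (norm_nonneg _)
        linarith [norm_nonneg (g z - a)]
      calc Complex.normSq (g z - a) = ‖g z - a‖ ^ 2 := (Complex.sq_norm _).symm
        _ ≤ (ρ * ‖g z + (starRingEnd ℂ) a‖) ^ 2 := h1
        _ = ρ ^ 2 * Complex.normSq (g z + (starRingEnd ℂ) a) := by
            rw [mul_pow, Complex.sq_norm]
    obtain ⟨x, hxdef⟩ : ∃ x, (g z).re = x := ⟨_, rfl⟩
    obtain ⟨p, hpdef⟩ : ∃ p, a.re = p := ⟨_, rfl⟩
    have hpa' : 0 < p := hpdef ▸ hpa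
    have hxp : 0 ≤ x := hxdef ▸ (hgre z hz).le
    have hineq : |x - p| ≤ ρ * (x + p) := by
      have hexp : (x - p) ^ 2 + ((g z).im - a.im) ^ 2 ≤
          ρ ^ 2 * ((x + p) ^ 2 + ((g z).im - a.im) ^ 2) := by
        have h := hsq
        simp only [Complex.normSq_apply, Complex.sub_re, Complex.sub_im, Complex.add_re,
          Complex.add_im, Complex.conj_re, Complex.conj_im] at h
        rw [hxdef, hpdef] at h
        nlinarith [h]
      have hρsq : ρ ^ 2 ≤ 1 := by nlinarith
      have h2 : (x - p) ^ 2 ≤ (ρ * (x + p)) ^ 2 := by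
        nlinarith [mul_nonneg (sub_nonneg.mpr hρsq) (sq_nonneg ((g z).im - a.im))]
      have h3 : 0 ≤ ρ * (x + p) := mul_nonneg hρ0 (by linarith [hpa'])
      have h4 := Real.sqrt_le_sqrt h2
      rwa [Real.sqrt_sq_eq_abs, Real.sqrt_sq h3] at h4
    have hx : x = (f z).re + μ := by rw [← hxdef]; simp [hgdef]
    have hp : p = (f z₀).re + μ := by rw [← hpdef]; simp [hadef, hgdef]
    rw [hx, hp] at hineq
    have : |(f z).re - (f z₀).re| ≤ ρ * ((f z).re + (f z₀).re + 2 * μ) := by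
      convert hineq using 2 <;> ring
    linarith [this, hρ0, hμ]
  -- let μ → 0
  apply le_of_forall_pos_le_add
  intro ε hε
  rcases eq_or_lt_of_le hρ0 with hρz | hρp
  · have h0 := key 1 one_pos
    rw [← hρz] at h0 ⊢
    nlinarith [h0, hε]
  · have := key (ε / (2 * ρ)) (by positivity)
    calc |(f z).re - (f z₀).re| ≤ ρ * ((f z).re + (f z₀).re) + 2 * ρ * (ε / (2 * ρ)) := this
      _ = ρ * ((f z).re + (f z₀).re) + ε := by field_simp

lemma telescope_bound : ∀ N : ℕ, ∑ n ∈ Finset.Ico 1 N, (((n:ℝ)+1)^2)⁻¹ ≤ (1:ℝ) := by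
  have key : ∀ N : ℕ, ∑ n ∈ Finset.Ico 1 N, (((n:ℝ)+1)^2)⁻¹ ≤ 1 - 1/(N:ℝ) := by
    intro N
    induction N with
    | zero => simp
    | succ N ih =>
      rcases Nat.eq_zero_or_pos N with rfl | hN
      · simp
      · rw [Finset.sum_Ico_succ_top hN]
        have hN' : (0:ℝ) < (N:ℝ) := by exact_mod_cast hN
        have h1 : (((N:ℝ)+1)^2)⁻¹ ≤ 1/(N:ℝ) - 1/((N:ℝ)+1) := by
          rw [div_sub_div _ _ (ne_of_gt hN') (by positivity), inv_eq_one_div,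
            div_le_div_iff₀ (by positivity) (by positivity)]
          nlinarith
        have h2 : ((N+1:ℕ):ℝ) = (N:ℝ)+1 := by push_cast; ring
        rw [h2]
        linarith
  intro N
  have h1 := key N
  have h2 : (0:ℝ) ≤ 1/(N:ℝ) := by positivity
  linarith

lemma tail_bound (c : ℕ → ℂ) (φ : ℂ → ℂ)
    (hφ : TendstoUniformlyOn
      (fun N s => ∑ n ∈ Finset.range N, c n * ((n:ℂ)+1) ^ (-s)) φ atTop
      {s : ℂ | 1 < s.re}) :
    ∃ K : ℝ, 0 ≤ K ∧ ∀ s : ℂ, 4 ≤ s.re →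
      ‖φ s - c 0‖ ≤ K * (2:ℝ) ^ (-s.re) := by
  set S : ℕ → ℂ → ℂ := fun N s => ∑ n ∈ Finset.range N, c n * ((n:ℂ)+1) ^ (-s) with hS
  have h2mem : (2:ℂ) ∈ {s : ℂ | 1 < s.re} := by norm_num
  have hpt : Tendsto (fun N => S N 2) atTop (𝓝 (φ 2)) := hφ.tendsto_at h2mem
  have hdiff : Tendsto (fun N => ‖S (N+1) 2 - S N 2‖) atTop (𝓝 0) := by
    have h := (hpt.comp (tendsto_add_atTop_nat 1)).sub hpt
    simp only [sub_self] at h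
    simpa using h.norm
  obtain ⟨B, hB⟩ := hdiff.bddAbove_range
  have hBmem : ∀ N, ‖S (N+1) 2 - S N 2‖ ≤ B := fun N =>
    hB (Set.mem_range_self N)
  have hB0 : 0 ≤ B := le_trans (norm_nonneg _) (hBmem 0)
  have hstep : ∀ N : ℕ, S (N+1) 2 - S N 2 = c N * ((N:ℂ)+1) ^ (-(2:ℂ)) := by
    intro N; simp [hS, Finset.sum_range_succ]
  have hcabs : ∀ n : ℕ, ‖c n‖ ≤ B * ((n:ℝ)+1)^2 := by
    intro n
    have h1 := hBmem n
    rw [hstep n] at h1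
    have hpos : (0:ℝ) < (n:ℝ)+1 := by positivity
    have habs : ‖c n * ((n:ℂ)+1) ^ (-(2:ℂ))‖
        = ‖c n‖ * ((n:ℝ)+1) ^ (-(2:ℝ)) := by
      rw [norm_mul]
      congr 1
      have : ((n:ℂ)+1) = (((n:ℝ)+1 : ℝ) : ℂ) := by push_cast; ring
      rw [this, Complex.norm_cpow_eq_rpow_re_of_pos hpos]
      norm_num
    rw [habs] at h1
    have h2 : ((n:ℝ)+1) ^ (-(2:ℝ)) = (((n:ℝ)+1)^2)⁻¹ := by
      rw [Real.rpow_neg hpos.le]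
      norm_num [Real.rpow_natCast]
    have h3 : (0:ℝ) < ((n:ℝ)+1)^2 := by positivity
    calc ‖c n‖
        = ‖c n‖ * ((n:ℝ)+1) ^ (-(2:ℝ)) * ((n:ℝ)+1)^2 := by
          rw [h2]; field_simp
      _ ≤ B * ((n:ℝ)+1)^2 := mul_le_mul_of_nonneg_right h1 h3.le
  refine ⟨16 * B, by positivity, ?_⟩
  intro s hs
  have claim : ∀ N : ℕ, 1 ≤ N →
      ‖S N s - c 0‖ ≤ 16 * B * (2:ℝ) ^ (-s.re) := by
    intro N hN
    have hsplit : S N s = c 0 + ∑ n ∈ Finset.Ico 1 N, c n * ((n:ℂ)+1) ^ (-s) := by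
      rw [hS]
      simp only []
      rw [Finset.range_eq_Ico, ← Finset.sum_Ico_consecutive _ (Nat.zero_le 1) hN]
      congr 1
      rw [← Finset.range_eq_Ico, Finset.sum_range_one]
      simp [Complex.one_cpow]
    rw [hsplit]
    have termbound : ∀ n ∈ Finset.Ico 1 N,
        ‖c n * ((n:ℂ)+1) ^ (-s)‖
          ≤ 16 * B * (2:ℝ) ^ (-s.re) * (((n:ℝ)+1)^2)⁻¹ := by
      intro n hn
      obtain ⟨hn1, -⟩ := Finset.mem_Ico.mp hn
      have hn1' : (1:ℝ) ≤ (n:ℝ) := by exact_mod_cast hn1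
      have hpos : (0:ℝ) < (n:ℝ)+1 := by positivity
      have habs : ‖c n * ((n:ℂ)+1) ^ (-s)‖
          = ‖c n‖ * ((n:ℝ)+1) ^ (-s.re) := by
        rw [norm_mul]
        congr 1
        have : ((n:ℂ)+1) = (((n:ℝ)+1 : ℝ) : ℂ) := by push_cast; ring
        rw [this, Complex.norm_cpow_eq_rpow_re_of_pos hpos]
        norm_num
      rw [habs]
      have hrpow2 : ((n:ℝ)+1) ^ (-(2:ℝ)) = (((n:ℝ)+1)^2)⁻¹ := by
        rw [Real.rpow_neg hpos.le]
        norm_num [Real.rpow_natCast]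
      have e1 : ((n:ℝ)+1)^2 * ((n:ℝ)+1) ^ (-s.re)
          = ((n:ℝ)+1) ^ (4 - s.re) * (((n:ℝ)+1)^2)⁻¹ := by
        rw [← hrpow2, ← Real.rpow_add hpos,
          show ((n:ℝ)+1) ^ (2:ℕ) = ((n:ℝ)+1) ^ ((2:ℕ):ℝ) from (Real.rpow_natCast _ 2).symm,
          ← Real.rpow_add hpos]
        congr 1
        ring
      have e3 : ((n:ℝ)+1) ^ (4 - s.re) ≤ (2:ℝ) ^ (4 - s.re) := by
        have h2n : (2:ℝ) ≤ (n:ℝ)+1 := by linarith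
        have hmono := Real.rpow_le_rpow (by norm_num : (0:ℝ) ≤ 2) h2n
          (by linarith : (0:ℝ) ≤ s.re - 4)
        have hp1 : (0:ℝ) < (2:ℝ) ^ (s.re - 4) := Real.rpow_pos_of_pos (by norm_num) _
        rw [show (4 - s.re) = -(s.re - 4) by ring, Real.rpow_neg (by norm_num : (0:ℝ) ≤ 2),
          Real.rpow_neg hpos.le]
        exact inv_anti₀ hp1 hmono
      have e4 : (2:ℝ) ^ (4 - s.re) = 16 * (2:ℝ) ^ (-s.re) := by
        rw [show (4 - s.re) = 4 + (-s.re) by ring, Real.rpow_add (by norm_num : (0:ℝ) < 2),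
          show ((4:ℝ)) = ((4:ℕ):ℝ) by norm_num, Real.rpow_natCast]
        norm_num
      have hinv : (0:ℝ) ≤ (((n:ℝ)+1)^2)⁻¹ := by positivity
      calc ‖c n‖ * ((n:ℝ)+1) ^ (-s.re)
          ≤ B * ((n:ℝ)+1)^2 * ((n:ℝ)+1) ^ (-s.re) :=
            mul_le_mul_of_nonneg_right (hcabs n) (Real.rpow_nonneg hpos.le _)
        _ = B * (((n:ℝ)+1) ^ (4 - s.re) * (((n:ℝ)+1)^2)⁻¹) := by rw [mul_assoc, e1]
        _ ≤ B * ((2:ℝ) ^ (4 - s.re) * (((n:ℝ)+1)^2)⁻¹) := by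
            apply mul_le_mul_of_nonneg_left (mul_le_mul_of_nonneg_right e3 hinv) hB0
        _ = 16 * B * (2:ℝ) ^ (-s.re) * (((n:ℝ)+1)^2)⁻¹ := by rw [e4]; ring
    calc ‖c 0 + ∑ n ∈ Finset.Ico 1 N, c n * ((n:ℂ)+1) ^ (-s) - c 0‖
        = ‖∑ n ∈ Finset.Ico 1 N, c n * ((n:ℂ)+1) ^ (-s)‖ := by
          congr 1; ring
      _ ≤ ∑ n ∈ Finset.Ico 1 N, ‖c n * ((n:ℂ)+1) ^ (-s)‖ := by
          simpa using norm_sum_le (Finset.Ico 1 N) (fun n => c n * ((n:ℂ)+1) ^ (-s))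
      _ ≤ ∑ n ∈ Finset.Ico 1 N, 16 * B * (2:ℝ) ^ (-s.re) * (((n:ℝ)+1)^2)⁻¹ :=
          Finset.sum_le_sum termbound
      _ = 16 * B * (2:ℝ) ^ (-s.re) * ∑ n ∈ Finset.Ico 1 N, (((n:ℝ)+1)^2)⁻¹ := by
          rw [Finset.mul_sum]
      _ ≤ 16 * B * (2:ℝ) ^ (-s.re) * 1 := by
          apply mul_le_mul_of_nonneg_left (telescope_bound N)
          positivity
      _ = 16 * B * (2:ℝ) ^ (-s.re) := by ring
  -- pass to the limit
  have hsmem : s ∈ {s : ℂ | 1 < s.re} := by simp only [Set.mem_setOf_eq]; linarith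
  have hpt2 : Tendsto (fun N => S N s) atTop (𝓝 (φ s)) := hφ.tendsto_at hsmem
  have htend : Tendsto (fun N => ‖S N s - c 0‖) atTop
      (𝓝 (‖φ s - c 0‖)) := by
    have h1 : Tendsto (fun N => S N s - c 0) atTop (𝓝 (φ s - c 0)) :=
      hpt2.sub tendsto_const_nhds
    exact h1.norm
  exact le_of_tendsto htend (eventually_atTop.2 ⟨1, fun N hN => claim N hN⟩)

lemma phi_diffOn (c : ℕ → ℂ) (φ : ℂ → ℂ)
    (hφ : ∀ ε > (0:ℝ), TendstoUniformlyOn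
      (fun N s => ∑ n ∈ Finset.range N, c n * ((n:ℂ)+1) ^ (-s)) φ atTop
      {s : ℂ | ε < s.re}) :
    DifferentiableOn ℂ φ {s : ℂ | 0 < s.re} := by
  intro s hs
  have hs0 : (0:ℝ) < s.re := hs
  have hε : (0:ℝ) < s.re/2 := by linarith
  have hopen : IsOpen {z : ℂ | s.re/2 < z.re} :=
    isOpen_lt continuous_const Complex.continuous_re
  have hdiffN : ∀ N : ℕ, DifferentiableOn ℂ
      (fun z => ∑ n ∈ Finset.range N, c n * ((n:ℂ)+1) ^ (-z)) {z : ℂ | s.re/2 < z.re} := by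
    intro N
    apply Differentiable.differentiableOn
    apply Differentiable.fun_sum
    intro n _
    have hne : ((n:ℂ)+1) ≠ 0 := by
      intro h
      have : ((n:ℝ)+1 : ℂ) = 0 := by push_cast at h ⊢; exact h
      have := congrArg Complex.re this
      simp at this
      linarith [Nat.cast_nonneg (α := ℝ) n]
    exact (differentiable_id.neg.const_cpow (Or.inl hne)).const_mul (c n)
  have hd := ((hφ _ hε).tendstoLocallyUniformlyOn).differentiableOn
    (Eventually.of_forall hdiffN) hopen
  have hmem : s ∈ {z : ℂ | s.re/2 < z.re} := by
    simp only [Set.mem_setOf_eq]; linarith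
  exact (hd.differentiableAt (hopen.mem_nhds hmem)).differentiableWithinAt

/-- Balls to the right stay in the halfplane. -/
lemma ball_subset_halfplane {z₀ : ℂ} {R : ℝ} (h : R ≤ z₀.re) :
    ball z₀ R ⊆ {w : ℂ | 0 < w.re} := by
  intro w hw
  have h1 : |w.re - z₀.re| ≤ dist w z₀ := by
    rw [Complex.dist_eq, ← Complex.sub_re]
    exact Complex.abs_re_le_norm _
  have h2 := mem_ball.mp hw
  have := abs_lt.mp (lt_of_le_of_lt h1 h2)
  simp only [Set.mem_setOf_eq]
  linarith [this.1]

set_option maxHeartbeats 1600000 in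
/-- If a symbol `Φ = c₀ s + φ` with `c₀ ≥ 1` is not a vertical translation, then for every
`ε > 0` there exists `η > 0` such that `Φ(ℂ_ε) ⊆ ℂ_{ε+η}`. -/
theorem symbol_strict_halfplane_shift
    (c₀ : ℕ) (hc₀ : 1 ≤ c₀) (c : ℕ → ℂ) (φ Φ : ℂ → ℂ)
    (hφ : ∀ ε > (0:ℝ), TendstoUniformlyOn
      (fun N s => ∑ n ∈ Finset.range N, c n * ((n:ℂ)+1) ^ (-s)) φ atTop
      {s : ℂ | ε < s.re})
    (hφpos : ∀ s : ℂ, 0 < s.re → 0 ≤ (φ s).re)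
    (hΦ : ∀ s : ℂ, Φ s = (c₀ : ℂ) * s + φ s)
    (hnt : ¬ ∃ τ : ℝ, ∀ s : ℂ, 0 < s.re → Φ s = s + (τ : ℂ) * Complex.I) :
    ∀ ε > (0:ℝ), ∃ η > (0:ℝ), ∀ s : ℂ, ε < s.re → ε + η < (Φ s).re := by
  intro ε hε
  by_cases hc2 : 2 ≤ c₀
  · refine ⟨ε, hε, fun s hs => ?_⟩
    have hs0 : 0 < s.re := lt_trans hε hs
    have hp := hφpos s hs0
    rw [hΦ]
    have hre : ((c₀:ℂ) * s + φ s).re = (c₀:ℝ) * s.re + (φ s).re := by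
      simp [Complex.add_re, Complex.mul_re]
    rw [hre]
    have hcast : (2:ℝ) ≤ (c₀:ℝ) := by exact_mod_cast hc2
    nlinarith
  · have hc1 : c₀ = 1 := by omega
    have hdiff : DifferentiableOn ℂ φ {z : ℂ | 0 < z.re} := phi_diffOn c φ hφ
    obtain ⟨K, hK0, hKb⟩ := tail_bound c φ (hφ 1 one_pos)
    set δ : ℝ := (c 0).re with hδdef
    by_cases hδpos : 0 < δ
    · -- main case: positive limit at infinity
      obtain ⟨m, hm⟩ := exists_pow_lt_of_lt_one
        (show (0:ℝ) < δ/(2*(K+1)) by positivity) (by norm_num : (1/2:ℝ) < 1)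
      set M : ℝ := max (max 4 ε) m with hMdef
      have hM4 : (4:ℝ) ≤ M := le_trans (le_max_left _ _) (le_max_left _ _)
      have hMε : ε ≤ M := le_trans (le_max_right _ _) (le_max_left _ _)
      have hMm : (m:ℝ) ≤ M := le_max_right _ _
      have hMpos : (0:ℝ) < M := by linarith
      have hKM : K * (2:ℝ)^(-M) ≤ δ/2 := by
        have h1 : (2:ℝ)^(-M) ≤ (2:ℝ)^(-(m:ℝ)) :=
          Real.rpow_le_rpow_of_exponent_le one_le_two (by linarith)
        have h2 : (2:ℝ)^(-(m:ℝ)) = (1/2:ℝ)^m := by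
          rw [Real.rpow_neg (by norm_num : (0:ℝ) ≤ 2), Real.rpow_natCast, one_div, inv_pow]
        have h3 : K * (2:ℝ)^(-M) ≤ (K+1) * (1/2:ℝ)^m := by
          rw [← h2]
          apply mul_le_mul (by linarith) h1 (by positivity) (by linarith)
        have h4 : (K+1) * (1/2:ℝ)^m ≤ (K+1) * (δ/(2*(K+1))) :=
          mul_le_mul_of_nonneg_left hm.le (by positivity)
        have h5 : (K+1) * (δ/(2*(K+1))) = δ/2 := by field_simp
        linarith
      have hM1 : ∀ w : ℂ, M ≤ w.re → δ/2 ≤ (φ w).re := by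
        intro w hw
        have h1 := hKb w (le_trans hM4 hw)
        have h2 : δ - (φ w).re ≤ ‖φ w - c 0‖ := by
          have h3 := Complex.abs_re_le_norm (φ w - c 0)
          rw [Complex.sub_re] at h3
          have h4 := neg_abs_le ((φ w).re - (c 0).re)
          rw [hδdef]
          linarith [le_abs_self ((φ w).re - (c 0).re), abs_nonneg ((φ w).re - (c 0).re),
            neg_le_abs ((φ w).re - (c 0).re)]
        have h5 : (2:ℝ)^(-w.re) ≤ (2:ℝ)^(-M) :=
          Real.rpow_le_rpow_of_exponent_le one_le_two (neg_le_neg hw)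
        have h6 : K * (2:ℝ)^(-w.re) ≤ δ/2 :=
          le_trans (mul_le_mul_of_nonneg_left h5 hK0) hKM
        linarith
      refine ⟨δ*ε/(4*M), by positivity, ?_⟩
      intro s hs
      have hs0 : 0 < s.re := lt_trans hε hs
      have hu : δ*ε/(4*M) ≤ (φ s).re := by
        rcases le_or_gt M s.re with hcase | hcase
        · have h1 := hM1 s hcase
          have h2 : δ*ε/(4*M) ≤ δ/2 := by
            rw [div_le_div_iff₀ (by positivity) (by norm_num : (0:ℝ) < 2)]
            nlinarith
          linarith
        · set z₀ : ℂ := s + ((M - s.re : ℝ) : ℂ) with hz₀def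
          have hz₀re : z₀.re = M := by simp [hz₀def]
          have hball : ball z₀ M ⊆ {w : ℂ | 0 < w.re} :=
            ball_subset_halfplane (by rw [hz₀re])
          have hdist : dist s z₀ = M - s.re := by
            rw [Complex.dist_eq, hz₀def]
            have : s - (s + ((M - s.re : ℝ) : ℂ)) = -((M - s.re : ℝ) : ℂ) := by ring
            rw [this, norm_neg, Complex.norm_real, Real.norm_eq_abs, abs_of_nonneg (by linarith)]
          have hs_mem : s ∈ ball z₀ M := by
            rw [mem_ball, hdist]; linarith
          have hha := harnack_abs (hdiff.mono hball)
            (fun w hw => hφpos w (hball hw)) hs_mem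
          rw [hdist] at hha
          have hz₀u : δ/2 ≤ (φ z₀).re := hM1 z₀ (le_of_eq hz₀re.symm)
          have husp : 0 ≤ (φ s).re := hφpos s hs0
          have h4 : (φ z₀).re - (φ s).re ≤ ((M - s.re)/M) * ((φ s).re + (φ z₀).re) :=
            le_trans (by linarith [neg_abs_le ((φ s).re - (φ z₀).re)]) hha
          have h5 := mul_le_mul_of_nonneg_right h4 hMpos.le
          have h6 : ((M - s.re)/M) * ((φ s).re + (φ z₀).re) * M
              = (M - s.re) * ((φ s).re + (φ z₀).re) := by field_simp
          rw [h6] at h5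
          have h7 : (δ/2) * ε ≤ (φ z₀).re * s.re :=
            mul_le_mul hz₀u hs.le hε.le (by linarith)
          have h8 : (φ z₀).re * s.re ≤ (φ s).re * (2*M) := by
            nlinarith [mul_nonneg husp hs0.le]
          rw [div_le_iff₀ (by positivity : (0:ℝ) < 4*M)]
          nlinarith
      rw [hΦ, hc1]
      have hre : (((1:ℕ):ℂ) * s + φ s).re = s.re + (φ s).re := by
        simp [Complex.add_re]
      rw [hre]
      linarith
    · -- degenerate case: δ ≤ 0 forces φ constant, contradiction
      exfalso
      have hδ0 : δ ≤ 0 := not_lt.mp hδpos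
      have hu0 : ∀ s : ℂ, 0 < s.re → (φ s).re = 0 := by
        intro s hs0
        refine le_antisymm ?_ (hφpos s hs0)
        have key : ∀ n : ℕ, (4:ℝ) ≤ (n:ℝ) →
            (φ s).re ≤ 2*K/s.re * ((s.re + n) * (2:ℝ)^(-(s.re + n))) := by
          intro n hn4
          set z₀ : ℂ := s + ((n:ℝ) : ℂ) with hz₀def
          have hz₀re : z₀.re = s.re + n := by simp [hz₀def]
          have hR : (0:ℝ) < s.re + n := by linarith
          have hball : ball z₀ (s.re + n) ⊆ {w : ℂ | 0 < w.re} :=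
            ball_subset_halfplane (by rw [hz₀re])
          have hdist : dist s z₀ = (n:ℝ) := by
            rw [Complex.dist_eq, hz₀def]
            have : s - (s + ((n:ℝ) : ℂ)) = -((n:ℝ) : ℂ) := by ring
            rw [this, norm_neg, Complex.norm_real, Real.norm_eq_abs, abs_of_nonneg (by positivity)]
          have hs_mem : s ∈ ball z₀ (s.re + n) := by
            rw [mem_ball, hdist]; linarith
          have hha := harnack_abs (hdiff.mono hball)
            (fun w hw => hφpos w (hball hw)) hs_mem
          rw [hdist] at hha
          have hz₀u : 0 ≤ (φ z₀).re := hφpos z₀ (by rw [hz₀re]; positivity)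
          have husp : 0 ≤ (φ s).re := hφpos s hs0
          have h4 : (φ s).re - (φ z₀).re ≤ ((n:ℝ)/(s.re + n)) * ((φ s).re + (φ z₀).re) :=
            le_trans (le_abs_self _) hha
          have h5 := mul_le_mul_of_nonneg_right h4 hR.le
          have h6 : ((n:ℝ)/(s.re + n)) * ((φ s).re + (φ z₀).re) * (s.re + n)
              = (n:ℝ) * ((φ s).re + (φ z₀).re) := by field_simp
          rw [h6] at h5
          have hub : (φ z₀).re ≤ K * (2:ℝ)^(-(s.re + n)) := by
            have h1 := hKb z₀ (by rw [hz₀re]; linarith)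
            have h3 := Complex.abs_re_le_norm (φ z₀ - c 0)
            rw [Complex.sub_re] at h3
            rw [hz₀re] at h1
            linarith [le_abs_self ((φ z₀).re - (c 0).re)]
          -- (A - Z)(σ+n) ≤ n(A+Z)  ⇒  Aσ ≤ Z(σ+2n) ≤ 2Z(σ+n)
          have h7 : (φ s).re * s.re ≤ 2 * (s.re + n) * (φ z₀).re := by
            nlinarith [mul_nonneg hz₀u hs0.le]
          have h8 : 2 * (s.re + n) * (φ z₀).re ≤ 2 * (s.re + n) * (K * (2:ℝ)^(-(s.re + n))) :=
            mul_le_mul_of_nonneg_left hub (by positivity)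
          rw [show 2*K/s.re * ((s.re + n) * (2:ℝ)^(-(s.re + n)))
              = 2 * (s.re + n) * (K * (2:ℝ)^(-(s.re + n))) / s.re by field_simp]
          rw [le_div_iff₀ hs0]
          linarith
        have htend : Tendsto
            (fun n : ℕ => 2*K/s.re * ((s.re + n) * (2:ℝ)^(-(s.re + n)))) atTop (𝓝 0) := by
          have heq : ∀ n : ℕ, (s.re + n) * (2:ℝ)^(-(s.re + n))
              = (2:ℝ)^(-s.re) * (s.re * (1/2:ℝ)^n + (n:ℝ) * (1/2:ℝ)^n) := by
            intro n
            have h1 : (2:ℝ)^(-(s.re + (n:ℝ))) = (2:ℝ)^(-s.re) * (2:ℝ)^(-(n:ℝ)) := by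
              rw [← Real.rpow_add (by norm_num : (0:ℝ) < 2)]
              congr 1; ring
            have h2 : (2:ℝ)^(-(n:ℝ)) = (1/2:ℝ)^n := by
              rw [Real.rpow_neg (by norm_num : (0:ℝ) ≤ 2), Real.rpow_natCast, one_div, inv_pow]
            rw [h1, h2]; ring
          have h1 : Tendsto (fun n : ℕ => (n:ℝ) * (1/2:ℝ)^n) atTop (𝓝 0) := by
            have hs1 : Summable (fun n : ℕ => (n:ℝ)^1 * (1/2:ℝ)^n) :=
              summable_pow_mul_geometric_of_norm_lt_one 1 (by rw [Real.norm_eq_abs, abs_of_pos (by norm_num : (0:ℝ) < 1/2)]; norm_num)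
            have := hs1.tendsto_atTop_zero
            simpa using this
          have h2 : Tendsto (fun n : ℕ => (1/2:ℝ)^n) atTop (𝓝 0) :=
            tendsto_pow_atTop_nhds_zero_of_lt_one (by norm_num) (by norm_num)
          have h3 : Tendsto (fun n : ℕ =>
              (2:ℝ)^(-s.re) * (s.re * (1/2:ℝ)^n + (n:ℝ) * (1/2:ℝ)^n)) atTop (𝓝 0) := by
            have := ((h2.const_mul s.re).add h1).const_mul ((2:ℝ)^(-s.re))
            simpa using this
          have h4 := h3.const_mul (2*K/s.re)
          simp only [mul_zero] at h4
          apply h4.congr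
          intro n
          rw [heq n]
        exact ge_of_tendsto htend
          (eventually_atTop.2 ⟨4, fun n hn => key n (by exact_mod_cast hn)⟩)
      -- φ is constant on the half-plane, contradiction with hnt
      have hUopen : IsOpen {z : ℂ | 0 < z.re} :=
        isOpen_lt continuous_const Complex.continuous_re
      have hUconn : IsPreconnected {z : ℂ | 0 < z.re} :=
        (convex_halfSpace_re_gt 0).isPreconnected
      have han : AnalyticOnNhd ℂ φ {z : ℂ | 0 < z.re} := hdiff.analyticOnNhd hUopen
      have h1mem : (1:ℂ) ∈ {z : ℂ | 0 < z.re} := by norm_num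
      rcases han.is_constant_or_isOpen hUconn with ⟨w, hw⟩ | hopen
      · apply hnt
        refine ⟨w.im, fun z hz => ?_⟩
        have hwre : w.re = 0 := by
          rw [← hw 1 h1mem]; exact hu0 1 h1mem
        have hweq : w = (w.im:ℂ) * Complex.I := by
          apply Complex.ext <;> simp [hwre]
        rw [hΦ, hc1, hw z hz, hweq]
        norm_num
      · have himg : IsOpen (φ '' {z : ℂ | 0 < z.re}) :=
          hopen _ (subset_refl _) hUopen
        obtain ⟨r, hr, hball⟩ := Metric.isOpen_iff.mp himg (φ 1) ⟨1, h1mem, rfl⟩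
        have hzmem : φ 1 + ((r/2:ℝ):ℂ) ∈ ball (φ 1) r := by
          rw [mem_ball, Complex.dist_eq]
          have : φ 1 + ((r/2:ℝ):ℂ) - φ 1 = ((r/2:ℝ):ℂ) := by ring
          rw [this, Complex.norm_real, Real.norm_eq_abs, abs_of_nonneg (by linarith)]
          linarith
        obtain ⟨z, hz0, hzeq⟩ := hball hzmem
        have h1 : (φ z).re = 0 := hu0 z hz0
        have h2 : (φ 1).re = 0 := hu0 1 h1mem
        have h3 := congrArg Complex.re hzeq
        simp only [Complex.add_re, Complex.ofReal_re] at h3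
        rw [h1, h2] at h3
        linarith
end

section
/- Let c₀ be a nonnegative integer and let φ(s) = ∑_{n≥1} c_n n^{-s} be a Dirichlet series converging uniformly on ℂ_ε for every ε > 0; set Φ(s) = c₀ s + φ(s) and assume: if c₀ ≥ 1 then Re φ(s) ≥ 0 for all s ∈ ℂ₊, and if c₀ = 0 then Φ(ℂ₊) ⊆ ℂ_{1/2}. If Φ is not a vertical translation (i.e., there is no τ ∈ ℝ with Φ(s) = s + iτ for all s ∈ ℂ₊), then there exist ε > 0 and η > 0 such that Φ(ℂ_{1/2−ε}) ⊆ ℂ_{1/2+η}. -/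
open Filter

open Topology in
lemma aux_sum_inv_sq (N : ℕ) : ∑ n ∈ Finset.range N, (((n:ℝ)+1)^2)⁻¹ ≤ 2 := by
  have h : ∀ M : ℕ, ∑ n ∈ Finset.range M, (((n:ℝ)+1)^2)⁻¹ ≤ 2 - 2/((M:ℝ)+1) := by
    intro M
    induction M with
    | zero => simp
    | succ M ih =>
      rw [Finset.sum_range_succ]
      have h1 : (0:ℝ) < (M:ℝ)+1 := by positivity
      have h2 : (0:ℝ) < (M:ℝ)+2 := by positivity
      have key : (((M:ℝ)+1)^2)⁻¹ ≤ 2/((M:ℝ)+1) - 2/((M:ℝ)+2) := by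
        rw [div_sub_div _ _ (ne_of_gt h1) (ne_of_gt h2), inv_eq_one_div,
          div_le_div_iff₀ (by positivity) (by positivity)]
        nlinarith
      have : ((M:ℕ):ℝ) + 1 + 1 = (M:ℝ) + 2 := by ring
      calc ∑ n ∈ Finset.range M, (((n:ℝ)+1)^2)⁻¹ + (((M:ℝ)+1)^2)⁻¹
          ≤ (2 - 2/((M:ℝ)+1)) + (2/((M:ℝ)+1) - 2/((M:ℝ)+2)) := add_le_add ih key
        _ = 2 - 2/((M:ℝ)+2) := by ring
        _ = 2 - 2/(((M+1:ℕ):ℝ)+1) := by push_cast; ring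
  calc ∑ n ∈ Finset.range N, (((n:ℝ)+1)^2)⁻¹ ≤ 2 - 2/((N:ℝ)+1) := h N
    _ ≤ 2 := by
        have : (0:ℝ) < (N:ℝ)+1 := by positivity
        have := div_nonneg (by norm_num : (0:ℝ) ≤ 2) this.le
        linarith

lemma term_abs' (n : ℕ) (s : ℂ) :
    ‖(((n:ℂ))+1) ^ (-s)‖ = ((n:ℝ)+1) ^ (-s.re) := by
  have h : (((n:ℂ))+1) = ((((n:ℝ)+1 : ℝ)) : ℂ) := by push_cast; ring
  rw [h, Complex.norm_cpow_eq_rpow_re_of_pos (by positivity), Complex.neg_re]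

lemma rpow_neg_two_eq (x : ℝ) (hx : 0 < x) : x ^ (-(2:ℝ)) = (x^2)⁻¹ := by
  rw [Real.rpow_neg hx.le, show (2:ℝ) = ((2:ℕ):ℝ) by norm_num, Real.rpow_natCast]

section BayartAux

open Topology

variable {c : ℕ → ℂ} {φ : ℂ → ℂ}
  (hφ : ∀ ε > (0:ℝ), TendstoUniformlyOn
      (fun N s => ∑ n ∈ Finset.range N, c n * ((n:ℂ)+1) ^ (-s)) φ atTop
      {s : ℂ | ε < s.re})

include hφ in
lemma hptwise' : ∀ s : ℂ, 0 < s.re →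
    Tendsto (fun N => ∑ n ∈ Finset.range N, c n * ((n:ℂ)+1) ^ (-s)) atTop (𝓝 (φ s)) :=
  fun s hs => (hφ (s.re/2) (by linarith)).tendsto_at (by simp only [Set.mem_setOf_eq]; linarith)

include hφ in
lemma coeff_bound : ∃ C : ℝ, 1 ≤ C ∧ ∀ n, ‖c n‖ ≤ C * ((n:ℝ)+1)^2 := by
  have h2 := hptwise' hφ 2 (by norm_num)
  set S : ℕ → ℂ := fun N => ∑ n ∈ Finset.range N, c n * ((n:ℂ)+1) ^ (-(2:ℂ)) with hS
  have hterm : Tendsto (fun n => c n * ((n:ℂ)+1) ^ (-(2:ℂ))) atTop (𝓝 0) := by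
    have h3 : Tendsto (fun n => S (n+1)) atTop (𝓝 (φ 2)) :=
      h2.comp (tendsto_add_atTop_nat 1)
    have h4 := h3.sub h2
    rw [sub_self] at h4
    convert h4 using 2 with n
    rw [hS]
    simp [Finset.sum_range_succ]
  have habs : Tendsto (fun n => ‖c n‖ * ((n:ℝ)+1) ^ (-(2:ℝ))) atTop (𝓝 0) := by
    have := hterm.norm
    rw [norm_zero] at this
    convert this using 2 with n
    rw [norm_mul, term_abs']
    norm_num
  obtain ⟨C₀, hC₀⟩ := habs.bddAbove_range
  refine ⟨max C₀ 1, le_max_right _ _, fun n => ?_⟩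
  have h5 : ‖c n‖ * ((n:ℝ)+1) ^ (-(2:ℝ)) ≤ C₀ := hC₀ (Set.mem_range_self n)
  have hx : (0:ℝ) < (n:ℝ)+1 := by positivity
  rw [rpow_neg_two_eq _ hx] at h5
  have := mul_le_mul_of_nonneg_right h5 (le_of_lt (by positivity : (0:ℝ) < ((n:ℝ)+1)^2))
  rw [mul_assoc, inv_mul_cancel₀ (by positivity), mul_one] at this
  exact this.trans (mul_le_mul_of_nonneg_right (le_max_left _ _) (by positivity))

include hφ in
lemma tail_bound' {k : ℕ} (hk : 1 ≤ k) (hmin : ∀ j, j ≠ 0 → j < k → c j = 0)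
    {C : ℝ} (hC0 : 0 ≤ C) (hC : ∀ n, ‖c n‖ ≤ C * ((n:ℝ)+1)^2)
    (s : ℂ) (hs : 4 ≤ s.re) :
    ‖φ s - c 0 - c k * ((k:ℂ)+1) ^ (-s)‖ ≤ 2*C*((k:ℝ)+2)^((4:ℝ) - s.re) := by
  set f : ℕ → ℂ := fun n => c n * ((n:ℂ)+1) ^ (-s) with hf
  have hf0 : f 0 = c 0 := by simp [hf]
  have hpt := hptwise' hφ s (by linarith)
  have key : ∀ N, k + 1 ≤ N →
      ‖(∑ n ∈ Finset.range N, f n) - c 0 - f k‖ ≤ 2*C*((k:ℝ)+2)^((4:ℝ) - s.re) := by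
    intro N hN
    have h0mem : 0 ∈ Finset.range N := Finset.mem_range.2 (by omega)
    have hkmem : k ∈ (Finset.range N).erase 0 :=
      Finset.mem_erase.2 ⟨by omega, Finset.mem_range.2 (by omega)⟩
    have e1 : ∑ n ∈ ((Finset.range N).erase 0), f n + f 0 = ∑ n ∈ Finset.range N, f n :=
      Finset.sum_erase_add _ _ h0mem
    have e2 : ∑ n ∈ (((Finset.range N).erase 0).erase k), f n + f k
        = ∑ n ∈ ((Finset.range N).erase 0), f n :=
      Finset.sum_erase_add _ _ hkmem
    have e3 : (∑ n ∈ Finset.range N, f n) - c 0 - f k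
        = ∑ n ∈ (((Finset.range N).erase 0).erase k), f n := by
      rw [← e1, ← e2, hf0]; ring
    rw [e3]
    have hbound : ∀ n ∈ (((Finset.range N).erase 0).erase k),
        ‖f n‖ ≤ C * (((n:ℝ)+1)^2)⁻¹ * ((k:ℝ)+2)^((4:ℝ) - s.re) := by
      intro n hn
      have hnk : n ≠ k := (Finset.mem_erase.1 hn).1
      have hn0 : n ≠ 0 := (Finset.mem_erase.1 (Finset.mem_erase.1 hn).2).1
      rcases lt_or_gt_of_ne hnk with h | h
      · rw [hf]
        simp only [hmin n hn0 h, zero_mul, norm_zero]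
        positivity
      · -- k + 1 ≤ n
        have hn1 : (0:ℝ) < (n:ℝ)+1 := by positivity
        have habs : ‖f n‖ = ‖c n‖ * ((n:ℝ)+1) ^ (-s.re) := by
          rw [hf, norm_mul, term_abs']
        rw [habs]
        have step1 : ‖c n‖ * ((n:ℝ)+1) ^ (-s.re)
            ≤ (C * ((n:ℝ)+1)^2) * ((n:ℝ)+1) ^ (-s.re) :=
          mul_le_mul_of_nonneg_right (hC n) (Real.rpow_nonneg hn1.le _)
        refine step1.trans ?_
        have e4 : (C * ((n:ℝ)+1)^2) * ((n:ℝ)+1) ^ (-s.re)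
            = C * (((n:ℝ)+1)^2)⁻¹ * ((n:ℝ)+1) ^ ((4:ℝ) - s.re) := by
          rw [show ((4:ℝ) - s.re) = (2:ℝ) + (2 + (-s.re)) by ring, Real.rpow_add hn1,
            Real.rpow_add hn1, show ((n:ℝ)+1) ^ (2:ℝ) = ((n:ℝ)+1)^(2:ℕ) by
              rw [show (2:ℝ) = ((2:ℕ):ℝ) by norm_num, Real.rpow_natCast]]
          field_simp
        rw [e4]
        refine mul_le_mul_of_nonneg_left ?_ (by positivity)
        refine Real.rpow_le_rpow_of_nonpos (by positivity) ?_ (by linarith)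
        have : k + 2 ≤ n + 1 := by omega
        exact_mod_cast Nat.cast_le.2 this
    calc ‖∑ n ∈ (((Finset.range N).erase 0).erase k), f n‖
        ≤ ∑ n ∈ (((Finset.range N).erase 0).erase k),
            (C * (((n:ℝ)+1)^2)⁻¹ * ((k:ℝ)+2)^((4:ℝ) - s.re)) := norm_sum_le_of_le _ hbound
      _ ≤ ∑ n ∈ Finset.range N, (C * (((n:ℝ)+1)^2)⁻¹ * ((k:ℝ)+2)^((4:ℝ) - s.re)) := by
          refine Finset.sum_le_sum_of_subset_of_nonneg ?_ (fun n _ _ => by positivity)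
          exact (Finset.erase_subset _ _).trans (Finset.erase_subset _ _)
      _ = (C * ((k:ℝ)+2)^((4:ℝ) - s.re)) * ∑ n ∈ Finset.range N, (((n:ℝ)+1)^2)⁻¹ := by
          rw [Finset.mul_sum]; congr 1; ext n; ring
      _ ≤ (C * ((k:ℝ)+2)^((4:ℝ) - s.re)) * 2 :=
          mul_le_mul_of_nonneg_left (aux_sum_inv_sq N) (by positivity)
      _ = 2*C*((k:ℝ)+2)^((4:ℝ) - s.re) := by ring
  have htends : Tendsto (fun N => ‖(∑ n ∈ Finset.range N, f n) - c 0 - f k‖) atTop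
      (𝓝 ‖φ s - c 0 - f k‖) := by
    exact (((hpt.sub tendsto_const_nhds).sub tendsto_const_nhds).norm)
  have := le_of_tendsto htends (eventually_atTop.2 ⟨k+1, key⟩)
  exact this

-- the rotated-term computation
lemma special_term {k : ℕ} (hk : 1 ≤ k) (σ : ℝ) :
    c k * ((k:ℂ)+1) ^ (-((σ:ℂ) + ((Complex.arg (c k) + Real.pi) / Real.log ((k:ℝ)+1) : ℝ)
      * Complex.I)) = -((‖c k‖ * ((k:ℝ)+1) ^ (-σ) : ℝ) : ℂ) := by
  set L : ℝ := Real.log ((k:ℝ)+1) with hLdef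
  have hk1 : (1:ℝ) < (k:ℝ)+1 := by
    have : (1:ℝ) ≤ (k:ℝ) := by exact_mod_cast hk
    linarith
  have hL : 0 < L := Real.log_pos hk1
  set t : ℝ := (Complex.arg (c k) + Real.pi) / L with htdef
  set s : ℂ := (σ:ℂ) + (t:ℝ) * Complex.I with hsdef
  have h1 : ((k:ℂ)+1) = ((((k:ℝ)+1):ℝ):ℂ) := by push_cast; ring
  have hne : ((k:ℂ)+1) ≠ 0 := by
    rw [h1]; exact_mod_cast (by positivity : ((k:ℝ)+1) ≠ 0)
  have hlog : Complex.log ((k:ℂ)+1) = (L:ℂ) := by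
    rw [h1, hLdef, Complex.ofReal_log (by positivity)]
  have hcpow : ((k:ℂ)+1) ^ (-s) = Complex.exp ((L:ℂ) * (-s)) := by
    rw [Complex.cpow_def_of_ne_zero hne, hlog]
  have hLt : (L:ℝ) * t = Complex.arg (c k) + Real.pi := by
    rw [htdef]; field_simp
  have hck : c k = (‖c k‖ : ℂ) * Complex.exp (Complex.arg (c k) * Complex.I) :=
    (Complex.norm_mul_exp_arg_mul_I (c k)).symm
  rw [hcpow, hsdef]
  conv_lhs => rw [hck]
  rw [mul_assoc, ← Complex.exp_add]
  have harg : (Complex.arg (c k)) * Complex.I + (L:ℂ) * (-((σ:ℂ) + (t:ℝ) * Complex.I))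
      = (((L * -σ):ℝ):ℂ) + (Real.pi:ℂ) * Complex.I * (-1) := by
    have : ((L:ℝ) * t : ℂ) = ((Complex.arg (c k) : ℝ) : ℂ) + (Real.pi : ℂ) := by
      exact_mod_cast congrArg (fun x : ℝ => (x:ℂ)) hLt
    push_cast at this ⊢
    linear_combination (-Complex.I) * this
  rw [harg, Complex.exp_add]
  rw [show (Real.pi:ℂ) * Complex.I * (-1) = -(Real.pi * Complex.I) by ring, Complex.exp_neg,
    Complex.exp_pi_mul_I]
  rw [← Complex.ofReal_exp]
  rw [Real.rpow_def_of_pos (by positivity : (0:ℝ) < (k:ℝ)+1), ← hLdef]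
  push_cast
  ring

include hφ in
lemma phi_diff {ε : ℝ} (hε : 0 < ε) : DifferentiableOn ℂ φ {s : ℂ | ε < s.re} := by
  have hopen : IsOpen {s : ℂ | ε < s.re} := isOpen_lt continuous_const Complex.continuous_re
  refine ((hφ ε hε).tendstoLocallyUniformlyOn).differentiableOn (Eventually.of_forall ?_) hopen
  intro N
  apply Differentiable.differentiableOn
  apply Differentiable.fun_sum
  intro n _
  have hne : ((n:ℂ)+1) ≠ 0 := by
    have : ((n:ℂ)+1) = ((((n:ℝ)+1):ℝ):ℂ) := by push_cast; ring
    rw [this]; exact_mod_cast (by positivity : ((n:ℝ)+1) ≠ 0)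
  exact ((differentiable_id.neg).const_cpow (Or.inl hne)).const_mul _

include hφ in
lemma re_c0_gt (a : ℝ) (hge : ∀ s : ℂ, 0 < s.re → a ≤ (φ s).re)
    {k : ℕ} (hk : 1 ≤ k) (hmin : ∀ j, j ≠ 0 → j < k → c j = 0) (hck : c k ≠ 0)
    {C : ℝ} (hC0 : 0 ≤ C) (hC : ∀ n, ‖c n‖ ≤ C * ((n:ℝ)+1)^2) :
    a < (c 0).re := by
  have key : ∀ σ : ℝ, 4 ≤ σ →
      a ≤ (c 0).re - ‖c k‖ * ((k:ℝ)+1)^(-σ) + 2*C*((k:ℝ)+2)^((4:ℝ)-σ) := by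
    intro σ hσ
    set t : ℝ := (Complex.arg (c k) + Real.pi) / Real.log ((k:ℝ)+1) with htdef
    set s : ℂ := (σ:ℂ) + (t:ℝ) * Complex.I with hsdef
    have hsre : s.re = σ := by simp [hsdef]
    have h1 := hge s (by rw [hsre]; linarith)
    have h2 := tail_bound' hφ hk hmin hC0 hC s (by rw [hsre]; linarith)
    rw [hsre] at h2
    have h3 := special_term (c := c) hk σ
    have hre : (φ s).re = (c 0).re + (c k * ((k:ℂ)+1)^(-s)).re
        + (φ s - c 0 - c k * ((k:ℂ)+1)^(-s)).re := by
      simp only [Complex.sub_re]; ring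
    have h4 : (c k * ((k:ℂ)+1)^(-s)).re = -(‖c k‖ * ((k:ℝ)+1)^(-σ)) := by
      rw [hsdef, h3]
      simp
    have h5 : (φ s - c 0 - c k * ((k:ℂ)+1)^(-s)).re ≤ 2*C*((k:ℝ)+2)^((4:ℝ)-σ) :=
      (Complex.re_le_norm _).trans h2
    rw [hre, h4] at h1
    linarith
  have habs : 0 < ‖c k‖ := by simpa using hck
  have hb0 : (0:ℝ) < ((k:ℝ)+1)/((k:ℝ)+2) := by positivity
  have hb1 : ((k:ℝ)+1)/((k:ℝ)+2) < 1 := by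
    rw [div_lt_one (by positivity)]; linarith
  have htend : Tendsto (fun σ : ℝ => 2*C*((k:ℝ)+2)^(4:ℝ) * ((((k:ℝ)+1)/((k:ℝ)+2)) ^ σ))
      atTop (𝓝 0) := by
    have := (tendsto_rpow_atTop_of_base_lt_one _ (by linarith) hb1).const_mul
      (2*C*((k:ℝ)+2)^(4:ℝ))
    simpa using this
  obtain ⟨σ, hσc, hσ4⟩ := ((htend.eventually_lt_const habs).and (eventually_ge_atTop (4:ℝ))).exists
  have e : 2*C*((k:ℝ)+2)^((4:ℝ)-σ)
      = (2*C*((k:ℝ)+2)^(4:ℝ) * ((((k:ℝ)+1)/((k:ℝ)+2)) ^ σ)) * (((k:ℝ)+1)^(-σ)) := by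
    rw [Real.div_rpow (by positivity) (by positivity), Real.rpow_sub (by positivity),
      Real.rpow_neg (by positivity : (0:ℝ) ≤ (k:ℝ)+1)]
    have h6 : ((k:ℝ)+1) ^ σ ≠ 0 := by positivity
    have h7 : ((k:ℝ)+2) ^ σ ≠ 0 := by positivity
    field_simp
  have claim : 2*C*((k:ℝ)+2)^((4:ℝ)-σ) < ‖c k‖ * ((k:ℝ)+1)^(-σ) := by
    rw [e]
    exact mul_lt_mul_of_pos_right hσc (by positivity)
  linarith [key σ hσ4]

include hφ in
lemma main_lower (a : ℝ) (hge : ∀ s : ℂ, 0 < s.re → a ≤ (φ s).re)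
    {k : ℕ} (hk : 1 ≤ k) (hmin : ∀ j, j ≠ 0 → j < k → c j = 0) (hck : c k ≠ 0)
    {C : ℝ} (hC0 : 0 ≤ C) (hC : ∀ n, ‖c n‖ ≤ C * ((n:ℝ)+1)^2) :
    ∃ δ > (0:ℝ), ∀ s : ℂ, 1/4 ≤ s.re → a + δ ≤ (φ s).re := by
  set θ : ℝ := (c 0).re - a with hθdef
  have hθ : 0 < θ := by
    have := re_c0_gt hφ a hge hk hmin hck hC0 hC
    simp only [hθdef]; linarith
  -- choose σ₀
  have habs0 : (0:ℝ) ≤ ‖c k‖ := (norm_nonneg _)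
  have htend : Tendsto (fun σ : ℝ =>
      ‖c k‖ * (((k:ℝ)+1)⁻¹) ^ σ + 2*C*((k:ℝ)+2)^(4:ℝ) * ((((k:ℝ)+2)⁻¹) ^ σ))
      atTop (𝓝 0) := by
    have hb1 : ((k:ℝ)+1)⁻¹ < 1 := by
      rw [inv_lt_one_iff₀]; right
      have : (1:ℝ) ≤ (k:ℝ) := by exact_mod_cast hk
      linarith
    have hb2 : ((k:ℝ)+2)⁻¹ < 1 := by
      rw [inv_lt_one_iff₀]; right
      have : (0:ℝ) ≤ (k:ℝ) := Nat.cast_nonneg k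
      linarith
    have t1 := tendsto_rpow_atTop_of_base_lt_one (((k:ℝ)+1)⁻¹)
      (((by norm_num : (-1:ℝ) < 0)).trans (by positivity)) hb1
    have t2 := tendsto_rpow_atTop_of_base_lt_one (((k:ℝ)+2)⁻¹)
      (((by norm_num : (-1:ℝ) < 0)).trans (by positivity)) hb2
    have := (t1.const_mul (‖c k‖)).add (t2.const_mul (2*C*((k:ℝ)+2)^(4:ℝ)))
    simpa using this
  obtain ⟨σ₀, hσ₀⟩ := Filter.eventually_atTop.1
    ((htend.eventually_lt_const (by positivity : (0:ℝ) < θ/2)).and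
      (eventually_ge_atTop (4:ℝ)))
  have hσ₀4 : (4:ℝ) ≤ σ₀ := (hσ₀ σ₀ le_rfl).2
  -- rewriting the decay bound
  have hdecay : ∀ σ : ℝ, σ₀ ≤ σ →
      ‖c k‖ * ((k:ℝ)+1)^(-σ) + 2*C*((k:ℝ)+2)^((4:ℝ)-σ) < θ/2 := by
    intro σ hσ
    have h := (hσ₀ σ hσ).1
    have e1 : (((k:ℝ)+1)⁻¹)^(σ:ℝ) = ((k:ℝ)+1)^(-σ) := by
      rw [Real.inv_rpow (by positivity), ← Real.rpow_neg (by positivity)]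
    have e2 : ((k:ℝ)+2)^((4:ℝ)-σ) = ((k:ℝ)+2)^(4:ℝ) * ((((k:ℝ)+2)⁻¹)^(σ:ℝ)) := by
      rw [Real.inv_rpow (by positivity), ← Real.rpow_neg (by positivity),
        Real.rpow_sub (by positivity), div_eq_mul_inv, ← Real.rpow_neg (by positivity)]
    rw [e1] at h
    rw [e2]
    linarith
  -- lower bound far right
  have hline : ∀ s : ℂ, σ₀ ≤ s.re → a + θ/2 ≤ (φ s).re := by
    intro s hs
    have h4le : (4:ℝ) ≤ s.re := le_trans hσ₀4 hs
    have h2 := tail_bound' hφ hk hmin hC0 hC s h4le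
    have h5 : -(2*C*((k:ℝ)+2)^((4:ℝ)-s.re)) ≤ (φ s - c 0 - c k * ((k:ℂ)+1)^(-s)).re := by
      have := abs_le.1 (Complex.abs_re_le_norm (φ s - c 0 - c k * ((k:ℂ)+1)^(-s)))
      linarith [this.1]
    have h6 : -(‖c k‖ * ((k:ℝ)+1)^(-s.re)) ≤ (c k * ((k:ℂ)+1)^(-s)).re := by
      have h7 := abs_le.1 (Complex.abs_re_le_norm (c k * ((k:ℂ)+1)^(-s)))
      have h8 : ‖c k * ((k:ℂ)+1)^(-s)‖
          = ‖c k‖ * ((k:ℝ)+1)^(-s.re) := by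
        rw [norm_mul, term_abs']
      rw [h8] at h7
      linarith [h7.1]
    have hre : (φ s).re = (c 0).re + (c k * ((k:ℂ)+1)^(-s)).re
        + (φ s - c 0 - c k * ((k:ℂ)+1)^(-s)).re := by
      simp only [Complex.sub_re]; ring
    have hd := hdecay s.re hs
    have hc0re : (c 0).re = a + θ := by simp only [hθdef]; ring
    rw [hre, hc0re]
    linarith
  -- three lines on the strip
  set d : ℝ := σ₀ - 1/8 with hddef
  have hd0 : (0:ℝ) < d := by simp only [hddef]; linarith
  set ψ : ℂ → ℂ := fun z => (1/8 : ℂ) + (d:ℂ) * z with hψdef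
  have hψre : ∀ z : ℂ, (ψ z).re = 1/8 + d * z.re := by
    intro z
    simp [hψdef, Complex.add_re, Complex.mul_re]
  set g : ℂ → ℂ := fun z => Complex.exp ((a:ℂ) - φ (ψ z)) with hgdef
  have hg : ∀ z : ℂ, ‖g z‖ = Real.exp (a - (φ (ψ z)).re) := by
    intro z
    rw [hgdef]
    simp only [Complex.norm_exp, Complex.sub_re, Complex.ofReal_re]
  set U : Set ℂ := {z : ℂ | -(1/(16*d)) < z.re} with hUdef
  have hmaps : ∀ z ∈ U, (1/16 : ℝ) < (ψ z).re := by
    intro z hz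
    rw [hψre]
    have hz' : -(1/(16*d)) < z.re := hz
    have : -(1/16 : ℝ) < d * z.re := by
      have := mul_lt_mul_of_pos_left hz' hd0
      calc -(1/16 : ℝ) = d * (-(1/(16*d))) := by field_simp
        _ < d * z.re := this
    linarith
  have gdiff : DifferentiableOn ℂ g U := by
    have h1 : DifferentiableOn ℂ φ {s : ℂ | (1/16:ℝ) < s.re} := phi_diff hφ (by norm_num)
    have hψd : Differentiable ℂ ψ :=
      (differentiable_const _).add ((differentiable_const _).mul differentiable_id)
    have h2 : DifferentiableOn ℂ (fun z => φ (ψ z)) U :=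
      h1.comp hψd.differentiableOn (fun z hz => hmaps z hz)
    exact ((differentiableOn_const _).sub h2).cexp
  have hsub2 : Complex.HadamardThreeLines.verticalClosedStrip 0 1 ⊆ U := by
    intro z hz
    have : (0:ℝ) ≤ z.re := hz.1
    show -(1/(16*d)) < z.re
    have : (0:ℝ) < 1/(16*d) := by positivity
    linarith
  have hsub1 : Complex.HadamardThreeLines.verticalStrip 0 1 ⊆
      Complex.HadamardThreeLines.verticalClosedStrip 0 1 := by
    intro z hz
    exact ⟨le_of_lt hz.1, le_of_lt hz.2⟩
  have hDCC : DiffContOnCl ℂ g (Complex.HadamardThreeLines.verticalStrip 0 1) := by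
    refine ⟨gdiff.mono (hsub1.trans hsub2), ?_⟩
    refine (gdiff.continuousOn).mono ?_
    refine (closure_minimal hsub1 ?_).trans hsub2
    exact IsClosed.preimage Complex.continuous_re isClosed_Icc
  have hBound1 : ∀ z ∈ Complex.HadamardThreeLines.verticalClosedStrip 0 1, ‖g z‖ ≤ 1 := by
    intro z hz
    rw [hg]
    rw [Real.exp_le_one_iff]
    have hre : 0 < (ψ z).re := by
      rw [hψre]
      have := hz.1
      nlinarith
    have := hge (ψ z) hre
    linarith
  have hB : BddAbove ((norm ∘ g) '' Complex.HadamardThreeLines.verticalClosedStrip 0 1) := by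
    refine ⟨1, ?_⟩
    rintro x ⟨z, hz, rfl⟩
    exact hBound1 z hz
  have ha1 : ∀ z ∈ Complex.re ⁻¹' {0}, ‖g z‖ ≤ 1 := by
    intro z hz
    refine hBound1 z ?_
    have : z.re = 0 := hz
    exact ⟨le_of_eq this.symm, by rw [this]; norm_num⟩
  have hb1 : ∀ z ∈ Complex.re ⁻¹' {1}, ‖g z‖ ≤ Real.exp (-(θ/2)) := by
    intro z hz
    have hzre : z.re = 1 := hz
    have hψz : σ₀ ≤ (ψ z).re := by
      rw [hψre, hzre]
      simp only [hddef]
      linarith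
    have := hline (ψ z) hψz
    rw [hg]
    rw [Real.exp_le_exp]
    linarith
  set lam : ℝ := 1/(8*d) with hlamdef
  have hlam0 : 0 < lam := by positivity
  refine ⟨(θ/2) * lam, by positivity, ?_⟩
  intro s hs
  rcases le_or_gt s.re σ₀ with hcase | hcase
  · -- strip case
    set z : ℂ := (s - 1/8) / (d:ℂ) with hzdef
    have hdne : (d:ℂ) ≠ 0 := by
      exact_mod_cast (ne_of_gt hd0)
    have hψz : ψ z = s := by
      rw [hψdef, hzdef]
      field_simp
      ring
    have hzre : z.re = (s.re - 1/8)/d := by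
      rw [hzdef]
      rw [Complex.div_ofReal_re]
      congr 1
      simp [Complex.sub_re]
    have hz01 : z ∈ Complex.HadamardThreeLines.verticalClosedStrip 0 1 := by
      constructor
      · rw [hzre]
        have : (0:ℝ) ≤ s.re - 1/8 := by linarith
        positivity
      · rw [hzre, div_le_one hd0]
        simp only [hddef]
        linarith
    have hkey := Complex.HadamardThreeLines.norm_le_interp_of_mem_verticalClosedStrip'
      zero_lt_one hz01 hDCC hB ha1 hb1
    rw [Real.one_rpow, one_mul, hg, hψz, sub_zero, sub_zero, div_one] at hkey
    have hexp1 : Real.exp (-(θ/2)) ≤ 1 := by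
      rw [Real.exp_le_one_iff]; linarith
    have hlamle : lam ≤ z.re := by
      rw [hzre, hlamdef]
      rw [div_le_div_iff₀ (by positivity) hd0]
      ring_nf
      nlinarith
    have hmono : Real.exp (-(θ/2)) ^ z.re ≤ Real.exp (-(θ/2)) ^ lam :=
      Real.rpow_le_rpow_of_exponent_ge (Real.exp_pos _) hexp1 hlamle
    have hfin : Real.exp (-(θ/2)) ^ lam = Real.exp (-(θ/2) * lam) := by
      rw [Real.exp_mul]
    rw [hfin] at hmono
    have := hkey.trans hmono
    rw [Real.exp_le_exp] at this
    linarith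
  · -- far right
    have := hline s (le_of_lt hcase)
    have hlamle1 : lam ≤ 1 := by
      rw [hlamdef, div_le_one (by positivity)]
      rw [hddef]
      linarith
    have h9 : (θ/2) * lam ≤ θ/2 := by nlinarith
    linarith
end BayartAux
/-- Bayart's lemma: a symbol which is not a vertical translation maps some half-plane
`ℂ_{1/2-ε}` into `ℂ_{1/2+η}`. -/
theorem symbol_not_translation_maps_strictly
    (c₀ : ℕ) (c : ℕ → ℂ) (φ Φ : ℂ → ℂ)
    (hφ : ∀ ε > (0:ℝ), TendstoUniformlyOn
      (fun N s => ∑ n ∈ Finset.range N, c n * ((n:ℂ)+1) ^ (-s)) φ atTop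
      {s : ℂ | ε < s.re})
    (hΦ : ∀ s : ℂ, Φ s = (c₀ : ℂ) * s + φ s)
    (hpos : 1 ≤ c₀ → ∀ s : ℂ, 0 < s.re → 0 ≤ (φ s).re)
    (hzero : c₀ = 0 → ∀ s : ℂ, 0 < s.re → 1/2 < (Φ s).re)
    (hnt : ¬ ∃ τ : ℝ, ∀ s : ℂ, 0 < s.re → Φ s = s + (τ : ℂ) * Complex.I) :
    ∃ ε > (0:ℝ), ∃ η > (0:ℝ), ∀ s : ℂ, 1/2 - ε < s.re → 1/2 + η < (Φ s).re := by
  have hΦre : ∀ s : ℂ, (Φ s).re = (c₀:ℝ) * s.re + (φ s).re := by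
    intro s
    rw [hΦ]
    simp [Complex.add_re, Complex.mul_re]
  rcases Nat.lt_or_ge c₀ 2 with hc2 | hc2
  swap
  · -- c₀ ≥ 2 : trivial case
    refine ⟨1/8, by norm_num, 1/8, by norm_num, fun s hs => ?_⟩
    have hs0 : 0 < s.re := by linarith
    have h1 := hpos (by omega) s hs0
    have h2 : (2:ℝ) ≤ (c₀:ℝ) := by exact_mod_cast hc2
    rw [hΦre]
    nlinarith
  -- c₀ = 0 or 1
  by_cases hconst : ∀ n : ℕ, n ≠ 0 → c n = 0
  · -- φ is constant = c 0 on the right half-plane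
    have hφconst : ∀ s : ℂ, 0 < s.re → φ s = c 0 := by
      intro s hs
      have hpt := hptwise' hφ s hs
      have hsum : ∀ N, 1 ≤ N → (∑ n ∈ Finset.range N, c n * ((n:ℂ)+1)^(-s)) = c 0 := by
        intro N hN
        rw [Finset.sum_eq_single 0]
        · simp
        · intro b _ hb
          simp [hconst b hb]
        · intro h
          exact absurd (Finset.mem_range.2 (by omega)) h
      refine tendsto_nhds_unique hpt ?_
      refine Tendsto.congr' ?_ tendsto_const_nhds
      filter_upwards [eventually_ge_atTop 1] with N hN using (hsum N hN).symm
    interval_cases c₀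
    · -- c₀ = 0, constant
      have h1 : (1/2 : ℝ) < (c 0).re := by
        have := hzero rfl 1 (by norm_num)
        rw [hΦre 1, hφconst 1 (by norm_num)] at this
        simpa using this
      refine ⟨1/4, by norm_num, ((c 0).re - 1/2)/2, by linarith, fun s hs => ?_⟩
      have hs0 : 0 < s.re := by linarith
      rw [hΦre, hφconst s hs0]
      push_cast
      linarith
    · -- c₀ = 1, constant
      have h0 : 0 ≤ (c 0).re := by
        have := hpos le_rfl 1 (by norm_num)
        rwa [hφconst 1 (by norm_num)] at this
      rcases eq_or_lt_of_le h0 with heq | hlt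
      · exfalso
        apply hnt
        refine ⟨(c 0).im, fun s hs => ?_⟩
        rw [hΦ, hφconst s hs]
        have : c 0 = ((c 0).im : ℂ) * Complex.I := by
          apply Complex.ext <;> simp [← heq]
        push_cast
        rw [one_mul]
        exact congrArg (fun w => s + w) this
      · refine ⟨min ((c 0).re/2) (1/4), by positivity, min ((c 0).re/2) (1/4) / 2,
          by positivity, fun s hs => ?_⟩
        have hm1 : min ((c 0).re/2) (1/4) ≤ (c 0).re/2 := min_le_left _ _
        have hm2 : min ((c 0).re/2) (1/4) ≤ 1/4 := min_le_right _ _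
        have hm0 : 0 < min ((c 0).re/2) (1/4) := by positivity
        have hs0 : 0 < s.re := by linarith
        rw [hΦre, hφconst s hs0]
        push_cast
        linarith
  · -- φ nonconstant : use the main lemma
    push_neg at hconst
    obtain ⟨n₀, hn₀, hcn₀⟩ := hconst
    have hP : ∃ n, n ≠ 0 ∧ c n ≠ 0 := ⟨n₀, hn₀, hcn₀⟩
    classical
    set k := Nat.find hP with hkdef
    obtain ⟨hk0, hck⟩ := Nat.find_spec hP
    have hk1 : 1 ≤ k := Nat.one_le_iff_ne_zero.2 hk0
    have hmin : ∀ j, j ≠ 0 → j < k → c j = 0 := by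
      intro j hj hjk
      by_contra hcj
      exact Nat.find_min hP hjk ⟨hj, hcj⟩
    obtain ⟨C, hC1, hC⟩ := coeff_bound hφ
    have hC0 : (0:ℝ) ≤ C := le_trans zero_le_one hC1
    interval_cases c₀
    · -- c₀ = 0
      have hge : ∀ s : ℂ, 0 < s.re → (1/2:ℝ) ≤ (φ s).re := by
        intro s hs
        have := hzero rfl s hs
        rw [hΦre] at this
        push_cast at this
        linarith
      obtain ⟨δ, hδ, hmain⟩ := main_lower hφ (1/2) hge hk1 hmin hck hC0 hC
      refine ⟨1/4, by norm_num, δ/2, by positivity, fun s hs => ?_⟩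
      have := hmain s (by linarith)
      rw [hΦre]
      push_cast
      linarith
    · -- c₀ = 1
      have hge : ∀ s : ℂ, 0 < s.re → (0:ℝ) ≤ (φ s).re := hpos le_rfl
      obtain ⟨δ, hδ, hmain⟩ := main_lower hφ 0 hge hk1 hmin hck hC0 hC
      refine ⟨min (δ/2) (1/4), by positivity, min (δ/2) (1/4) / 2, by positivity,
        fun s hs => ?_⟩
      have hm1 : min (δ/2) (1/4) ≤ δ/2 := min_le_left _ _
      have hm2 : min (δ/2) (1/4) ≤ 1/4 := min_le_right _ _
      have hm0 : 0 < min (δ/2) (1/4) := by positivity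
      have := hmain s (by linarith)
      rw [hΦre]
      push_cast
      linarith
end

section
/- Let φ(s) = ∑_{n≥1} c_n n^{-s} be a nonconstant Dirichlet series converging uniformly on ℂ_ε for every ε > 0, such that Re φ(s) > 0 for all s ∈ ℂ₊. Then for every ε > 0 there exists θ > 0 such that φ(ℂ_ε) ⊆ ℂ_θ, i.e., Re φ(s) ≥ θ whenever Re s > ε. -/
open Filter

open Complex Topology

namespace GH42

noncomputable def P (a : ℕ → ℂ) (N : ℕ) (s : ℂ) : ℂ :=
  ∑ n ∈ Finset.range N, a n * ((n:ℂ)+1) ^ (-s)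

lemma norm_cpow_neg (n : ℕ) (s : ℂ) : ‖((n:ℂ)+1) ^ (-s)‖ = ((n:ℝ)+1) ^ (-s.re) := by
  have h : ((n:ℂ)+1) = (((n:ℝ)+1 : ℝ) : ℂ) := by push_cast; ring
  rw [h, Complex.norm_cpow_eq_rpow_re_of_pos (by positivity), Complex.neg_re]

lemma base_ne (n : ℕ) : ((n:ℂ)+1) ≠ 0 := by
  have h : ((n:ℂ)+1) = (((n:ℝ)+1 : ℝ) : ℂ) := by push_cast; ring
  rw [h]
  exact_mod_cast ne_of_gt (by positivity : (0:ℝ) < (n:ℝ)+1)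

lemma cpow_split (n : ℕ) (x : ℂ) (tt : ℝ) :
    ((n:ℂ)+1) ^ (-(x + (tt:ℂ)*I)) = ((n:ℂ)+1) ^ (-x) * ((n:ℂ)+1) ^ (-((tt:ℂ)*I)) := by
  rw [show -(x + (tt:ℂ)*I) = (-x) + (-((tt:ℂ)*I)) by ring, Complex.cpow_add _ _ (base_ne n)]

lemma re_tr (x : ℂ) (tt : ℝ) : (x + (tt:ℂ)*I).re = x.re := by simp

lemma basel_aux : ∀ M : ℕ, ∑ n ∈ Finset.range (M+1), (1:ℝ)/(((n:ℝ)+1)^2) ≤ 2 - 1/((M:ℝ)+1) := by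
  intro M
  induction M with
  | zero => norm_num
  | succ M ih =>
    rw [Finset.sum_range_succ]
    have h1 : (1:ℝ)/(((M:ℝ)+1+1)^2) ≤ 1/((M:ℝ)+1) - 1/((M:ℝ)+1+1) := by
      rw [div_sub_div _ _ (by positivity) (by positivity)]
      rw [div_le_div_iff₀ (by positivity) (by positivity)]
      ring_nf
      nlinarith [sq_nonneg ((M:ℝ)+1)]
    push_cast
    push_cast at ih h1
    linarith

lemma basel (M : ℕ) : ∑ n ∈ Finset.range M, ((n:ℝ)+1) ^ (-(2:ℝ)) ≤ 2 := by
  have he : ∀ n : ℕ, ((n:ℝ)+1) ^ (-(2:ℝ)) = 1/(((n:ℝ)+1)^2) := by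
    intro n
    rw [Real.rpow_neg (by positivity), one_div, ← Real.rpow_natCast ((n:ℝ)+1) 2]
    norm_num
  rw [Finset.sum_congr rfl (fun n _ => he n)]
  cases M with
  | zero => norm_num
  | succ M =>
    calc _ ≤ 2 - 1/((M:ℝ)+1) := basel_aux M
    _ ≤ 2 := by
      have : (0:ℝ) < (M:ℝ)+1 := by positivity
      have := one_div_pos.mpr this
      linarith

lemma tail_bound {a : ℕ → ℂ} {B : ℝ} (hB : ∀ n, ‖a n‖ ≤ B * ((n:ℝ)+1) ^ (2:ℝ))
    {s : ℂ} (hs : (4:ℝ) ≤ s.re) {N M : ℕ} (hN : 1 ≤ N) (hNM : N ≤ M) :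
    ‖P a M s - P a N s‖ ≤ 2*B*(((N:ℝ)+1) ^ ((4:ℝ) - s.re)) := by
  have hB0 : 0 ≤ B := by
    have h := (norm_nonneg (a 0)).trans (hB 0)
    simpa using h
  have key : ∀ n : ℕ, N ≤ n → ‖a n * ((n:ℂ)+1) ^ (-s)‖ ≤
      (B * (((N:ℝ)+1) ^ ((4:ℝ) - s.re))) * ((n:ℝ)+1) ^ (-(2:ℝ)) := by
    intro n hn
    rw [norm_mul, norm_cpow_neg]
    have h1 : ((n:ℝ)+1) ^ (2:ℝ) * ((n:ℝ)+1) ^ (-s.re)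
        = ((n:ℝ)+1) ^ (-(2:ℝ)) * ((n:ℝ)+1) ^ ((4:ℝ) - s.re) := by
      rw [← Real.rpow_add (by positivity), ← Real.rpow_add (by positivity)]
      ring_nf
    have h2 : ((n:ℝ)+1) ^ ((4:ℝ) - s.re) ≤ ((N:ℝ)+1) ^ ((4:ℝ) - s.re) := by
      apply Real.rpow_le_rpow_of_nonpos (by positivity) (by
        have : (N:ℝ) ≤ (n:ℝ) := by exact_mod_cast hn
        linarith) (by linarith)
    calc ‖a n‖ * ((n:ℝ)+1) ^ (-s.re) ≤ (B * ((n:ℝ)+1) ^ (2:ℝ)) * ((n:ℝ)+1) ^ (-s.re) := by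
          apply mul_le_mul_of_nonneg_right (hB n) (by positivity)
    _ = B * (((n:ℝ)+1) ^ (-(2:ℝ)) * ((n:ℝ)+1) ^ ((4:ℝ) - s.re)) := by rw [mul_assoc, h1]
    _ ≤ B * (((n:ℝ)+1) ^ (-(2:ℝ)) * ((N:ℝ)+1) ^ ((4:ℝ) - s.re)) := by
          apply mul_le_mul_of_nonneg_left _ hB0
          apply mul_le_mul_of_nonneg_left h2 (by positivity)
    _ = (B * (((N:ℝ)+1) ^ ((4:ℝ) - s.re))) * ((n:ℝ)+1) ^ (-(2:ℝ)) := by ring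
  have hdiff : P a M s - P a N s = ∑ n ∈ Finset.Ico N M, a n * ((n:ℂ)+1) ^ (-s) :=
    (Finset.sum_Ico_eq_sub _ hNM).symm
  rw [hdiff]
  calc ‖∑ n ∈ Finset.Ico N M, a n * ((n:ℂ)+1) ^ (-s)‖
      ≤ ∑ n ∈ Finset.Ico N M, ‖a n * ((n:ℂ)+1) ^ (-s)‖ := norm_sum_le _ _
    _ ≤ ∑ n ∈ Finset.Ico N M, (B * (((N:ℝ)+1) ^ ((4:ℝ) - s.re))) * ((n:ℝ)+1) ^ (-(2:ℝ)) := by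
        apply Finset.sum_le_sum
        intro n hn
        exact key n (Finset.mem_Ico.mp hn).1
    _ = (B * (((N:ℝ)+1) ^ ((4:ℝ) - s.re))) * ∑ n ∈ Finset.Ico N M, ((n:ℝ)+1) ^ (-(2:ℝ)) := by
        rw [Finset.mul_sum]
    _ ≤ (B * (((N:ℝ)+1) ^ ((4:ℝ) - s.re))) * 2 := by
        apply mul_le_mul_of_nonneg_left _ (by positivity)
        calc ∑ n ∈ Finset.Ico N M, ((n:ℝ)+1) ^ (-(2:ℝ))
            ≤ ∑ n ∈ Finset.range M, ((n:ℝ)+1) ^ (-(2:ℝ)) := by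
              apply Finset.sum_le_sum_of_subset_of_nonneg
              · intro x hx
                simp only [Finset.mem_range]
                exact (Finset.mem_Ico.mp hx).2
              · intro i _ _; positivity
          _ ≤ 2 := basel M
    _ = 2*B*(((N:ℝ)+1) ^ ((4:ℝ) - s.re)) := by ring

lemma tail_lim {a : ℕ → ℂ} {B : ℝ} (hB : ∀ n, ‖a n‖ ≤ B * ((n:ℝ)+1) ^ (2:ℝ))
    {s : ℂ} (hs : (4:ℝ) ≤ s.re) {w : ℂ} (hconv : Tendsto (fun M => P a M s) atTop (𝓝 w))
    {N : ℕ} (hN : 1 ≤ N) :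
    ‖w - P a N s‖ ≤ 2*B*(((N:ℝ)+1) ^ ((4:ℝ) - s.re)) := by
  have h : Tendsto (fun M => ‖P a M s - P a N s‖) atTop (𝓝 ‖w - P a N s‖) :=
    ((hconv.sub tendsto_const_nhds).norm)
  apply le_of_tendsto h
  filter_upwards [eventually_ge_atTop N] with M hM
  exact tail_bound hB hs hN hM

lemma P_split {a : ℕ → ℂ} {k : ℕ} (hk : 1 ≤ k) (hmid : ∀ n, 1 ≤ n → n < k → a n = 0)
    (s : ℂ) : P a (k+1) s = a 0 + a k * ((k:ℂ)+1) ^ (-s) := by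
  unfold P
  rw [Finset.sum_range_succ]
  congr 1
  rw [Finset.sum_eq_single_of_mem 0 (Finset.mem_range.mpr hk)]
  · simp [Complex.one_cpow]
  · intro b hb hb0
    rw [hmid b (Nat.one_le_iff_ne_zero.mpr hb0) (Finset.mem_range.mp hb)]
    simp

lemma exists_neg_dir {a : ℕ → ℂ} {k : ℕ} (hk : 1 ≤ k) (hmid : ∀ n, 1 ≤ n → n < k → a n = 0)
    (σ : ℝ) : ∃ t : ℝ, (P a (k+1) ((σ:ℂ) + (t:ℂ)*I)).re
      = (a 0).re - ‖a k‖ * (((k:ℝ)+1) ^ (-σ)) := by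
  set L : ℝ := Real.log ((k:ℝ)+1) with hLdef
  have hk1 : (1:ℝ) < (k:ℝ)+1 := by
    have : (1:ℝ) ≤ (k:ℝ) := by exact_mod_cast hk
    linarith
  have hL : 0 < L := Real.log_pos hk1
  refine ⟨(Complex.arg (a k) + Real.pi)/L, ?_⟩
  rw [P_split hk hmid]
  have hbase : ((k:ℂ)+1) = ((((k:ℝ)+1) : ℝ) : ℂ) := by push_cast; ring
  have hbne : ((k:ℂ)+1) ≠ 0 := by
    rw [hbase]
    exact_mod_cast ne_of_gt (lt_trans one_pos hk1)
  have hlog : Complex.log ((k:ℂ)+1) = (L:ℂ) := by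
    rw [hbase, ← Complex.ofReal_log (by linarith)]
  have harg : (L:ℂ) * ((((Complex.arg (a k) + Real.pi)/L : ℝ)):ℂ) =
      ((Complex.arg (a k) : ℂ) + (Real.pi : ℂ)) := by
    push_cast
    field_simp
    rw [mul_comm, mul_div_assoc, div_self (Complex.ofReal_ne_zero.mpr hL.ne'), mul_one]
  have hcpow : ((k:ℂ)+1) ^ (-((σ:ℂ) + (((Complex.arg (a k) + Real.pi)/L : ℝ):ℂ)*I))
      = (((((k:ℝ)+1) ^ (-σ) : ℝ)) : ℂ) * (-Complex.exp (-(Complex.arg (a k) * I))) := by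
    rw [Complex.cpow_def_of_ne_zero hbne, hlog]
    have h1 : (L:ℂ) * (-((σ:ℂ) + (((Complex.arg (a k) + Real.pi)/L : ℝ):ℂ)*I))
        = (-(L*σ):ℝ) + (-((Complex.arg (a k):ℂ) + (Real.pi:ℂ)))*I := by
      have := harg
      push_cast at this ⊢
      field_simp at this ⊢
      linear_combination (-(1:ℂ))*I*this
    rw [h1, Complex.exp_add]
    congr 1
    · rw [← Complex.ofReal_exp, Real.rpow_def_of_pos (by linarith : (0:ℝ) < (k:ℝ)+1)]
      norm_num [hLdef, mul_comm]
    · have hp : Complex.exp (-((Real.pi:ℂ) * I)) = -1 := by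
        rw [Complex.exp_neg, Complex.exp_pi_mul_I]; norm_num
      rw [neg_add, add_mul, Complex.exp_add]
      simp only [neg_mul]
      rw [hp, Complex.exp_neg]
      ring
  rw [hcpow]
  have habs : a k * Complex.exp (-(Complex.arg (a k) * I)) = (‖a k‖ : ℂ) := by
    have h := Complex.norm_mul_exp_arg_mul_I (a k)
    have h2 : Complex.exp (Complex.arg (a k) * I) * Complex.exp (-(Complex.arg (a k) * I)) = 1 := by
      rw [← Complex.exp_add]; simp
    calc a k * Complex.exp (-(Complex.arg (a k) * I))
        = (‖a k‖ : ℂ) * (Complex.exp (Complex.arg (a k) * I) *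
            Complex.exp (-(Complex.arg (a k) * I))) := by rw [← mul_assoc, h]
      _ = (‖a k‖ : ℂ) := by rw [h2, mul_one]
  have : a k * ((((((k:ℝ)+1) ^ (-σ) : ℝ)) : ℂ) * (-Complex.exp (-(Complex.arg (a k) * I))))
      = -((‖a k‖:ℝ) * (((k:ℝ)+1) ^ (-σ)) : ℝ) := by
    push_cast
    rw [show a k * ((((k:ℝ)+1) ^ (-σ) : ℝ) * -Complex.exp (-(Complex.arg (a k) * I)))
      = -((a k * Complex.exp (-(Complex.arg (a k) * I))) * (((k:ℝ)+1) ^ (-σ) : ℝ)) by ring, habs]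
  rw [this]
  simp only [Complex.add_re, Complex.neg_re, Complex.ofReal_re]
  ring

lemma ex_sigma {A q x y : ℝ} (hx : 0 < x) (hy : x < y) (hq : 0 < q) :
    ∃ σ : ℝ, 4 ≤ σ ∧ A * y ^ ((4:ℝ) - σ) < q * x ^ (-σ) := by
  have hy0 : (0:ℝ) < y := lt_trans hx hy
  set r : ℝ := x / y with hrdef
  have hr0 : 0 < r := div_pos hx hy0
  have hr1 : r < 1 := (div_lt_one hy0).mpr hy
  have h := tendsto_rpow_atTop_of_base_lt_one r (by linarith) hr1
  have h2 : Tendsto (fun σ : ℝ => (A * y ^ (4:ℝ)) * r ^ σ) atTop (𝓝 0) := by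
    have := h.const_mul (A * y ^ (4:ℝ))
    rwa [mul_zero] at this
  have h3 : ∀ᶠ σ : ℝ in atTop, (A * y ^ (4:ℝ)) * r ^ σ < q :=
    h2.eventually_lt_const hq
  obtain ⟨σ, hσ4, hσ⟩ := ((eventually_ge_atTop (4:ℝ)).and h3).exists
  refine ⟨σ, hσ4, ?_⟩
  have hxσ : (0:ℝ) < x ^ σ := Real.rpow_pos_of_pos hx σ
  have hyσ : (y:ℝ) ^ σ ≠ 0 := (Real.rpow_pos_of_pos hy0 σ).ne'
  rw [← mul_lt_mul_iff_left₀ hxσ]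
  have e1 : q * x ^ (-σ) * x ^ σ = q := by
    rw [mul_assoc, ← Real.rpow_add hx]
    simp
  have e2 : A * y ^ ((4:ℝ) - σ) * x ^ σ = A * y ^ (4:ℝ) * r ^ σ := by
    rw [hrdef, Real.div_rpow hx.le hy0.le, Real.rpow_sub hy0]
    field_simp
  rw [e1, e2]
  exact hσ

end GH42

open Complex Topology GH42

/-- Gordon–Hedenmalm, Proposition 4.2: a nonconstant Dirichlet series mapping `ℂ₊`
into `ℂ₊` maps each `ℂ_ε` into some `ℂ_θ` with `θ > 0`. -/
theorem nonconstant_dirichlet_maps_strictly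
    (c : ℕ → ℂ) (φ : ℂ → ℂ)
    (hφ : ∀ ε > (0:ℝ), TendstoUniformlyOn
      (fun N s => ∑ n ∈ Finset.range N, c n * ((n:ℂ)+1) ^ (-s)) φ atTop
      {s : ℂ | ε < s.re})
    (hnc : ∃ n : ℕ, 1 ≤ n ∧ c n ≠ 0)
    (hpos : ∀ s : ℂ, 0 < s.re → 0 < (φ s).re) :
    ∀ ε > (0:ℝ), ∃ θ > (0:ℝ), ∀ s : ℂ, ε < s.re → θ ≤ (φ s).re := by
  have hφ' : ∀ ε > (0:ℝ), TendstoUniformlyOn (fun N => P c N) φ atTop {s : ℂ | ε < s.re} := hφ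
  clear hφ
  -- reduce to small ε
  suffices H : ∀ ε > (0:ℝ), ε ≤ 1 → ∃ θ > (0:ℝ), ∀ s : ℂ, ε < s.re → θ ≤ (φ s).re by
    intro ε hε
    obtain ⟨θ, hθ, hθ2⟩ := H (min ε 1) (lt_min hε one_pos) (min_le_right _ _)
    exact ⟨θ, hθ, fun s hs => hθ2 s (lt_of_le_of_lt (min_le_left _ _) hs)⟩
  intro ε hε hε1
  by_contra hcon
  push_neg at hcon
  -- pointwise convergence
  have hconv : ∀ s : ℂ, 0 < s.re → Tendsto (fun N => P c N s) atTop (𝓝 (φ s)) := by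
    intro s hs
    exact (hφ' (s.re/2) (by linarith)).tendsto_at (by simp only [Set.mem_setOf_eq]; linarith)
  -- coefficient bound
  obtain ⟨B, hB⟩ : ∃ B : ℝ, ∀ n, ‖c n‖ ≤ B * ((n:ℝ)+1) ^ (2:ℝ) := by
    have h2 : Tendsto (fun N => P c N 2) atTop (𝓝 (φ 2)) := hconv 2 (by norm_num)
    have hterm : Tendsto (fun N => c N * ((N:ℂ)+1) ^ (-(2:ℂ))) atTop (𝓝 0) := by
      have h3 : Tendsto (fun N => P c (N+1) 2 - P c N 2) atTop (𝓝 (φ 2 - φ 2)) :=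
        (h2.comp (tendsto_add_atTop_nat 1)).sub h2
      rw [sub_self] at h3
      have h4 : (fun N => P c (N+1) 2 - P c N 2) = fun N => c N * ((N:ℂ)+1) ^ (-(2:ℂ)) := by
        funext N
        unfold P
        rw [Finset.sum_range_succ]
        ring
      rwa [h4] at h3
    have hbdd : BddAbove (Set.range fun N => ‖c N * ((N:ℂ)+1) ^ (-(2:ℂ))‖) :=
      hterm.norm.bddAbove_range
    obtain ⟨B, hBmem⟩ := hbdd
    refine ⟨B, fun n => ?_⟩
    have h5 : ‖c n * ((n:ℂ)+1) ^ (-(2:ℂ))‖ ≤ B := hBmem ⟨n, rfl⟩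
    rw [norm_mul, norm_cpow_neg] at h5
    have h6 : (0:ℝ) < ((n:ℝ)+1) ^ (2:ℝ) := by positivity
    have h7 : ((n:ℝ)+1) ^ (-(2:ℂ).re) * ((n:ℝ)+1) ^ (2:ℝ) = 1 := by
      rw [← Real.rpow_add (by positivity)]
      norm_num
    calc ‖c n‖ = ‖c n‖ * (((n:ℝ)+1) ^ (-(2:ℂ).re) * ((n:ℝ)+1) ^ (2:ℝ)) := by rw [h7, mul_one]
    _ = (‖c n‖ * ((n:ℝ)+1) ^ (-(2:ℂ).re)) * ((n:ℝ)+1) ^ (2:ℝ) := by ring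
    _ ≤ B * ((n:ℝ)+1) ^ (2:ℝ) := mul_le_mul_of_nonneg_right h5 h6.le
  have hB0 : 0 ≤ B := by
    have h := (norm_nonneg (c 0)).trans (hB 0)
    simpa using h
  -- least nonzero index
  set k := Nat.find hnc with hkdef
  obtain ⟨hk1, hck⟩ : 1 ≤ k ∧ c k ≠ 0 := Nat.find_spec hnc
  have hmid : ∀ n, 1 ≤ n → n < k → c n = 0 := by
    intro n h1 hlt
    by_contra hne
    exact Nat.find_min hnc hlt ⟨h1, hne⟩
  -- K1 : approximation by constant coefficient
  have hK1 : ∀ s : ℂ, (4:ℝ) ≤ s.re → ‖φ s - c 0‖ ≤ 2*B*(2:ℝ) ^ ((4:ℝ) - s.re) := by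
    intro s hs
    have h := tail_lim hB hs (hconv s (by linarith)) (le_refl 1)
    have hP1 : P c 1 s = c 0 := by
      unfold P
      rw [Finset.sum_range_one]
      norm_num [Complex.one_cpow]
    rw [hP1] at h
    convert h using 3
    norm_num
  -- Step C : (c 0).re > 0
  have hc0pos : 0 < (c 0).re := by
    obtain ⟨σc, hσc4, hσc⟩ := ex_sigma (A := 2*B) (q := ‖c k‖/2)
      (x := (k:ℝ)+1) (y := (k:ℝ)+2) (by positivity) (by linarith)
      (by simp [norm_pos_iff, hck])
    obtain ⟨t, ht⟩ := exists_neg_dir (a := c) hk1 hmid σc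
    set s : ℂ := (σc:ℂ) + (t:ℂ)*I with hsdef
    have hsre : s.re = σc := re_tr _ _
    have htail : ‖φ s - P c (k+1) s‖ ≤ 2*B*(((k:ℝ)+2) ^ ((4:ℝ) - σc)) := by
      have h := tail_lim hB (by rw [hsre]; exact hσc4) (hconv s (by rw [hsre]; linarith))
        (Nat.le_add_left 1 k)
      rw [hsre] at h
      convert h using 3
      push_cast
      ring
    have hφre : (φ s).re ≤ (P c (k+1) s).re + ‖φ s - P c (k+1) s‖ := by
      have h1 : (φ s - P c (k+1) s).re ≤ ‖φ s - P c (k+1) s‖ :=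
        Complex.re_le_norm _
      simp only [Complex.sub_re] at h1
      linarith
    have hpos' : 0 < (φ s).re := hpos s (by rw [hsre]; linarith)
    rw [ht] at hφre
    have hfin : 0 < (c 0).re - ‖c k‖ * (((k:ℝ)+1) ^ (-σc)) + 2*B*(((k:ℝ)+2) ^ ((4:ℝ) - σc)) := by
      linarith
    have hp : 0 < ‖c k‖/2 * (((k:ℝ)+1) ^ (-σc)) :=
      mul_pos (div_pos (norm_pos_iff.mpr hck) two_pos) (Real.rpow_pos_of_pos (by positivity) _)
    linarith
  -- σb : large abscissa where Re φ ≥ (c 0).re/2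
  obtain ⟨σb, hσb4, hσb⟩ := ex_sigma (A := 2*B) (q := (c 0).re/2) (x := (1:ℝ)) (y := (2:ℝ))
    one_pos one_lt_two (by linarith)
  have hσb' : 2*B*(2:ℝ) ^ ((4:ℝ) - σb) < (c 0).re/2 := by
    have : ((1:ℝ)) ^ (-σb) = 1 := Real.one_rpow _
    rw [this, mul_one] at hσb
    exact hσb
  have hbig : ∀ s : ℂ, σb ≤ s.re → (c 0).re/2 ≤ (φ s).re := by
    intro s hs
    have h1 : ‖φ s - c 0‖ ≤ 2*B*(2:ℝ) ^ ((4:ℝ) - s.re) := hK1 s (by linarith)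
    have h2 : (2:ℝ) ^ ((4:ℝ) - s.re) ≤ (2:ℝ) ^ ((4:ℝ) - σb) :=
      Real.rpow_le_rpow_of_exponent_le one_le_two (by linarith)
    have h3 : (c 0).re - (φ s).re ≤ ‖φ s - c 0‖ := by
      have := Complex.re_le_norm (c 0 - φ s)
      have he : ‖φ s - c 0‖ = ‖c 0 - φ s‖ := by
        rw [norm_sub_rev]
      rw [he]
      simp only [Complex.sub_re] at this
      linarith
    nlinarith [mul_le_mul_of_nonneg_left h2 (by linarith : (0:ℝ) ≤ 2*B)]
  -- minimizing sequence
  have hseq : ∀ j : ℕ, ∃ s : ℂ, ε < s.re ∧ (φ s).re < min (1/((j:ℝ)+1)) ((c 0).re/4) := by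
    intro j
    exact hcon _ (lt_min (by positivity) (by linarith))
  choose sj hsj1 hsj2 using hseq
  have hφre0 : Tendsto (fun j => (φ (sj j)).re) atTop (𝓝 0) := by
    apply tendsto_of_tendsto_of_tendsto_of_le_of_le (g := fun _ : ℕ => (0:ℝ))
      (h := fun j : ℕ => 1/((j:ℝ)+1)) tendsto_const_nhds
      tendsto_one_div_add_atTop_nhds_zero_nat
    · intro j; exact (hpos _ (lt_trans hε (hsj1 j))).le
    · intro j; exact le_of_lt (lt_of_lt_of_le (hsj2 j) (min_le_left _ _))
  have hsjre : ∀ j, (sj j).re ∈ Set.Icc ε σb := by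
    intro j
    refine ⟨(hsj1 j).le, ?_⟩
    by_contra hgt
    push_neg at hgt
    have h1 := hbig (sj j) hgt.le
    have h2 := lt_of_lt_of_le (hsj2 j) (min_le_right _ _)
    linarith
  -- unimodular twists along the sequence
  set t : ℕ → ℝ := fun j => (sj j).im with htdef
  set u : ℕ → ℕ → ℂ := fun j n => ((n:ℂ)+1) ^ (-((t j : ℂ) * I)) with hudef
  have hunorm : ∀ j n, ‖u j n‖ = 1 := by
    intro j n
    rw [hudef]
    simp only
    rw [norm_cpow_neg]
    simp
  set p : ℕ → ℝ × (ℕ → ℂ) := fun j => ((sj j).re, u j) with hpdef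
  have hK : IsCompact ((Set.Icc ε σb) ×ˢ
      (Set.pi Set.univ fun _ : ℕ => Metric.closedBall (0:ℂ) 1)) :=
    (isCompact_Icc).prod (isCompact_univ_pi fun _ => isCompact_closedBall _ _)
  have hpmem : ∀ j, p j ∈ (Set.Icc ε σb) ×ˢ
      (Set.pi Set.univ fun _ : ℕ => Metric.closedBall (0:ℂ) 1) := by
    intro j
    refine ⟨hsjre j, ?_⟩
    intro n _
    simp only [Metric.mem_closedBall, dist_zero_right]
    rw [hunorm j n]
  obtain ⟨⟨σs, ul⟩, hqmem, ρ, hρmono, hρtend⟩ := hK.tendsto_subseq hpmem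
  have hσtend : Tendsto (fun j => (sj (ρ j)).re) atTop (𝓝 σs) :=
    (continuous_fst.tendsto _).comp hρtend
  have hutend : ∀ n, Tendsto (fun j => u (ρ j) n) atTop (𝓝 (ul n)) := by
    intro n
    have h := (continuous_snd.tendsto _).comp hρtend
    exact (tendsto_pi_nhds.mp h) n
  have hσmem : σs ∈ Set.Icc ε σb := (Set.mem_prod.mp hqmem).1
  have hulnorm : ∀ n, ‖ul n‖ = 1 := by
    intro n
    have h1 : Tendsto (fun j => ‖u (ρ j) n‖) atTop (𝓝 ‖ul n‖) := (hutend n).norm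
    have h2 : Tendsto (fun j => ‖u (ρ j) n‖) atTop (𝓝 1) := by
      have he : (fun j => ‖u (ρ j) n‖) = fun _ => (1:ℝ) := funext fun j => hunorm (ρ j) n
      rw [he]
      exact tendsto_const_nhds
    exact tendsto_nhds_unique h1 h2
  have hul0 : ul 0 = 1 := by
    have h1 := hutend 0
    have h2 : (fun j => u (ρ j) 0) = fun _ => (1:ℂ) := by
      funext j
      rw [hudef]
      simp only
      norm_num [Complex.one_cpow]
    rw [h2] at h1
    exact tendsto_nhds_unique h1 tendsto_const_nhds
  set a : ℕ → ℂ := fun n => c n * ul n with hadef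
  have hBa : ∀ n, ‖a n‖ ≤ B * ((n:ℝ)+1) ^ (2:ℝ) := by
    intro n
    rw [hadef]
    simp only
    rw [norm_mul, hulnorm, mul_one]
    exact hB n
  set U : Set ℂ := {s : ℂ | ε/2 < s.re} with hUdef
  have hUmemtr : ∀ (x : ℂ) (tt : ℝ), x ∈ U → x + (tt:ℂ)*I ∈ U := by
    intro x tt hx
    simpa only [hUdef, Set.mem_setOf_eq, re_tr] using hx
  -- translated partial sums converge coefficientwise
  have hPtend : ∀ (N : ℕ) (x : ℂ),
      Tendsto (fun j => P c N (x + ((t (ρ j) : ℝ):ℂ)*I)) atTop (𝓝 (P a N x)) := by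
    intro N x
    have hterm : ∀ n : ℕ, Tendsto (fun j => c n * ((n:ℂ)+1) ^ (-(x + ((t (ρ j) :ℝ):ℂ)*I)))
        atTop (𝓝 (a n * ((n:ℂ)+1) ^ (-x))) := by
      intro n
      have he : ∀ j, c n * ((n:ℂ)+1) ^ (-(x + ((t (ρ j):ℝ):ℂ)*I))
          = (c n * ((n:ℂ)+1) ^ (-x)) * u (ρ j) n := by
        intro j
        rw [cpow_split]
        simp only [hudef]
        ring
      simp only [he]
      have h := (hutend n).const_mul (c n * ((n:ℂ)+1) ^ (-x))
      have he2 : (c n * ((n:ℂ)+1) ^ (-x)) * ul n = a n * ((n:ℂ)+1) ^ (-x) := by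
        simp only [hadef]; ring
      rwa [he2] at h
    unfold P
    exact tendsto_finset_sum _ (fun n _ => hterm n)
  -- uniform Cauchy property for the twisted series
  have hUC : UniformCauchySeqOn (fun N => P a N) atTop U := by
    rw [Metric.uniformCauchySeqOn_iff]
    intro δ hδ
    have h := (Metric.tendstoUniformlyOn_iff.mp (hφ' (ε/2) (by linarith))) (δ/4) (by linarith)
    obtain ⟨N₀, hN₀⟩ := eventually_atTop.mp h
    refine ⟨N₀, fun m hm n hn x hx => ?_⟩
    have hlim : Tendsto (fun j => dist (P c m (x + ((t (ρ j):ℝ):ℂ)*I))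
        (P c n (x + ((t (ρ j):ℝ):ℂ)*I))) atTop (𝓝 (dist (P a m x) (P a n x))) :=
      (hPtend m x).dist (hPtend n x)
    have hbound : ∀ j, dist (P c m (x + ((t (ρ j):ℝ):ℂ)*I))
        (P c n (x + ((t (ρ j):ℝ):ℂ)*I)) ≤ δ/2 := by
      intro j
      have hx' := hUmemtr x (t (ρ j)) hx
      have h1 := hN₀ m hm _ hx'
      have h2 := hN₀ n hn _ hx'
      calc dist (P c m (x + ((t (ρ j):ℝ):ℂ)*I)) (P c n (x + ((t (ρ j):ℝ):ℂ)*I))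
          ≤ dist (P c m (x + ((t (ρ j):ℝ):ℂ)*I)) (φ (x + ((t (ρ j):ℝ):ℂ)*I))
            + dist (φ (x + ((t (ρ j):ℝ):ℂ)*I)) (P c n (x + ((t (ρ j):ℝ):ℂ)*I)) :=
          dist_triangle _ _ _
        _ ≤ δ/4 + δ/4 := by
            rw [dist_comm (P c m _)]
            exact add_le_add h1.le h2.le
        _ = δ/2 := by ring
    have := le_of_tendsto hlim (Eventually.of_forall hbound)
    linarith
  -- the limit function
  set ft : ℂ → ℂ := fun x => limUnder atTop (fun N => P a N x) with hftdef
  have hQtend : ∀ x ∈ U, Tendsto (fun N => P a N x) atTop (𝓝 (ft x)) := by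
    intro x hx
    have hc : CauchySeq (fun N => P a N x) := by
      rw [Metric.cauchySeq_iff]
      intro δ hδ
      obtain ⟨N₀, hN₀⟩ := Metric.uniformCauchySeqOn_iff.mp hUC δ hδ
      exact ⟨N₀, fun m hm n hn => hN₀ m hm n hn x hx⟩
    exact hc.tendsto_limUnder
  have hQuc : TendstoUniformlyOn (fun N => P a N) ft atTop U :=
    hUC.tendstoUniformlyOn_of_tendsto hQtend
  -- translated φ converges uniformly to ft
  have hTuc : TendstoUniformlyOn (fun j x => φ (x + ((t (ρ j):ℝ):ℂ)*I)) ft atTop U := by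
    rw [Metric.tendstoUniformlyOn_iff]
    intro δ hδ
    have h1 := (Metric.tendstoUniformlyOn_iff.mp (hφ' (ε/2) (by linarith))) (δ/4) (by linarith)
    have h2 := (Metric.tendstoUniformlyOn_iff.mp hQuc) (δ/4) (by linarith)
    obtain ⟨N, hN1, hN2⟩ := (h1.and h2).exists
    have hmid0 : Tendsto (fun j => ∑ n ∈ Finset.range N,
        ‖c n‖ * ((n:ℝ)+1) ^ (-(ε/2)) * ‖ul n - u (ρ j) n‖) atTop (𝓝 0) := by
      have hterm : ∀ n ∈ Finset.range N, Tendsto (fun j =>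
          ‖c n‖ * ((n:ℝ)+1) ^ (-(ε/2)) * ‖ul n - u (ρ j) n‖) atTop (𝓝 0) := by
        intro n _
        have hzero : Tendsto (fun j => ‖ul n - u (ρ j) n‖) atTop (𝓝 0) := by
          have h : Tendsto (fun j => ul n - u (ρ j) n) atTop (𝓝 (ul n - ul n)) :=
            Tendsto.sub tendsto_const_nhds (hutend n)
          rw [sub_self] at h
          simpa using h.norm
        have h := hzero.const_mul (‖c n‖ * ((n:ℝ)+1) ^ (-(ε/2)))
        rw [mul_zero] at h
        refine h.congr (fun j => by ring)
      have hsum := tendsto_finset_sum (Finset.range N) hterm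
      simpa using hsum
    have h3 : ∀ᶠ j in atTop, ∑ n ∈ Finset.range N,
        ‖c n‖ * ((n:ℝ)+1) ^ (-(ε/2)) * ‖ul n - u (ρ j) n‖ < δ/4 :=
      hmid0.eventually_lt_const (by linarith)
    filter_upwards [h3] with j hj
    intro x hx
    have hx' := hUmemtr x (t (ρ j)) hx
    have e1 : dist (ft x) (P a N x) < δ/4 := hN2 x hx
    have e3 : dist (φ (x + ((t (ρ j):ℝ):ℂ)*I)) (P c N (x + ((t (ρ j):ℝ):ℂ)*I)) < δ/4 :=
      hN1 _ hx'
    have e2 : dist (P a N x) (P c N (x + ((t (ρ j):ℝ):ℂ)*I)) ≤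
        ∑ n ∈ Finset.range N, ‖c n‖ * ((n:ℝ)+1) ^ (-(ε/2)) * ‖ul n - u (ρ j) n‖ := by
      rw [dist_eq_norm]
      have hdiffeq : P a N x - P c N (x + ((t (ρ j):ℝ):ℂ)*I)
          = ∑ n ∈ Finset.range N, (c n * ((n:ℂ)+1) ^ (-x)) * (ul n - u (ρ j) n) := by
        unfold P
        rw [← Finset.sum_sub_distrib]
        apply Finset.sum_congr rfl
        intro n _
        rw [cpow_split]
        simp only [hadef, hudef]
        ring
      rw [hdiffeq]
      calc ‖∑ n ∈ Finset.range N, (c n * ((n:ℂ)+1) ^ (-x)) * (ul n - u (ρ j) n)‖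
          ≤ ∑ n ∈ Finset.range N, ‖(c n * ((n:ℂ)+1) ^ (-x)) * (ul n - u (ρ j) n)‖ :=
            norm_sum_le _ _
        _ ≤ ∑ n ∈ Finset.range N, ‖c n‖ * ((n:ℝ)+1) ^ (-(ε/2)) * ‖ul n - u (ρ j) n‖ := by
            apply Finset.sum_le_sum
            intro n _
            rw [norm_mul, norm_mul, norm_cpow_neg]
            have hxre : ε/2 < x.re := hx
            have hle : ((n:ℝ)+1) ^ (-x.re) ≤ ((n:ℝ)+1) ^ (-(ε/2)) := by
              apply Real.rpow_le_rpow_of_exponent_le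
              · have : (0:ℝ) ≤ (n:ℝ) := Nat.cast_nonneg n
                linarith
              · linarith
            gcongr
    have htri := dist_triangle4 (ft x) (P a N x) (P c N (x + ((t (ρ j):ℝ):ℂ)*I))
        (φ (x + ((t (ρ j):ℝ):ℂ)*I))
    rw [dist_comm (P c N (x + ((t (ρ j):ℝ):ℂ)*I))] at htri
    linarith [htri, e1, e2, e3, hj]
  -- continuity and differentiability of ft
  have hUopen : IsOpen U := isOpen_lt continuous_const Complex.continuous_re
  have hPcont : ∀ N : ℕ, ContinuousOn (P a N) U := by
    intro N
    apply Continuous.continuousOn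
    unfold P
    apply continuous_finset_sum
    intro n _
    exact continuous_const.mul (continuous_neg.const_cpow (Or.inl (base_ne n)))
  have hftcont : ContinuousOn ft U :=
    hQuc.continuousOn (Frequently.of_forall hPcont)
  have hftdiff : DifferentiableOn ℂ ft U := by
    apply hQuc.tendstoLocallyUniformlyOn.differentiableOn ?_ hUopen
    apply Eventually.of_forall
    intro N
    apply Differentiable.differentiableOn
    unfold P
    apply Differentiable.fun_sum
    intro n _
    exact (differentiable_id.neg.const_cpow (Or.inl (base_ne n))).const_mul (a n)
  -- ft value at σs has real part 0
  have hσsU : ((σs:ℝ):ℂ) ∈ U := by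
    simp only [hUdef, Set.mem_setOf_eq, Complex.ofReal_re]
    linarith [hσmem.1]
  have hxjU : ∀ j, (((sj (ρ j)).re :ℝ):ℂ) ∈ U := by
    intro j
    simp only [hUdef, Set.mem_setOf_eq, Complex.ofReal_re]
    linarith [hsj1 (ρ j)]
  have hxj : Tendsto (fun j => (((sj (ρ j)).re:ℝ):ℂ)) atTop (𝓝 ((σs:ℝ):ℂ)) :=
    (Complex.continuous_ofReal.tendsto σs).comp hσtend
  have hft_at : Tendsto (fun j => ft (((sj (ρ j)).re:ℝ):ℂ)) atTop (𝓝 (ft ((σs:ℝ):ℂ))) := by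
    have hcw : ContinuousWithinAt ft U ((σs:ℝ):ℂ) := hftcont _ hσsU
    apply hcw.tendsto.comp
    apply tendsto_nhdsWithin_of_tendsto_nhds_of_eventually_within _ hxj
    exact Eventually.of_forall hxjU
  have hφ_to : Tendsto (fun j => φ (sj (ρ j))) atTop (𝓝 (ft ((σs:ℝ):ℂ))) := by
    rw [Metric.tendsto_nhds]
    intro δ hδ
    have hA := (Metric.tendstoUniformlyOn_iff.mp hTuc) (δ/2) (by linarith)
    have hB2 := (Metric.tendsto_nhds.mp hft_at) (δ/2) (by linarith)
    filter_upwards [hA, hB2] with j hj1 hj2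
    have hrw : sj (ρ j) = ((((sj (ρ j)).re:ℝ)):ℂ) + ((t (ρ j):ℝ):ℂ)*I := by
      simp only [htdef]
      exact (Complex.re_add_im _).symm
    have h5 := hj1 _ (hxjU j)
    have h6 : dist (φ (sj (ρ j))) (ft (((sj (ρ j)).re:ℝ):ℂ)) < δ/2 := by
      rw [show φ (sj (ρ j)) = φ (((((sj (ρ j)).re:ℝ)):ℂ) + ((t (ρ j):ℝ):ℂ)*I) from
        congrArg φ hrw, dist_comm]
      exact h5
    calc dist (φ (sj (ρ j))) (ft ((σs:ℝ):ℂ))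
        ≤ dist (φ (sj (ρ j))) (ft (((sj (ρ j)).re:ℝ):ℂ))
          + dist (ft (((sj (ρ j)).re:ℝ):ℂ)) (ft ((σs:ℝ):ℂ)) := dist_triangle _ _ _
      _ < δ/2 + δ/2 := add_lt_add h6 hj2
      _ = δ := by ring
  have hft0 : (ft ((σs:ℝ):ℂ)).re = 0 := by
    have h1 : Tendsto (fun j => (φ (sj (ρ j))).re) atTop (𝓝 ((ft ((σs:ℝ):ℂ)).re)) :=
      (Complex.continuous_re.tendsto _).comp hφ_to
    have h2 : Tendsto (fun j => (φ (sj (ρ j))).re) atTop (𝓝 0) :=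
      hφre0.comp hρmono.tendsto_atTop
    exact tendsto_nhds_unique h1 h2
  have hftnn : ∀ x ∈ U, 0 ≤ (ft x).re := by
    intro x hx
    have h1 : Tendsto (fun j => (φ (x + ((t (ρ j):ℝ):ℂ)*I)).re) atTop (𝓝 ((ft x).re)) :=
      (Complex.continuous_re.tendsto _).comp (hTuc.tendsto_at hx)
    apply ge_of_tendsto h1
    apply Eventually.of_forall
    intro j
    apply le_of_lt
    apply hpos
    rw [re_tr]
    have hxre : ε/2 < x.re := hx
    linarith
  -- maximum modulus principle applied to exp(-ft)
  set g : ℂ → ℂ := fun x => Complex.exp (-ft x) with hgdef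
  have hgdiff : DifferentiableOn ℂ g U := (hftdiff.neg).cexp
  have hgnorm : ∀ x, ‖g x‖ = Real.exp (-(ft x).re) := by
    intro x
    rw [hgdef]
    simp only
    rw [Complex.norm_exp]
    simp
  have hmax : IsMaxOn (norm ∘ g) U ((σs:ℝ):ℂ) := by
    intro x hx
    simp only [Set.mem_setOf_eq, Function.comp_apply]
    rw [hgnorm, hgnorm, hft0, neg_zero, Real.exp_zero]
    have h := hftnn x hx
    calc Real.exp (-(ft x).re) ≤ Real.exp 0 := Real.exp_le_exp.mpr (by linarith)
      _ = 1 := Real.exp_zero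
  have heq := Complex.eqOn_of_isPreconnected_of_isMaxOn_norm
    (convex_halfSpace_re_gt (ε/2)).isPreconnected hUopen hgdiff hσsU hmax
  have hftre0 : ∀ x ∈ U, (ft x).re = 0 := by
    intro x hx
    have h1 : g x = g ((σs:ℝ):ℂ) := heq hx
    have h2 : ‖g x‖ = ‖g ((σs:ℝ):ℂ)‖ := by rw [h1]
    rw [hgnorm, hgnorm, hft0, neg_zero, Real.exp_zero] at h2
    rw [← Real.exp_zero] at h2
    have h3 : -(ft x).re = 0 := Real.exp_eq_exp.mp h2
    linarith
  -- final contradiction at σb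
  have hσbU : ((σb:ℝ):ℂ) ∈ U := by
    simp only [hUdef, Set.mem_setOf_eq, Complex.ofReal_re]
    linarith
  have hconv_b : Tendsto (fun N => P a N ((σb:ℝ):ℂ)) atTop (𝓝 (ft ((σb:ℝ):ℂ))) :=
    hQtend _ hσbU
  have htl := tail_lim hBa (by simpa using hσb4 : (4:ℝ) ≤ ((σb:ℝ):ℂ).re) hconv_b (le_refl 1)
  have hP1 : P a 1 ((σb:ℝ):ℂ) = c 0 := by
    unfold P
    rw [Finset.sum_range_one]
    simp only [hadef]
    norm_num [Complex.one_cpow, hul0]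
  rw [hP1] at htl
  have htl' : ‖ft ((σb:ℝ):ℂ) - c 0‖ ≤ 2*B*(2:ℝ) ^ ((4:ℝ) - σb) := by
    have e : (((1:ℕ):ℝ)+1) = (2:ℝ) := by norm_num
    rw [e, Complex.ofReal_re] at htl
    exact htl
  have hre : (c 0).re ≤ ‖ft ((σb:ℝ):ℂ) - c 0‖ := by
    have h1 := Complex.re_le_norm (c 0 - ft ((σb:ℝ):ℂ))
    have h2 : (c 0 - ft ((σb:ℝ):ℂ)).re = (c 0).re := by
      rw [Complex.sub_re, hftre0 _ hσbU, sub_zero]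
    rw [h2] at h1
    have h3 : ‖ft ((σb:ℝ):ℂ) - c 0‖ = ‖c 0 - ft ((σb:ℝ):ℂ)‖ := by
      rw [norm_sub_rev]
    rw [h3]
    exact h1
  linarith
end

section
/- Let φ(s) = ∑_{n≥1} c_n n^{-s} be a Dirichlet series converging uniformly on ℂ_ε for every ε > 0, such that Re φ(s) > 1/2 for all s ∈ ℂ₊. Then Re c₁ > 1/2, where c₁ is the coefficient of 1^{-s} (the constant coefficient, equal to the limit of φ(s) as Re s → +∞). -/
open Filter Metric Set

private lemma key_id' (w a : ℂ) :
    ‖w - a‖^2 + 4*(w.re - 1/2)*(a.re - 1/2) = ‖w + (starRingEnd ℂ) a - 1‖^2 := by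
  simp only [Complex.sq_norm, Complex.normSq_apply, Complex.sub_re,
    Complex.add_re, Complex.conj_re, Complex.one_re, Complex.sub_im, Complex.add_im,
    Complex.conj_im, Complex.one_im]
  ring

private lemma schwarz_step' (φ : ℂ → ℂ)
    (hdiff : ∀ s : ℂ, 0 < s.re → DifferentiableAt ℂ φ s)
    (hpos : ∀ s : ℂ, 0 < s.re → 1/2 < (φ s).re)
    (x : ℝ) (hx : 6 ≤ x) :
    (φ 1).re - 1/2 ≤ 4*x*((φ x).re - 1/2) := by
  set a := φ x with ha
  set w := φ 1 with hw
  have hxpos : (0:ℝ) < x := by linarith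
  have hare : 1/2 < a.re := hpos x (by simpa using hxpos)
  have hwre : 1/2 < w.re := hpos 1 (by simp)
  set u := w.re - 1/2 with hu
  set δ := a.re - 1/2 with hδ
  have hu0 : 0 < u := by simp [hu]; linarith
  have hδ0 : 0 < δ := by simp [hδ]; linarith
  set G : ℂ → ℂ := fun z => (φ z - a) / (φ z + (starRingEnd ℂ) a - 1) with hG
  have hball : ∀ z : ℂ, z ∈ ball (x:ℂ) x → 0 < z.re := by
    intro z hz
    rw [mem_ball, Complex.dist_eq] at hz
    have := Complex.abs_re_le_norm (z - x)
    rw [Complex.sub_re, Complex.ofReal_re] at this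
    have h2 := abs_lt.1 (lt_of_le_of_lt this hz)
    linarith [h2.1]
  have hden : ∀ z : ℂ, 0 < z.re → 0 < (φ z + (starRingEnd ℂ) a - 1).re := by
    intro z hz
    have := hpos z hz
    simp only [Complex.sub_re, Complex.add_re, Complex.conj_re, Complex.one_re]
    linarith
  have hdne : ∀ z : ℂ, 0 < z.re → (φ z + (starRingEnd ℂ) a - 1) ≠ 0 := by
    intro z hz h0
    have := hden z hz
    rw [h0] at this; simp at this
  have hGd : DifferentiableOn ℂ G (ball (x:ℂ) x) := by
    intro z hz
    have hzre := hball z hz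
    exact (((hdiff z hzre).sub_const a).div
      (((hdiff z hzre).add_const _).sub_const 1) (hdne z hzre)).differentiableWithinAt
  have hGx : G (x:ℂ) = 0 := by
    simp [hG, ha]
  have hmaps : MapsTo G (ball (x:ℂ) x) (ball (G (x:ℂ)) 1) := by
    intro z hz
    have hzre := hball z hz
    have hzpos := hpos z hzre
    have hdr := hden z hzre
    have hdnorm : 0 < ‖φ z + (starRingEnd ℂ) a - 1‖ :=
      lt_of_lt_of_le hdr (Complex.re_le_norm _)
    have hid := key_id' (φ z) a
    have hlt : ‖φ z - a‖ < ‖φ z + (starRingEnd ℂ) a - 1‖ := by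
      refine lt_of_pow_lt_pow_left₀ 2 (norm_nonneg _) ?_
      nlinarith [mul_pos (show (0:ℝ) < (φ z).re - 1/2 by linarith) hδ0]
    rw [hGx, mem_ball, dist_zero_right, hG]
    rw [norm_div]
    exact (div_lt_one hdnorm).2 hlt
  have h1mem : (1:ℂ) ∈ ball (x:ℂ) x := by
    rw [mem_ball, Complex.dist_eq]
    have : (1:ℂ) - x = ((1 - x : ℝ) : ℂ) := by push_cast; ring
    rw [this, Complex.norm_real, Real.norm_eq_abs]
    rw [abs_of_nonpos (by linarith)]
    linarith
  have hSch := Complex.dist_le_div_mul_dist_of_mapsTo_ball hGd (hmaps.mono_right ball_subset_closedBall) h1mem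
  rw [hGx, dist_zero_right, Complex.dist_eq] at hSch
  have hd1 : (1:ℂ) - x = ((1 - x : ℝ) : ℂ) := by push_cast; ring
  rw [hd1, Complex.norm_real, Real.norm_eq_abs, abs_of_nonpos (by linarith)] at hSch
  set M := ‖w + (starRingEnd ℂ) a - 1‖ with hM
  have hMpos : 0 < M := lt_of_lt_of_le (hden 1 (by simp)) (Complex.re_le_norm _)
  have hG1 : ‖G 1‖ = ‖w - a‖ / M := by rw [hG]; simp [norm_div, hM, hw]
  rw [hG1] at hSch
  have hkey : x * ‖w - a‖ ≤ (x - 1) * M := by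
    rw [div_le_iff₀ hMpos] at hSch
    have he : 1 / x * -(1 - x) * M = (x-1) * M / x := by field_simp; ring
    rw [he, le_div_iff₀ hxpos] at hSch
    linarith
  have hMre : u + δ ≤ M := by
    have h3 := Complex.re_le_norm (w + (starRingEnd ℂ) a - 1)
    simp only [Complex.sub_re, Complex.add_re, Complex.conj_re, Complex.one_re] at h3
    rw [hM, hu, hδ]
    linarith
  have hid := key_id' w a
  rw [← hM, ← hu, ← hδ] at hid
  have hn2 : ‖w - a‖^2 = M^2 - 4*u*δ := by linarith
  have hsq : (x * ‖w - a‖)^2 ≤ ((x-1) * M)^2 :=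
    pow_le_pow_left₀ (by positivity) hkey 2
  rw [mul_pow, mul_pow, hn2] at hsq
  have h4 : M^2 ≤ 4 * u * δ * x := by
    nlinarith [mul_nonneg (show (0:ℝ) ≤ x - 1 by linarith) (sq_nonneg M), hxpos, sq_nonneg M]
  have hM2 : u^2 ≤ M^2 := by nlinarith [hMre, hu0, hδ0]
  nlinarith [hu0, h4, hM2]

set_option maxHeartbeats 1000000 in
/-- If a Dirichlet series `φ(s) = ∑_{n≥1} c_n n^{-s}` satisfies `Re φ > 1/2` on `ℂ₊`,
then its constant coefficient `c₁` satisfies `Re c₁ > 1/2`. -/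
theorem constant_coefficient_re_gt_half
    (c : ℕ → ℂ) (φ : ℂ → ℂ)
    (hφ : ∀ ε > (0:ℝ), TendstoUniformlyOn
      (fun N s => ∑ n ∈ Finset.range N, c n * ((n:ℂ)+1) ^ (-s)) φ atTop
      {s : ℂ | ε < s.re})
    (hpos : ∀ s : ℂ, 0 < s.re → 1/2 < (φ s).re) :
    1/2 < (c 0).re := by
  by_contra hcon
  push_neg at hcon
  -- differentiability
  have hdiff : ∀ s : ℂ, 0 < s.re → DifferentiableAt ℂ φ s := by
    intro s hs
    set ε := s.re / 2 with hε
    have hU : IsOpen {z : ℂ | ε < z.re} := isOpen_lt continuous_const Complex.continuous_re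
    have hd : DifferentiableOn ℂ φ {z : ℂ | ε < z.re} := by
      refine ((hφ ε (by positivity)).tendstoLocallyUniformlyOn).differentiableOn
        (Eventually.of_forall fun N => ?_) hU
      refine (Differentiable.fun_sum fun n _ => ?_).differentiableOn
      refine Differentiable.const_mul ?_ _
      exact (differentiable_neg).const_cpow (Or.inl (Nat.cast_add_one_ne_zero n))
    exact (hd.differentiableAt (hU.mem_nhds (by simp only [mem_setOf_eq, hε]; linarith)))
  -- coefficient bound
  obtain ⟨B, hB, hc⟩ : ∃ B : ℝ, 1 ≤ B ∧ ∀ n : ℕ, ‖c n‖ ≤ B * ((n:ℝ)+1)^(3:ℝ) := by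
    have h3 : (3:ℂ) ∈ {s : ℂ | (1:ℝ) < s.re} := by norm_num [Complex.ofReal_re]
    have h1 : Tendsto (fun N => ∑ n ∈ Finset.range N, c n * ((n:ℂ)+1) ^ (-(3:ℂ))) atTop
        (nhds (φ 3)) := (hφ 1 one_pos).tendsto_at h3
    have h2 : Tendsto (fun N => c N * ((N:ℂ)+1) ^ (-(3:ℂ))) atTop (nhds 0) := by
      have := (h1.comp (tendsto_add_atTop_nat 1)).sub h1
      rw [sub_self] at this
      refine this.congr fun N => ?_
      simp [Finset.sum_range_succ]
    have hnorm : ∀ n : ℕ, ‖c n * ((n:ℂ)+1) ^ (-(3:ℂ))‖ = ‖c n‖ * ((n:ℝ)+1) ^ (-3:ℝ) := by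
      intro n
      rw [norm_mul]
      congr 1
      have : ((n:ℂ)+1) = (((n:ℝ)+1 : ℝ) : ℂ) := by push_cast; ring
      rw [this, Complex.norm_cpow_eq_rpow_re_of_pos (by positivity)]
      norm_num
    have h2n : Tendsto (fun N => ‖c N * ((N:ℂ)+1) ^ (-(3:ℂ))‖) atTop (nhds 0) := by
      simpa using h2.norm
    obtain ⟨N0, hN0⟩ := eventually_atTop.1 (h2n.eventually_lt_const zero_lt_one)
    have hsnn : (0:ℝ) ≤ ∑ n ∈ Finset.range N0, ‖c n‖ := Finset.sum_nonneg fun m _ => norm_nonneg _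
    refine ⟨(∑ n ∈ Finset.range N0, ‖c n‖) + 1, by linarith, fun n => ?_⟩
    have hp : (0:ℝ) < ((n:ℝ)+1) ^ (3:ℝ) := by positivity
    rcases lt_or_ge n N0 with h | h
    · calc ‖c n‖ ≤ ∑ m ∈ Finset.range N0, ‖c m‖ :=
          Finset.single_le_sum (fun m _ => norm_nonneg (c m)) (Finset.mem_range.2 h)
      _ ≤ ((∑ n ∈ Finset.range N0, ‖c n‖) + 1) * 1 := by linarith
      _ ≤ _ := by
          refine mul_le_mul_of_nonneg_left ?_ (by positivity)
          exact Real.one_le_rpow (by linarith) (by norm_num)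
    · have := hN0 n h
      rw [hnorm] at this
      have hinv : ((n:ℝ)+1) ^ (-3:ℝ) = (((n:ℝ)+1) ^ (3:ℝ))⁻¹ := by
        rw [← Real.rpow_neg (by positivity)]
      rw [hinv] at this
      have h1' : ‖c n‖ < ((n:ℝ)+1) ^ (3:ℝ) := by
        have := (mul_inv_lt_iff₀ hp).1 this
        linarith
      calc ‖c n‖ ≤ ((n:ℝ)+1) ^ (3:ℝ) := h1'.le
      _ ≤ _ := le_mul_of_one_le_left hp.le (by linarith)
  -- tail estimate
  set K := ∑' n : ℕ, ((n:ℝ)+2)^(-3:ℝ) with hKdef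
  have hK : Summable (fun n : ℕ => ((n:ℝ)+2)^(-3:ℝ)) := by
    have h0 : Summable (fun n : ℕ => ((n:ℝ))^(-3:ℝ)) := Real.summable_nat_rpow.2 (by norm_num)
    have := (summable_nat_add_iff 2).2 h0
    refine this.congr fun n => ?_
    push_cast; ring_nf
  have hKnn : 0 ≤ K := tsum_nonneg fun n => Real.rpow_nonneg (by positivity) _
  have htail : ∀ x : ℝ, 6 ≤ x →
      ‖φ x - c 0‖ ≤ (B * K * 2^(6:ℝ)) * (2:ℝ)^(-x) := by
    intro x hx
    set f : ℕ → ℂ := fun n => c n * ((n:ℂ)+1) ^ (-(x:ℂ)) with hfdef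
    have hnorm : ∀ n : ℕ, ‖f n‖ = ‖c n‖ * ((n:ℝ)+1) ^ (-x) := by
      intro n
      rw [hfdef, norm_mul]
      congr 1
      have h1 : ((n:ℂ)+1) = (((n:ℝ)+1 : ℝ) : ℂ) := by push_cast; ring
      rw [h1, Complex.norm_cpow_eq_rpow_re_of_pos (by positivity)]
      norm_num
    have hbound : ∀ n : ℕ, ‖f n‖ ≤ B * ((n:ℝ)+1)^(3-x) := by
      intro n
      rw [hnorm, sub_eq_add_neg, Real.rpow_add (by positivity : (0:ℝ) < (n:ℝ)+1), ← mul_assoc]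
      exact mul_le_mul_of_nonneg_right (hc n) (Real.rpow_nonneg (by positivity) _)
    have hsum_g : Summable (fun n : ℕ => B * ((n:ℝ)+1)^(3-x)) := by
      refine Summable.mul_left B ?_
      have h0 : Summable (fun n : ℕ => ((n:ℝ))^(3-x)) := Real.summable_nat_rpow.2 (by linarith)
      have := (summable_nat_add_iff 1).2 h0
      refine this.congr fun n => ?_
      push_cast; ring_nf
    have hfnorm : Summable (fun n : ℕ => ‖f n‖) :=
      Summable.of_nonneg_of_le (fun n => norm_nonneg _) hbound hsum_g
    have hf : Summable f := hfnorm.of_norm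
    have hφx : φ x = ∑' n, f n := by
      refine tendsto_nhds_unique ?_ hf.hasSum.tendsto_sum_nat
      exact (hφ 1 one_pos).tendsto_at (by simp only [mem_setOf_eq, Complex.ofReal_re]; linarith)
    have hf0 : f 0 = c 0 := by
      simp [hfdef, Complex.one_cpow]
    have hsplit : φ x - c 0 = ∑' n, f (n+1) := by
      rw [hφx, hf.tsum_eq_zero_add, hf0]; ring
    have hshift : Summable (fun n : ℕ => ‖f (n+1)‖) := (summable_nat_add_iff 1).2 hfnorm
    have hbound2 : ∀ n : ℕ, ‖f (n+1)‖ ≤ (B * 2^(6-x)) * ((n:ℝ)+2)^(-3:ℝ) := by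
      intro n
      have h1 := hbound (n+1)
      have hcast : ((n+1:ℕ):ℝ) + 1 = (n:ℝ) + 2 := by push_cast; ring
      rw [hcast] at h1
      have h2 : ((n:ℝ)+2)^(3-x) = ((n:ℝ)+2)^(-3:ℝ) * ((n:ℝ)+2)^(6-x) := by
        rw [← Real.rpow_add (by positivity)]; ring_nf
      have h3 : ((n:ℝ)+2)^(6-x) ≤ (2:ℝ)^(6-x) :=
        Real.rpow_le_rpow_of_nonpos two_pos (by linarith) (by linarith)
      calc ‖f (n+1)‖ ≤ B * ((n:ℝ)+2)^(3-x) := h1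
        _ = B * (((n:ℝ)+2)^(-3:ℝ) * ((n:ℝ)+2)^(6-x)) := by rw [h2]
        _ ≤ B * (((n:ℝ)+2)^(-3:ℝ) * (2:ℝ)^(6-x)) := by
            refine mul_le_mul_of_nonneg_left ?_ (by linarith)
            exact mul_le_mul_of_nonneg_left h3 (Real.rpow_nonneg (by positivity) _)
        _ = (B * 2^(6-x)) * ((n:ℝ)+2)^(-3:ℝ) := by ring
    calc ‖φ x - c 0‖ = ‖∑' n, f (n+1)‖ := by rw [hsplit]
      _ ≤ ∑' n, ‖f (n+1)‖ := norm_tsum_le_tsum_norm hshift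
      _ ≤ ∑' n : ℕ, (B * 2^(6-x)) * ((n:ℝ)+2)^(-3:ℝ) :=
          Summable.tsum_le_tsum hbound2 hshift (hK.mul_left _)
      _ = (B * 2^(6-x)) * K := by rw [tsum_mul_left]
      _ = (B * K * 2^(6:ℝ)) * (2:ℝ)^(-x) := by
          rw [show (6:ℝ) - x = 6 + (-x) by ring, Real.rpow_add two_pos]; ring
  -- combine
  set C := B * K * 2^(6:ℝ) with hCdef
  have hC0 : 0 ≤ C := by positivity
  set u := (φ 1).re - 1/2 with hu
  have hu0 : 0 < u := by
    have := hpos 1 (by simp)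
    simp only [hu]; linarith
  have main : ∀ n : ℕ, 3 ≤ n → u ≤ 8*C/n := by
    intro n hn
    have hn0 : (0:ℝ) < n := by exact_mod_cast Nat.lt_of_lt_of_le (by norm_num) hn
    set x : ℝ := 2*n with hxdef
    have hx6 : 6 ≤ x := by
      rw [hxdef]
      have : (3:ℝ) ≤ n := by exact_mod_cast hn
      linarith
    have h1 := schwarz_step' φ hdiff hpos x hx6
    have h2 : (φ x).re - 1/2 ≤ C * (2:ℝ)^(-x) := by
      have hre : (φ x).re - 1/2 ≤ ‖φ x - c 0‖ := by
        calc (φ x).re - 1/2 ≤ (φ x).re - (c 0).re := by linarith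
        _ = (φ x - c 0).re := (Complex.sub_re _ _).symm
        _ ≤ ‖φ x - c 0‖ := Complex.re_le_norm _
        _ = ‖φ x - c 0‖ := rfl
      exact hre.trans (htail x hx6)
    have h3 : (2:ℝ)^(-x) = ((4:ℝ)^n)⁻¹ := by
      rw [Real.rpow_neg (by norm_num)]
      congr 1
      rw [hxdef, show (2:ℝ)*n = ((2*n : ℕ) : ℝ) by push_cast; ring, Real.rpow_natCast,
        pow_mul]
      norm_num
    have hpow : (n:ℝ)*(n:ℝ) ≤ (4:ℝ)^n := by
      have hnat : n*n ≤ 4^n := by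
        calc n*n ≤ 2^n * 2^n := Nat.mul_le_mul (Nat.lt_two_pow_self (n := n)).le (Nat.lt_two_pow_self (n := n)).le
        _ = 4^n := by rw [← pow_add, ← two_mul, pow_mul]; norm_num
      exact_mod_cast hnat
    have h4pos : (0:ℝ) < (4:ℝ)^n := by positivity
    have hx0 : (0:ℝ) < x := by linarith
    -- u ≤ 4*x*(C*2^(-x)) = 8*C*n/4^n ≤ 8*C/n
    have h5 : u ≤ 4*x*(C * (2:ℝ)^(-x)) := by
      calc u ≤ 4*x*((φ x).re - 1/2) := h1
      _ ≤ 4*x*(C * (2:ℝ)^(-x)) := mul_le_mul_of_nonneg_left h2 (by linarith)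
    rw [h3, hxdef] at h5
    have h6 : 4*(2*(n:ℝ))*(C * ((4:ℝ)^n)⁻¹) = 8*C*((n:ℝ)/(4:ℝ)^n) := by
      field_simp; ring
    rw [h6] at h5
    have h7 : (n:ℝ)/(4:ℝ)^n ≤ 1/(n:ℝ) := by
      rw [div_le_div_iff₀ h4pos hn0]
      nlinarith [hpow]
    calc u ≤ 8*C*((n:ℝ)/(4:ℝ)^n) := h5
    _ ≤ 8*C*(1/(n:ℝ)) := mul_le_mul_of_nonneg_left h7 (by linarith)
    _ = 8*C/(n:ℝ) := by ring
  have htend : Tendsto (fun n : ℕ => 8*C/(n:ℝ)) atTop (nhds 0) :=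
    tendsto_const_div_atTop_nhds_zero_nat (8*C)
  have : u ≤ 0 := ge_of_tendsto htend (eventually_atTop.2 ⟨3, main⟩)
  linarith
end
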